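/- arXiv:2109.03677 — 10 statements merged into one kernel-verified Lean document; each statement's English description precedes it below -/
import Mathlib

section
/- Let (α, τ, η) : ℝ → ℝ³ with τ(s) = b constant, solving α' = τ, τ' = (c + aτ)α - η, η' = -(c + aτ)τ (a > 0, c ∈ ℝ), and suppose 2α(s)η(s) + τ(s)² = γ with γ ∈ {-1, 0, 1}. Then b ∈ {-1, 0, 1}. Moreover, if b = 0 then α is a constant α₀ and η = cα₀ (with γ determined by the sign of c: γ = -1 iff c < 0, γ = 0 iff c = 0, γ = 1 iff c > 0, assuming α₀ ≠ 0 when needed); and if b² = 1 then c + ab = 0 (so a² = c²), η ≡ 0, α(s) = bs + α₀, and γ = 1. -/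
noncomputable section

/-- Classification of solutions with constant `τ ≡ b` of the system
`α' = τ`, `τ' = (c+aτ)α - η`, `η' = -(c+aτ)τ` subject to `2αη + τ² = γ ∈ {-1,0,1}`. -/
theorem stmt_5 (a c b γ : ℝ) (ha : 0 < a) (α τ η : ℝ → ℝ)
    (hb : ∀ s : ℝ, τ s = b)
    (hα : ∀ s : ℝ, HasDerivAt α (τ s) s)
    (hτ : ∀ s : ℝ, HasDerivAt τ ((c + a * τ s) * α s - η s) s)
    (hη : ∀ s : ℝ, HasDerivAt η (-((c + a * τ s) * τ s)) s)
    (hγ : γ = -1 ∨ γ = 0 ∨ γ = 1)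
    (hcon : ∀ s : ℝ, 2 * α s * η s + (τ s) ^ 2 = γ) :
    (b = -1 ∨ b = 0 ∨ b = 1) ∧
    (b = 0 → ∃ α₀ : ℝ, (∀ s : ℝ, α s = α₀) ∧ (∀ s : ℝ, η s = c * α₀) ∧
      (α₀ ≠ 0 → ((γ = -1 ↔ c < 0) ∧ (γ = 0 ↔ c = 0) ∧ (γ = 1 ↔ 0 < c)))) ∧
    (b ^ 2 = 1 → (c + a * b = 0 ∧ a ^ 2 = c ^ 2 ∧ (∀ s : ℝ, η s = 0) ∧
      (∃ α₀ : ℝ, ∀ s : ℝ, α s = b * s + α₀) ∧ γ = 1)) := by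
  -- τ is the constant function b, so its derivative is 0
  have hτconst : τ = fun _ : ℝ => b := funext hb
  have hτ0 : ∀ s : ℝ, HasDerivAt τ 0 s := by
    intro s; rw [hτconst]; exact hasDerivAt_const s b
  -- key relation: η = (c + a b) α
  have hkey : ∀ s : ℝ, η s = (c + a * b) * α s := by
    intro s
    have h := (hτ s).unique (hτ0 s)
    rw [hb s] at h
    linarith
  -- α is linear: α s = b s + α 0
  have halin : ∀ s : ℝ, α s = b * s + α 0 := by
    have hd : ∀ s : ℝ, HasDerivAt (fun x => α x - b * x) 0 s := by
      intro s
      have h1 : HasDerivAt (fun x : ℝ => b * x) (b * 1) s :=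
        (hasDerivAt_id s).const_mul b
      have h2 := (hα s).sub h1
      rw [hb s] at h2
      have h3 : b - b * 1 = (0:ℝ) := by ring
      rw [h3] at h2; exact h2
    have hdiff : Differentiable ℝ (fun x => α x - b * x) :=
      fun s => (hd s).differentiableAt
    intro s
    have := is_const_of_deriv_eq_zero hdiff (fun x => (hd x).deriv) s 0
    simp at this
    linarith
  -- if b ≠ 0 then c + a b = 0
  have hk0 : b ≠ 0 → c + a * b = 0 := by
    intro hbne
    by_contra hk
    set k := c + a * b with hkdef
    set A := α 0 with hA
    set s₁ : ℝ := (|A| + 1 - A) / b with hs₁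
    have hX : α s₁ = |A| + 1 := by
      rw [halin s₁, hs₁]
      field_simp
      ring
    have h1 := hcon 0
    have h2 := hcon s₁
    rw [hb, hkey 0] at h1
    rw [hb, hkey s₁, hX] at h2
    have habs : |A| ^ 2 = A ^ 2 := sq_abs A
    have hlt : A ^ 2 < (|A| + 1) ^ 2 := by
      nlinarith [abs_nonneg A, sq_abs A]
    have hz : k * ((|A| + 1) ^ 2 - A ^ 2) = 0 := by
      have : α 0 = A := rfl
      nlinarith [h1, h2]
    rcases mul_eq_zero.mp hz with h | h
    · exact hk h
    · nlinarith
  refine ⟨?_, ?_, ?_⟩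
  · -- b ∈ {-1, 0, 1}
    by_cases hbz : b = 0
    · exact Or.inr (Or.inl hbz)
    · have hk := hk0 hbz
      have hη0 : η 0 = 0 := by rw [hkey 0, hk]; ring
      have hg := hcon 0
      rw [hb, hη0] at hg
      have : γ = b ^ 2 := by linarith
      have hb2 : b ^ 2 = 1 := by
        rcases hγ with h | h | h
        · nlinarith [sq_nonneg b]
        · exfalso; apply hbz
          have hsq : b ^ 2 = 0 := by linarith
          exact pow_eq_zero_iff two_ne_zero |>.mp hsq
        · linarith
      have : (b - 1) * (b + 1) = 0 := by nlinarith
      rcases mul_eq_zero.mp this with h | h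
      · exact Or.inr (Or.inr (by linarith))
      · exact Or.inl (by linarith)
  · -- b = 0 case
    intro hb0
    refine ⟨α 0, ?_, ?_, ?_⟩
    · intro s; rw [halin s, hb0]; ring
    · intro s; have := hkey s; rw [halin s, hb0] at this
      rw [this]; ring
    · intro hA0
      have hg := hcon 0
      rw [hb, hkey 0, hb0] at hg
      have hg' : γ = 2 * c * (α 0) ^ 2 := by ring_nf; ring_nf at hg; linarith
      have hA2 : 0 < (α 0) ^ 2 := by positivity
      refine ⟨⟨fun h => ?_, fun h => ?_⟩, ⟨fun h => ?_, fun h => ?_⟩,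
        ⟨fun h => ?_, fun h => ?_⟩⟩
      · nlinarith
      · rcases hγ with h' | h' | h' <;> nlinarith
      · nlinarith
      · rw [hg', h]; ring
      · nlinarith
      · rcases hγ with h' | h' | h' <;> nlinarith
  · -- b² = 1 case
    intro hb2
    have hbne : b ≠ 0 := by intro h; rw [h] at hb2; norm_num at hb2
    have hk := hk0 hbne
    have hη0 : ∀ s : ℝ, η s = 0 := by intro s; rw [hkey s, hk]; ring
    have hg := hcon 0
    rw [hb, hη0] at hg
    refine ⟨hk, ?_, hη0, ⟨α 0, halin⟩, by linarith⟩
    have hc : c = -(a * b) := by linarith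
    rw [hc]; nlinarith
end
end

section
/- Let (α, τ, η) solve α' = τ, τ' = (c + aτ)α - η, η' = -(c + aτ)τ with a > 0, c ≥ 0, and suppose α(s) ≤ 0 and η(s) ≥ 0 for all s (initial condition in H ∪ C), with the solution non-trivial (τ not constant). If s₀ is a critical point of α (i.e., τ(s₀) = 0), then α''(s₀) = cα(s₀) - η(s₀) < 0, so s₀ is a strict local maximum of α. -/
noncomputable section

open Set Real

private lemma abs_sub'' (x y : ℝ) : |x - y| ≤ |x| + |y| := by
  simpa [sub_eq_add_neg] using abs_add_le x (-y)

private lemma gron_fwd {E : Type*} [NormedAddCommGroup E] [NormedSpace ℝ E]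
    {f f' : ℝ → E} {K a b : ℝ}
    (hab : a ≤ b) (hd : ∀ t ∈ Set.Icc a b, HasDerivAt f (f' t) t)
    (hb : ∀ t ∈ Set.Icc a b, ‖f' t‖ ≤ K * ‖f t‖) (h0 : f a = 0) : f b = 0 := by
  have H := norm_le_gronwallBound_of_norm_deriv_right_le (f := f) (f' := f')
    (δ := 0) (K := K) (ε := 0) (a := a) (b := b)
    (continuousOn_of_forall_continuousAt fun t ht => (hd t ht).continuousAt)
    (fun t ht => (hd t (Set.Ico_subset_Icc_self ht)).hasDerivWithinAt)
    (by simp [h0])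
    (fun t ht => by simpa using hb t (Set.Ico_subset_Icc_self ht))
  have h2 := H b ⟨hab, le_rfl⟩
  rw [gronwallBound_ε0_δ0] at h2
  exact norm_le_zero_iff.mp h2

private lemma gron_bwd {E : Type*} [NormedAddCommGroup E] [NormedSpace ℝ E]
    {f f' : ℝ → E} {K a b : ℝ}
    (hab : a ≤ b) (hd : ∀ t ∈ Set.Icc a b, HasDerivAt f (f' t) t)
    (hb : ∀ t ∈ Set.Icc a b, ‖f' t‖ ≤ K * ‖f t‖) (h0 : f b = 0) : f a = 0 := by
  have key : ∀ t ∈ Set.Icc a b, a + b - t ∈ Set.Icc a b := by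
    intro t ht
    exact ⟨by linarith [ht.2], by linarith [ht.1]⟩
  have hres := gron_fwd (f := fun t => f (a + b - t))
    (f' := fun t => (-1 : ℝ) • f' (a + b - t)) (K := K) hab
    (fun t ht => by
      have hin : HasDerivAt (fun t : ℝ => a + b - t) (-1) t := by
        simpa using (hasDerivAt_id t).const_sub (a + b)
      exact HasDerivAt.scomp t (hd _ (key t ht)) hin)
    (fun t ht => by
      simpa [norm_smul] using hb _ (key t ht))
    (by simpa using h0)
  simpa using hres

private lemma gron_zero {E : Type*} [NormedAddCommGroup E] [NormedSpace ℝ E]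
    {f f' : ℝ → E} {K a b t₀ t : ℝ}
    (hd : ∀ u ∈ Set.Icc a b, HasDerivAt f (f' u) u)
    (hb : ∀ u ∈ Set.Icc a b, ‖f' u‖ ≤ K * ‖f u‖)
    (ht₀ : t₀ ∈ Set.Icc a b) (ht : t ∈ Set.Icc a b) (h0 : f t₀ = 0) : f t = 0 := by
  rcases le_total t t₀ with h | h
  · exact gron_bwd h
      (fun u hu => hd u ⟨le_trans ht.1 hu.1, le_trans hu.2 ht₀.2⟩)
      (fun u hu => hb u ⟨le_trans ht.1 hu.1, le_trans hu.2 ht₀.2⟩) h0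
  · exact gron_fwd h
      (fun u hu => hd u ⟨le_trans ht₀.1 hu.1, le_trans hu.2 ht.2⟩)
      (fun u hu => hb u ⟨le_trans ht₀.1 hu.1, le_trans hu.2 ht.2⟩) h0

private lemma bnd1 {a c t x y M N : ℝ} (ha : 0 < a) (hc : 0 ≤ c) (hM : |t| ≤ M)
    (hx : |x| ≤ N) (hy : |y| ≤ N) : |(c + a * t) * x - y| ≤ (c + a * M + 1) * N := by
  have h0N : (0:ℝ) ≤ N := le_trans (abs_nonneg x) hx
  have h0M : (0:ℝ) ≤ M := le_trans (abs_nonneg t) hM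
  have h1 : |(c + a * t) * x| ≤ (c + a * M) * N := by
    rw [abs_mul]
    apply mul_le_mul _ hx (abs_nonneg x) (by positivity)
    calc |c + a * t| ≤ |c| + |a * t| := abs_add_le _ _
      _ ≤ c + a * M := by
          rw [abs_of_nonneg hc, abs_mul, abs_of_pos ha]
          nlinarith
  calc |(c + a * t) * x - y| ≤ |(c + a * t) * x| + |y| := abs_sub'' _ _
    _ ≤ (c + a * M) * N + N := add_le_add h1 hy
    _ = (c + a * M + 1) * N := by ring

private lemma bnd2 {a c t M N : ℝ} (ha : 0 < a) (hc : 0 ≤ c) (hM : |t| ≤ M)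
    (hN : |t| ≤ N) : |(-((c + a * t) * t))| ≤ (c + a * M + 1) * N := by
  have h0N : (0:ℝ) ≤ N := le_trans (abs_nonneg t) hN
  have h0M : (0:ℝ) ≤ M := le_trans (abs_nonneg t) hM
  rw [abs_neg, abs_mul]
  have h1 : |c + a * t| ≤ c + a * M := by
    calc |c + a * t| ≤ |c| + |a * t| := abs_add_le _ _
      _ ≤ c + a * M := by
          rw [abs_of_nonneg hc, abs_mul, abs_of_pos ha]
          nlinarith
  nlinarith [abs_nonneg (c + a * t), abs_nonneg t]

/-- For a non-trivial solution with `c ≥ 0` staying in `H ∪ C` (so `α ≤ 0`, `η ≥ 0`),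
any critical point of `α` satisfies `α'' = cα - η < 0` and is a strict local maximum. -/
theorem stmt_6 (lo hi a c : ℝ) (ha : 0 < a) (hc : 0 ≤ c) (α τ η : ℝ → ℝ)
    (hα : ∀ s ∈ Set.Ioo lo hi, HasDerivAt α (τ s) s)
    (hτ : ∀ s ∈ Set.Ioo lo hi, HasDerivAt τ ((c + a * τ s) * α s - η s) s)
    (hη : ∀ s ∈ Set.Ioo lo hi, HasDerivAt η (-((c + a * τ s) * τ s)) s)
    (hsign : ∀ s ∈ Set.Ioo lo hi, α s ≤ 0 ∧ 0 ≤ η s)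
    (hnt : ¬ ∃ b : ℝ, ∀ s ∈ Set.Ioo lo hi, τ s = b)
    (s₀ : ℝ) (hs₀ : s₀ ∈ Set.Ioo lo hi) (hcrit : τ s₀ = 0) :
    HasDerivAt τ (c * α s₀ - η s₀) s₀ ∧
    c * α s₀ - η s₀ < 0 ∧
    ∀ᶠ s in nhdsWithin s₀ {s₀}ᶜ, α s < α s₀ := by
  obtain ⟨hlo, hhi⟩ := hs₀
  have hs₀' : s₀ ∈ Set.Ioo lo hi := ⟨hlo, hhi⟩
  have hτ' : HasDerivAt τ (c * α s₀ - η s₀) s₀ := by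
    have := hτ s₀ hs₀'
    rwa [hcrit, mul_zero, add_zero] at this
  have hneg : c * α s₀ - η s₀ < 0 := by
    by_contra hpos
    push_neg at hpos
    obtain ⟨ha0, hη0⟩ := hsign s₀ hs₀'
    have hca : c * α s₀ ≤ 0 := mul_nonpos_of_nonneg_of_nonpos hc ha0
    have hca0 : c * α s₀ = 0 := by linarith
    have hη00 : η s₀ = 0 := by linarith
    apply hnt
    refine ⟨0, fun u hu => ?_⟩
    set p := min u s₀ with hp
    set q := max u s₀ with hq
    have hpq : p ≤ q := min_le_max
    have hsub : Set.Icc p q ⊆ Set.Ioo lo hi := by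
      intro x hx
      exact ⟨lt_of_lt_of_le (lt_min hu.1 hlo) hx.1, lt_of_le_of_lt hx.2 (max_lt hu.2 hhi)⟩
    have hs₀m : s₀ ∈ Set.Icc p q := ⟨min_le_right u s₀, le_max_right u s₀⟩
    have hum : u ∈ Set.Icc p q := ⟨min_le_left u s₀, le_max_left u s₀⟩
    -- bound on α and τ on the compact interval
    have hcont : ContinuousOn (fun x => (α x, τ x)) (Set.Icc p q) := fun x hx =>
      (((hα x (hsub hx)).continuousAt).prodMk ((hτ x (hsub hx)).continuousAt)).continuousWithinAt
    obtain ⟨C, hC⟩ := (isCompact_Icc).exists_bound_of_continuousOn hcont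
    set M := max C 0 with hMdef
    have hM0 : (0:ℝ) ≤ M := le_max_right _ _
    have hMb : ∀ x ∈ Set.Icc p q, |α x| ≤ M ∧ |τ x| ≤ M := by
      intro x hx
      have h1 := hC x hx
      rw [Prod.norm_def] at h1
      simp only [Real.norm_eq_abs] at h1
      constructor
      · exact le_trans (le_trans (le_max_left _ _) h1) (le_max_left C 0)
      · exact le_trans (le_trans (le_max_right _ _) h1) (le_max_left C 0)
    rcases eq_or_lt_of_le hc with hc0 | hcpos
    · -- c = 0 : apply Grönwall to (τ, η)
      have hc0' : c = 0 := hc0.symm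
      subst hc0'
      set f : ℝ → ℝ × ℝ := fun x => (τ x, η x) with hf
      set f' : ℝ → ℝ × ℝ :=
        fun x => ((0 + a * τ x) * α x - η x, -((0 + a * τ x) * τ x)) with hf'
      have hd : ∀ x ∈ Set.Icc p q, HasDerivAt f (f' x) x := fun x hx =>
        (hτ x (hsub hx)).prodMk (hη x (hsub hx))
      have hbnd : ∀ x ∈ Set.Icc p q, ‖f' x‖ ≤ (0 + a * M + 1) * ‖f x‖ := by
        intro x hx
        obtain ⟨hαM, hτM⟩ := hMb x hx
        have hτN : |τ x| ≤ ‖f x‖ := by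
          rw [hf, Prod.norm_def]; simp only [Real.norm_eq_abs]; exact le_max_left _ _
        have hηN : |η x| ≤ ‖f x‖ := by
          rw [hf, Prod.norm_def]; simp only [Real.norm_eq_abs]; exact le_max_right _ _
        rw [hf', Prod.norm_def]
        simp only [Real.norm_eq_abs]
        apply max_le
        · have e : (0 + a * τ x) * α x - η x = (0 + a * α x) * τ x - η x := by ring
          rw [e]
          exact bnd1 ha le_rfl hαM hτN hηN
        · exact bnd2 ha le_rfl hτM hτN
      have h0 : f s₀ = 0 := by
        rw [hf]; simp [hcrit, hη00, Prod.ext_iff]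
      have := gron_zero hd hbnd hs₀m hum h0
      have := congrArg Prod.fst this
      simpa [hf] using this
    · -- c > 0 : then α s₀ = 0; apply Grönwall to (α, τ, η)
      have hα0 : α s₀ = 0 := by
        rcases mul_eq_zero.mp hca0 with h | h
        · exact absurd h (ne_of_gt hcpos)
        · exact h
      set f : ℝ → ℝ × ℝ × ℝ := fun x => (α x, τ x, η x) with hf
      set f' : ℝ → ℝ × ℝ × ℝ :=
        fun x => (τ x, (c + a * τ x) * α x - η x, -((c + a * τ x) * τ x)) with hf'
      have hd : ∀ x ∈ Set.Icc p q, HasDerivAt f (f' x) x := fun x hx =>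
        (hα x (hsub hx)).prodMk ((hτ x (hsub hx)).prodMk (hη x (hsub hx)))
      have hbnd : ∀ x ∈ Set.Icc p q, ‖f' x‖ ≤ (c + a * M + 1) * ‖f x‖ := by
        intro x hx
        obtain ⟨hαM, hτM⟩ := hMb x hx
        have hnorm : ‖f x‖ = max |α x| (max |τ x| |η x|) := by
          rw [hf, Prod.norm_def, Prod.norm_def]; simp [Real.norm_eq_abs]
        have hN0 : (0:ℝ) ≤ ‖f x‖ := norm_nonneg _
        have hαN : |α x| ≤ ‖f x‖ := by rw [hnorm]; exact le_max_left _ _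
        have hτN : |τ x| ≤ ‖f x‖ := by
          rw [hnorm]; exact le_trans (le_max_left _ _) (le_max_right _ _)
        have hηN : |η x| ≤ ‖f x‖ := by
          rw [hnorm]; exact le_trans (le_max_right _ _) (le_max_right _ _)
        have hnorm' : ‖f' x‖ =
            max |τ x| (max |(c + a * τ x) * α x - η x| |(-((c + a * τ x) * τ x))|) := by
          rw [hf', Prod.norm_def, Prod.norm_def]; simp only [Real.norm_eq_abs]
        rw [hnorm']
        apply max_le
        · nlinarith [mul_nonneg (by positivity : (0:ℝ) ≤ c + a * M) hN0]
        · apply max_le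
          · exact bnd1 ha (le_of_lt hcpos) hτM hαN hηN
          · exact bnd2 ha (le_of_lt hcpos) hτM hτN
      have h0 : f s₀ = 0 := by
        rw [hf]; simp [hcrit, hη00, hα0, Prod.ext_iff]
      have := gron_zero hd hbnd hs₀m hum h0
      have := congrArg (fun z : ℝ × ℝ × ℝ => z.2.1) this
      simpa [hf] using this
  refine ⟨hτ', hneg, ?_⟩
  -- strict local maximum
  have hslope : Filter.Tendsto (slope τ s₀) (nhdsWithin s₀ {s₀}ᶜ) (nhds (c * α s₀ - η s₀)) :=
    hasDerivAt_iff_tendsto_slope.mp hτ'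
  have hev : ∀ᶠ s in nhdsWithin s₀ {s₀}ᶜ, slope τ s₀ s < 0 :=
    hslope.eventually_lt_const hneg
  rw [eventually_nhdsWithin_iff] at hev
  rw [Metric.eventually_nhds_iff] at hev
  obtain ⟨ε, hε, hevb⟩ := hev
  set δ := min (ε / 2) (min ((s₀ - lo) / 2) ((hi - s₀) / 2)) with hδdef
  have hδ0 : 0 < δ := by
    apply lt_min (by linarith)
    exact lt_min (by linarith) (by linarith)
  have hδε : δ < ε := lt_of_le_of_lt (min_le_left _ _) (by linarith)
  have hδlo : δ < s₀ - lo := lt_of_le_of_lt (le_trans (min_le_right _ _) (min_le_left _ _)) (by linarith)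
  have hδhi : δ < hi - s₀ := lt_of_le_of_lt (le_trans (min_le_right _ _) (min_le_right _ _)) (by linarith)
  have hsub2 : Set.Icc (s₀ - δ) (s₀ + δ) ⊆ Set.Ioo lo hi := by
    intro x hx
    exact ⟨by linarith [hx.1], by linarith [hx.2]⟩
  -- sign of τ near s₀
  have hτsign : ∀ s, s ∈ Set.Icc (s₀ - δ) (s₀ + δ) → s ≠ s₀ → slope τ s₀ s < 0 := by
    intro s hs hne
    apply hevb
    · rw [Real.dist_eq]
      rw [abs_lt]
      constructor <;> [linarith [hs.1]; linarith [hs.2]]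
    · simpa using hne
  have hτval : ∀ s, s ∈ Set.Icc (s₀ - δ) (s₀ + δ) → s ≠ s₀ → τ s / (s - s₀) < 0 := by
    intro s hs hne
    have := hτsign s hs hne
    rwa [slope_def_field, hcrit, sub_zero] at this
  have hτpos : ∀ s ∈ Set.Ioo (s₀ - δ) s₀, 0 < τ s := by
    intro s hs
    have hne : s ≠ s₀ := ne_of_lt hs.2
    have h := hτval s ⟨le_of_lt hs.1, by linarith [hs.2]⟩ hne
    rcases div_neg_iff.mp h with ⟨h1, _⟩ | ⟨_, h2⟩
    · exact h1
    · linarith [hs.2]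
  have hτneg : ∀ s ∈ Set.Ioo s₀ (s₀ + δ), τ s < 0 := by
    intro s hs
    have hne : s ≠ s₀ := ne_of_gt hs.1
    have h := hτval s ⟨by linarith [hs.1], le_of_lt hs.2⟩ hne
    rcases div_neg_iff.mp h with ⟨_, h2⟩ | ⟨h1, _⟩
    · linarith [hs.1]
    · exact h1
  have hmono : StrictMonoOn α (Set.Icc (s₀ - δ) s₀) := by
    apply strictMonoOn_of_hasDerivWithinAt_pos (convex_Icc _ _) (f' := τ)
    · intro x hx
      have hx' : x ∈ Set.Ioo lo hi := hsub2 ⟨hx.1, by linarith [hx.2, hδ0]⟩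
      exact ((hα x hx').continuousAt).continuousWithinAt
    · intro x hx
      rw [interior_Icc] at hx
      have hx' : x ∈ Set.Ioo lo hi := hsub2 ⟨le_of_lt hx.1, by linarith [hx.2, hδ0]⟩
      exact (hα x hx').hasDerivWithinAt
    · intro x hx
      rw [interior_Icc] at hx
      exact hτpos x hx
  have hanti : StrictAntiOn α (Set.Icc s₀ (s₀ + δ)) := by
    apply strictAntiOn_of_hasDerivWithinAt_neg (convex_Icc _ _) (f' := τ)
    · intro x hx
      have hx' : x ∈ Set.Ioo lo hi := hsub2 ⟨by linarith [hx.1, hδ0], hx.2⟩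
      exact ((hα x hx').continuousAt).continuousWithinAt
    · intro x hx
      rw [interior_Icc] at hx
      have hx' : x ∈ Set.Ioo lo hi := hsub2 ⟨by linarith [hx.1, hδ0], le_of_lt hx.2⟩
      exact (hα x hx').hasDerivWithinAt
    · intro x hx
      rw [interior_Icc] at hx
      exact hτneg x hx
  rw [eventually_nhdsWithin_iff]
  filter_upwards [Ioo_mem_nhds (by linarith : s₀ - δ < s₀) (by linarith : s₀ < s₀ + δ)]
    with s hs hne
  have hne' : s ≠ s₀ := by simpa using hne
  rcases lt_or_gt_of_ne hne' with h | h
  · exact hmono ⟨le_of_lt hs.1, le_of_lt h⟩ ⟨by linarith [hδ0], le_rfl⟩ h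
  · exact hanti ⟨le_rfl, by linarith [hδ0]⟩ ⟨le_of_lt h, le_of_lt hs.2⟩ h
end
end

section
/- Let (α, τ, η) be a non-trivial solution of α' = τ, τ' = (c + aτ)α - η, η' = -(c + aτ)τ with a > 0 and c = 0. If s₀ is a critical point of τ (τ'(s₀) = 0), then τ''(s₀) = 2aτ(s₀)² > 0, hence s₀ is a strict local minimum of τ. -/
noncomputable section

open Set Filter

/-- Grönwall: a function with `w p = 0` and `‖w'‖ ≤ K‖w‖` vanishes on `[p,q]`. -/
lemma gronwall_zero {w w' : ℝ → ℝ} {K p q : ℝ}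
    (hw : ∀ s ∈ Set.Icc p q, HasDerivAt w (w' s) s)
    (hb : ∀ s ∈ Set.Icc p q, ‖w' s‖ ≤ K * ‖w s‖)
    (h0 : w p = 0) : ∀ s ∈ Set.Icc p q, w s = 0 := by
  intro s hs
  have key := norm_le_gronwallBound_of_norm_deriv_right_le
    (f := w) (f' := w') (a := p) (b := q) (δ := 0) (K := K) (ε := 0)
    (fun t ht => (hw t ht).continuousAt.continuousWithinAt)
    (fun t ht => (hw t (Set.Ico_subset_Icc_self ht)).hasDerivWithinAt)
    (by simp [h0])
    (fun t ht => by simpa using hb t (Set.Ico_subset_Icc_self ht)) s hs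
  rw [gronwallBound_ε0_δ0] at key
  have := norm_nonneg (w s)
  have : ‖w s‖ = 0 := le_antisymm key this
  simpa using this

/-- For a non-trivial solution with `c = 0`, at a critical point `s₀` of `τ` one has
`τ''(s₀) = 2aτ(s₀)² > 0`, hence `s₀` is a strict local minimum of `τ`. -/
theorem stmt_7 (lo hi a : ℝ) (ha : 0 < a) (α τ η : ℝ → ℝ)
    (hα : ∀ s ∈ Set.Ioo lo hi, HasDerivAt α (τ s) s)
    (hτ : ∀ s ∈ Set.Ioo lo hi, HasDerivAt τ (a * τ s * α s - η s) s)
    (hη : ∀ s ∈ Set.Ioo lo hi, HasDerivAt η (-(a * (τ s) ^ 2)) s)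
    (hnt : ¬ ∃ b : ℝ, ∀ s ∈ Set.Ioo lo hi, τ s = b)
    (s₀ : ℝ) (hs₀ : s₀ ∈ Set.Ioo lo hi)
    (hcrit : a * τ s₀ * α s₀ - η s₀ = 0) :
    HasDerivAt (fun u => a * τ u * α u - η u) (2 * a * (τ s₀) ^ 2) s₀ ∧
    0 < 2 * a * (τ s₀) ^ 2 ∧
    ∀ᶠ s in nhdsWithin s₀ {s₀}ᶜ, τ s₀ < τ s := by
  -- energy function
  set w : ℝ → ℝ := fun s => (τ s) ^ 2 + (η s) ^ 2 with hw_def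
  set w' : ℝ → ℝ := fun s =>
    2 * a * (τ s) ^ 2 * α s - 2 * τ s * η s - 2 * a * (τ s) ^ 2 * η s with hw'_def
  have hwderiv : ∀ s ∈ Set.Ioo lo hi, HasDerivAt w (w' s) s := by
    intro s hs
    have h1 := ((hτ s hs).pow 2).add ((hη s hs).pow 2)
    exact h1.congr_deriv (by simp only [hw'_def]; ring)
  have hwbound : ∀ p q : ℝ, Set.Icc p q ⊆ Set.Ioo lo hi →
      ∃ K : ℝ, ∀ s ∈ Set.Icc p q, ‖w' s‖ ≤ K * ‖w s‖ := by
    intro p q hpq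
    rcases le_or_gt p q with hle | hlt
    · have hcα : ContinuousOn α (Set.Icc p q) :=
        fun s hs => ((hα s (hpq hs)).continuousAt).continuousWithinAt
      have hcη : ContinuousOn η (Set.Icc p q) :=
        fun s hs => ((hη s (hpq hs)).continuousAt).continuousWithinAt
      obtain ⟨Mα, hMα⟩ := isCompact_Icc.exists_bound_of_continuousOn hcα
      obtain ⟨Mη, hMη⟩ := isCompact_Icc.exists_bound_of_continuousOn hcη
      refine ⟨2 * a * Mα + 1 + 2 * a * Mη, fun s hs => ?_⟩
      have h1 : |α s| ≤ Mα := hMα s hs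
      have h2 : |η s| ≤ Mη := hMη s hs
      simp only [hw_def, hw'_def, Real.norm_eq_abs]
      have hwnn : 0 ≤ w s := by positivity
      rw [abs_of_nonneg hwnn, abs_le]
      have ha1 := abs_le.mp h1
      have ha2 := abs_le.mp h2
      have hτη : 2 * |τ s| * |η s| ≤ (τ s) ^ 2 + (η s) ^ 2 := by
        nlinarith [sq_nonneg (|τ s| - |η s|), sq_abs (τ s), sq_abs (η s)]
      have hτη' : |2 * τ s * η s| ≤ (τ s) ^ 2 + (η s) ^ 2 := by
        calc |2 * τ s * η s| = 2 * |τ s| * |η s| := by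
              rw [abs_mul, abs_mul]; simp [abs_of_nonneg, mul_assoc]
          _ ≤ _ := hτη
      have haux := abs_le.mp hτη'
      have hMα0 : 0 ≤ Mα := le_trans (abs_nonneg _) h1
      have hMη0 : 0 ≤ Mη := le_trans (abs_nonneg _) h2
      have haτ2 : 0 ≤ a * τ s ^ 2 := by positivity
      have hwval : w s = τ s ^ 2 + η s ^ 2 := rfl
      rw [hwval]
      constructor <;> nlinarith [mul_nonneg haτ2 (by linarith [ha1.2] : (0:ℝ) ≤ Mα - α s),
        mul_nonneg haτ2 (by linarith [ha1.1] : (0:ℝ) ≤ Mα + α s),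
        mul_nonneg haτ2 (by linarith [ha2.2] : (0:ℝ) ≤ Mη - η s),
        mul_nonneg haτ2 (by linarith [ha2.1] : (0:ℝ) ≤ Mη + η s),
        mul_nonneg (mul_nonneg ha.le hMα0) (sq_nonneg (η s)),
        mul_nonneg (mul_nonneg ha.le hMη0) (sq_nonneg (η s)), haux.1, haux.2]
    · exact ⟨0, fun s hs => absurd (hs.1.trans hs.2) hlt.not_ge⟩
  obtain ⟨hlo, hhi⟩ := hs₀
  -- τ s₀ ≠ 0
  have hτ0 : τ s₀ ≠ 0 := by
    intro h0
    have hη0 : η s₀ = 0 := by rw [h0] at hcrit; linarith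
    have hws₀ : w s₀ = 0 := by simp [hw_def, h0, hη0]
    -- w vanishes on all of Ioo lo hi
    have hzero : ∀ s ∈ Set.Ioo lo hi, τ s = 0 := by
      intro s hs
      have hwzero : w s = 0 := by
        rcases le_or_gt s₀ s with hcase | hcase
        · have hsub : Set.Icc s₀ s ⊆ Set.Ioo lo hi := fun t ht =>
            ⟨lt_of_lt_of_le hlo ht.1, lt_of_le_of_lt ht.2 hs.2⟩
          obtain ⟨K, hK⟩ := hwbound s₀ s hsub
          exact gronwall_zero (fun t ht => hwderiv t (hsub ht)) hK hws₀ s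
            ⟨hcase, le_refl s⟩
        · -- reflect
          set w2 : ℝ → ℝ := fun u => w (2 * s₀ - u) with hw2
          set w2' : ℝ → ℝ := fun u => -(w' (2 * s₀ - u)) with hw2'
          have hsub : Set.Icc s s₀ ⊆ Set.Ioo lo hi := fun t ht =>
            ⟨lt_of_lt_of_le hs.1 ht.1, lt_of_le_of_lt ht.2 hhi⟩
          have hrefl : ∀ u ∈ Set.Icc s₀ (2 * s₀ - s), (2 * s₀ - u) ∈ Set.Icc s s₀ := by
            intro u hu; constructor <;> [linarith [hu.2]; linarith [hu.1]]
          have hderiv2 : ∀ u ∈ Set.Icc s₀ (2 * s₀ - s), HasDerivAt w2 (w2' u) u := by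
            intro u hu
            have hinner : HasDerivAt (fun u : ℝ => 2 * s₀ - u) (-1) u := by
              exact (hasDerivAt_id' u).const_sub (2 * s₀)
            have := (hwderiv _ (hsub (hrefl u hu))).comp u hinner
            exact this.congr_deriv (by simp [hw2'])
          obtain ⟨K, hK⟩ := hwbound s s₀ hsub
          have hK2 : ∀ u ∈ Set.Icc s₀ (2 * s₀ - s), ‖w2' u‖ ≤ K * ‖w2 u‖ := by
            intro u hu
            have := hK _ (hrefl u hu)
            simpa [hw2', hw2] using this
          have h02 : w2 s₀ = 0 := by
            have he : 2 * s₀ - s₀ = s₀ := by ring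
            simp [hw2, he, hws₀]
          have := gronwall_zero hderiv2 hK2 h02 (2 * s₀ - s)
            ⟨by linarith, le_refl _⟩
          simpa [hw2] using this
      have : (τ s) ^ 2 + (η s) ^ 2 = 0 := hwzero
      nlinarith [sq_nonneg (τ s), sq_nonneg (η s)]
    exact hnt ⟨0, hzero⟩
  -- Part 1: the derivative
  have hf : HasDerivAt (fun u => a * τ u * α u - η u) (2 * a * (τ s₀) ^ 2) s₀ := by
    have h1 := (((hasDerivAt_const s₀ a).mul (hτ s₀ ⟨hlo, hhi⟩)).mul
      (hα s₀ ⟨hlo, hhi⟩)).sub (hη s₀ ⟨hlo, hhi⟩)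
    refine h1.congr_deriv ?_
    rw [show (0 : ℝ) * τ s₀ + a * (a * τ s₀ * α s₀ - η s₀) = a * (a * τ s₀ * α s₀ - η s₀) by ring,
      hcrit]
    simp only [Pi.mul_apply]
    ring
  have hd : 0 < 2 * a * (τ s₀) ^ 2 := by positivity
  refine ⟨hf, hd, ?_⟩
  -- Part 3: strict local min
  set f : ℝ → ℝ := fun u => a * τ u * α u - η u with hf_def
  have hslope : Filter.Tendsto (slope f s₀) (nhdsWithin s₀ {s₀}ᶜ) (nhds (2 * a * (τ s₀) ^ 2)) :=
    hasDerivAt_iff_tendsto_slope.mp hf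
  have hpos : ∀ᶠ s in nhdsWithin s₀ {s₀}ᶜ, 0 < slope f s₀ s :=
    hslope.eventually (eventually_gt_nhds hd)
  have hmem : ∀ᶠ s in nhdsWithin s₀ {s₀}ᶜ, s ∈ Set.Ioo lo hi :=
    eventually_nhdsWithin_of_eventually_nhds
      ((isOpen_Ioo.eventually_mem ⟨hlo, hhi⟩))
  have hcomb := hpos.and hmem
  rw [eventually_nhdsWithin_iff] at hcomb ⊢
  obtain ⟨U, hU, hUopen, hUs₀⟩ := eventually_nhds_iff.mp hcomb
  obtain ⟨ε, hε, hball⟩ := Metric.isOpen_iff.mp hUopen s₀ hUs₀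
  rw [Real.ball_eq_Ioo] at hball
  -- sign of f on the punctured interval
  have hsign : ∀ s ∈ Set.Ioo (s₀ - ε) (s₀ + ε), s ≠ s₀ →
      s ∈ Set.Ioo lo hi ∧ (s₀ < s → 0 < f s) ∧ (s < s₀ → f s < 0) := by
    intro s hsI hne
    obtain ⟨hsl, hsm⟩ := hU s (hball hsI) hne
    have hfval : slope f s₀ s = f s / (s - s₀) := by
      rw [slope_def_field]; simp only [hf_def]
      rw [hcrit]; ring
    refine ⟨hsm, fun hgt => ?_, fun hlt => ?_⟩
    · have hden : 0 < s - s₀ := by linarith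
      rcases div_pos_iff.mp (hfval ▸ hsl) with ⟨h1, h2⟩ | ⟨h1, h2⟩
      · exact h1
      · linarith
    · have hden : s - s₀ < 0 := by linarith
      have h' := hfval ▸ hsl
      rcases div_pos_iff.mp h' with ⟨h1, h2⟩ | ⟨h1, h2⟩
      · linarith
      · linarith
  refine eventually_nhds_iff.mpr ⟨Set.Ioo (s₀ - ε) (s₀ + ε), ?_, isOpen_Ioo,
    by constructor <;> linarith⟩
  intro s hsI hne
  have hne' : s ≠ s₀ := hne
  rcases lt_or_gt_of_ne hne' with hlt | hgt
  · -- left side: τ strictly antitone on [s, s₀]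
    have hanti : StrictAntiOn τ (Set.Icc s s₀) := by
      apply strictAntiOn_of_deriv_neg (convex_Icc s s₀)
      · intro t ht
        rcases eq_or_ne t s₀ with rfl | htne
        · exact (hτ t ⟨hlo, hhi⟩).continuousAt.continuousWithinAt
        · have htI : t ∈ Set.Ioo (s₀ - ε) (s₀ + ε) :=
            ⟨by linarith [ht.1, hsI.1], by linarith [ht.2]⟩
          exact (hτ t (hsign t htI htne).1).continuousAt.continuousWithinAt
      · intro t ht
        rw [interior_Icc] at ht
        have htI : t ∈ Set.Ioo (s₀ - ε) (s₀ + ε) :=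
          ⟨by linarith [ht.1, hsI.1], by linarith [ht.2]⟩
        have hts := hsign t htI (ne_of_lt ht.2)
        rw [(hτ t hts.1).deriv]
        exact hts.2.2 ht.2
    have := hanti ⟨le_refl s, hlt.le⟩ ⟨hlt.le, le_refl s₀⟩ hlt
    exact this
  · -- right side: τ strictly monotone on [s₀, s]
    have hmono : StrictMonoOn τ (Set.Icc s₀ s) := by
      apply strictMonoOn_of_deriv_pos (convex_Icc s₀ s)
      · intro t ht
        rcases eq_or_ne t s₀ with rfl | htne
        · exact (hτ t ⟨hlo, hhi⟩).continuousAt.continuousWithinAt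
        · have htI : t ∈ Set.Ioo (s₀ - ε) (s₀ + ε) :=
            ⟨by linarith [ht.1], by linarith [ht.2, hsI.2]⟩
          exact (hτ t (hsign t htI htne).1).continuousAt.continuousWithinAt
      · intro t ht
        rw [interior_Icc] at ht
        have htI : t ∈ Set.Ioo (s₀ - ε) (s₀ + ε) :=
          ⟨by linarith [ht.1], by linarith [ht.2, hsI.2]⟩
        have hts := hsign t htI (ne_of_gt ht.1)
        rw [(hτ t hts.1).deriv]
        exact hts.2.1 ht.1
    exact hmono ⟨le_refl s₀, hgt.le⟩ ⟨hgt.le, le_refl s⟩ hgt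
end
end

section
/- Let (α, τ, η) be a solution of α' = τ, τ' = (c + aτ)α - η, η' = -(c + aτ)τ with a > 0 and c ≥ 0, defined on an interval I. If s₀ ∈ I satisfies τ(s₀) = 0 and τ'(s₀) > 0, and whenever τ > 0 every critical point of τ is a strict local minimum (which holds since (c + aτ)τ > 0 there), then τ(s) > 0 for all s > s₀ in I. Consequently τ has at most two zeros on I. -/
noncomputable section

open Set Filter Topology

/-- If `f x = 0` and `f' x > 0`, then `f > 0` just to the right of `x`. -/
private lemma pos_right_of_deriv_pos {f : ℝ → ℝ} {x d : ℝ} (hd : HasDerivAt f d x)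
    (h0 : f x = 0) (hdp : 0 < d) : ∀ᶠ t in 𝓝[>] x, 0 < f t := by
  have T := hasDerivAt_iff_tendsto_slope.1 hd
  have ev : ∀ᶠ t in 𝓝[≠] x, 0 < slope f x t := T.eventually (eventually_gt_nhds hdp)
  have hle : 𝓝[>] x ≤ 𝓝[≠] x := nhdsWithin_mono x fun t ht => ne_of_gt ht
  filter_upwards [ev.filter_mono hle, self_mem_nhdsWithin] with t hslope (ht : x < t)
  have hst : slope f x t = f t / (t - x) := by
    rw [slope_def_field, h0]; ring
  rw [hst] at hslope
  rcases div_pos_iff.1 hslope with ⟨h1, _⟩ | ⟨_, h2⟩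
  · exact h1
  · linarith [sub_pos.2 ht]

/-- If `f x = 0` and `f' x < 0`, then `f > 0` just to the left of `x`. -/
private lemma pos_left_of_deriv_neg {f : ℝ → ℝ} {x d : ℝ} (hd : HasDerivAt f d x)
    (h0 : f x = 0) (hdn : d < 0) : ∀ᶠ t in 𝓝[<] x, 0 < f t := by
  have T := hasDerivAt_iff_tendsto_slope.1 hd
  have ev : ∀ᶠ t in 𝓝[≠] x, slope f x t < 0 := T.eventually (eventually_lt_nhds hdn)
  have hle : 𝓝[<] x ≤ 𝓝[≠] x := nhdsWithin_mono x fun t ht => ne_of_lt ht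
  filter_upwards [ev.filter_mono hle, self_mem_nhdsWithin] with t hslope (ht : t < x)
  have hst : slope f x t = f t / (t - x) := by
    rw [slope_def_field, h0]; ring
  rw [hst] at hslope
  rcases div_neg_iff.1 hslope with ⟨h1, _⟩ | ⟨_, h2⟩
  · exact h1
  · linarith [sub_neg.2 ht]

section main

variable {lo hi a c : ℝ} {α τ η : ℝ → ℝ}

/-- Derivative of `V = τ'`. -/
private lemma hasDerivAt_V (ha : 0 < a)
    (hα : ∀ s ∈ Set.Ioo lo hi, HasDerivAt α (τ s) s)
    (hτ : ∀ s ∈ Set.Ioo lo hi, HasDerivAt τ ((c + a * τ s) * α s - η s) s)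
    (hη : ∀ s ∈ Set.Ioo lo hi, HasDerivAt η (-((c + a * τ s) * τ s)) s)
    {s : ℝ} (hs : s ∈ Set.Ioo lo hi) :
    HasDerivAt (fun t => (c + a * τ t) * α t - η t)
      (a * ((c + a * τ s) * α s - η s) * α s + 2 * ((c + a * τ s) * τ s)) s := by
  have h1 : HasDerivAt (fun t => c + a * τ t) (a * ((c + a * τ s) * α s - η s)) s :=
    ((hτ s hs).const_mul a).const_add c
  have h2 := (h1.mul (hα s hs)).sub (hη s hs)
  exact h2.congr_deriv (by ring)

/-- No "positive arch": `τ` cannot be positive on an open interval while `≤ 0` at both ends. -/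
private lemma no_pos_arch (ha : 0 < a) (hc : 0 ≤ c)
    (hα : ∀ s ∈ Set.Ioo lo hi, HasDerivAt α (τ s) s)
    (hτ : ∀ s ∈ Set.Ioo lo hi, HasDerivAt τ ((c + a * τ s) * α s - η s) s)
    (hη : ∀ s ∈ Set.Ioo lo hi, HasDerivAt η (-((c + a * τ s) * τ s)) s)
    {z w : ℝ} (hz : z ∈ Set.Ioo lo hi) (hw : w ∈ Set.Ioo lo hi) (hzw : z < w)
    (hτz : τ z ≤ 0) (hτw : τ w ≤ 0) (hpos : ∀ t ∈ Set.Ioo z w, 0 < τ t) : False := by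
  have hsub : Set.Icc z w ⊆ Set.Ioo lo hi := fun t ht =>
    ⟨lt_of_lt_of_le hz.1 ht.1, lt_of_le_of_lt ht.2 hw.2⟩
  have hcont : ContinuousOn τ (Set.Icc z w) := fun t ht =>
    ((hτ t (hsub ht)).continuousAt).continuousWithinAt
  obtain ⟨m, hmIcc, hmax⟩ := isCompact_Icc.exists_isMaxOn (Set.nonempty_Icc.2 hzw.le) hcont
  have hmid : (z + w) / 2 ∈ Set.Ioo z w := ⟨by linarith, by linarith⟩
  have hτm : 0 < τ m := lt_of_lt_of_le (hpos _ hmid) (hmax ⟨hmid.1.le, hmid.2.le⟩)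
  have hmo : m ∈ Set.Ioo z w := by
    rcases eq_or_lt_of_le hmIcc.1 with h | h
    · rw [← h] at hτm; exact absurd hτm (not_lt.2 hτz)
    rcases eq_or_lt_of_le hmIcc.2 with h2 | h2
    · rw [h2] at hτm; exact absurd hτm (not_lt.2 hτw)
    exact ⟨h, h2⟩
  have hm' : m ∈ Set.Ioo lo hi := hsub hmIcc
  -- derivative of τ vanishes at m
  have hVm : (c + a * τ m) * α m - η m = 0 :=
    (hmax.isLocalMax (Icc_mem_nhds hmo.1 hmo.2)).hasDerivAt_eq_zero (hτ m hm')
  -- second derivative positive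
  have hV' := hasDerivAt_V ha hα hτ hη hm'
  have hd : 0 < a * ((c + a * τ m) * α m - η m) * α m + 2 * ((c + a * τ m) * τ m) := by
    rw [hVm]
    have : 0 < c + a * τ m := add_pos_of_nonneg_of_pos hc (mul_pos ha hτm)
    nlinarith
  -- V > 0 just right of m
  have hev := pos_right_of_deriv_pos hV' hVm hd
  have hmem : {t | 0 < (c + a * τ t) * α t - η t} ∩ Set.Ioo m w ∈ 𝓝[>] m :=
    inter_mem hev (Ioo_mem_nhdsGT_of_mem ⟨le_refl m, hmo.2⟩)
  obtain ⟨u, hu, hsub2⟩ := mem_nhdsGT_iff_exists_Ioo_subset.1 hmem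
  set b' := (m + min u w) / 2 with hb'
  have hmu : m < min u w := lt_min hu hmo.2
  have hmb' : m < b' := by simp only [hb']; linarith
  have hb'u : b' < min u w := by simp only [hb']; linarith
  have hb'w : b' < w := lt_of_lt_of_le hb'u (min_le_right u w)
  have hb'Icc : Set.Icc m b' ⊆ Set.Icc z w := fun t ht =>
    ⟨le_trans hmIcc.1 ht.1, le_trans ht.2 hb'w.le⟩
  have hmono : StrictMonoOn τ (Set.Icc m b') := by
    apply strictMonoOn_of_deriv_pos (convex_Icc m b') (hcont.mono hb'Icc)
    intro t ht
    rw [interior_Icc] at ht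
    have htIoo : t ∈ Set.Ioo m u :=
      ⟨ht.1, lt_of_lt_of_le (lt_trans ht.2 hb'u) (min_le_left u w)⟩
    have := (hsub2 htIoo).1
    rw [(hτ t (hsub (hb'Icc ⟨ht.1.le, ht.2.le⟩))).deriv]
    exact this
  have : τ m < τ b' := hmono ⟨le_refl m, hmb'.le⟩ ⟨hmb'.le, le_refl b'⟩ hmb'
  exact absurd (hmax (hb'Icc ⟨hmb'.le, le_refl b'⟩)) (not_le.2 this)

/-- Part 1: if `τ(s₀)=0` and `τ'(s₀)>0` then `τ>0` after `s₀`. -/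
private lemma tau_pos_after (ha : 0 < a) (hc : 0 ≤ c)
    (hα : ∀ s ∈ Set.Ioo lo hi, HasDerivAt α (τ s) s)
    (hτ : ∀ s ∈ Set.Ioo lo hi, HasDerivAt τ ((c + a * τ s) * α s - η s) s)
    (hη : ∀ s ∈ Set.Ioo lo hi, HasDerivAt η (-((c + a * τ s) * τ s)) s)
    {s₀ : ℝ} (hs₀ : s₀ ∈ Set.Ioo lo hi) (h0 : τ s₀ = 0)
    (h1 : 0 < (c + a * τ s₀) * α s₀ - η s₀)
    {s : ℝ} (hs : s ∈ Set.Ioo lo hi) (hlt : s₀ < s) : 0 < τ s := by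
  by_contra hcon
  push_neg at hcon
  have hev := pos_right_of_deriv_pos (hτ s₀ hs₀) h0 h1
  obtain ⟨u, hu, hsub2⟩ := mem_nhdsGT_iff_exists_Ioo_subset.1 hev
  rcases lt_or_ge s u with h | h
  · exact absurd (hsub2 ⟨hlt, h⟩) (not_lt.2 hcon)
  -- u ≤ s; let c' ∈ (s₀, u), c' < s
  set c' := (s₀ + u) / 2 with hc'
  have hc'1 : s₀ < c' := by simp only [hc']; linarith [mem_Ioi.1 hu]
  have hc'2 : c' < u := by simp only [hc']; linarith [mem_Ioi.1 hu]
  have hc's : c' < s := lt_of_lt_of_le hc'2 h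
  have hIccsub : Set.Icc c' s ⊆ Set.Ioo lo hi := fun t ht =>
    ⟨lt_trans hs₀.1 (lt_of_lt_of_le hc'1 ht.1), lt_of_le_of_lt ht.2 hs.2⟩
  have hcont : ContinuousOn τ (Set.Icc c' s) := fun t ht =>
    ((hτ t (hIccsub ht)).continuousAt).continuousWithinAt
  set K := Set.Icc c' s ∩ τ ⁻¹' Set.Iic 0 with hK
  have hKc : IsClosed K := hcont.preimage_isClosed_of_isClosed isClosed_Icc isClosed_Iic
  have hKne : K.Nonempty := ⟨s, ⟨hc's.le, le_refl s⟩, hcon⟩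
  have hKbdd : BddBelow K := ⟨c', fun t ht => ht.1.1⟩
  set z := sInf K with hz
  have hzK : z ∈ K := hKc.csInf_mem hKne hKbdd
  have hzIoo : z ∈ Set.Ioo lo hi := hIccsub hzK.1
  have hs₀z : s₀ < z := lt_of_lt_of_le hc'1 hzK.1.1
  have hpos : ∀ t ∈ Set.Ioo s₀ z, 0 < τ t := by
    intro t ht
    rcases lt_or_ge t u with htu | htu
    · exact hsub2 ⟨ht.1, htu⟩
    · have htK : t ∉ K := fun htK => absurd (csInf_le hKbdd htK) (not_le.2 ht.2)
      have : t ∈ Set.Icc c' s := ⟨le_trans hc'2.le htu, le_trans ht.2.le hzK.1.2⟩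
      by_contra hcon2
      exact htK ⟨this, le_of_not_gt fun l => hcon2 l⟩
  exact no_pos_arch ha hc hα hτ hη hs₀ hzIoo hs₀z (le_of_eq h0) hzK.2 hpos


/-- Grönwall: a function with `‖F'‖ ≤ K‖F‖` vanishing at the left endpoint vanishes at the
right endpoint. -/
private lemma gron_zero_s9 {F G : ℝ → ℝ × ℝ} {x y : ℝ} (hxy : x ≤ y)
    (hcont : ContinuousOn F (Set.Icc x y))
    (hd : ∀ t ∈ Set.Ico x y, HasDerivWithinAt F (G t) (Set.Ici t) t)
    (hb : ∃ K, ∀ t ∈ Set.Ico x y, ‖G t‖ ≤ K * ‖F t‖)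
    (h0 : F x = 0) : F y = 0 := by
  obtain ⟨K, hK⟩ := hb
  set K' := max K 0 with hK'
  have hbound : ∀ t ∈ Set.Ico x y, ‖G t‖ ≤ K' * ‖F t‖ + 0 := by
    intro t ht
    have := hK t ht
    have h2 : K * ‖F t‖ ≤ K' * ‖F t‖ :=
      mul_le_mul_of_nonneg_right (le_max_left K 0) (norm_nonneg _)
    linarith
  have h := norm_le_gronwallBound_of_norm_deriv_right_le (δ := 0) (ε := 0) hcont hd
    (by simp [h0]) hbound y ⟨hxy, le_refl y⟩
  rw [gronwallBound_ε0_δ0] at h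
  exact norm_le_zero_iff.1 h

variable {lo hi a c : ℝ} {α τ η : ℝ → ℝ}

/-- Coefficient bound on a compact subinterval. -/
private lemma coef_bound
    (hα : ∀ s ∈ Set.Ioo lo hi, HasDerivAt α (τ s) s)
    (hτ : ∀ s ∈ Set.Ioo lo hi, HasDerivAt τ ((c + a * τ s) * α s - η s) s)
    {x y : ℝ} (hsub : Set.Icc x y ⊆ Set.Ioo lo hi) (hxy : x ≤ y) :
    ∃ K, ∀ t ∈ Set.Icc x y,
      ‖(((c + a * τ t) * α t - η t : ℝ),
        (a * ((c + a * τ t) * α t - η t) * α t + 2 * ((c + a * τ t) * τ t) : ℝ))‖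
        ≤ K * ‖((τ t : ℝ), ((c + a * τ t) * α t - η t : ℝ))‖ := by
  have hcα : ContinuousOn (fun t => a * α t) (Set.Icc x y) := fun t ht =>
    (continuousAt_const.mul (hα t (hsub ht)).continuousAt).continuousWithinAt
  have hcτ : ContinuousOn (fun t => 2 * (c + a * τ t)) (Set.Icc x y) := fun t ht =>
    (continuousAt_const.mul (continuousAt_const.add
      (continuousAt_const.mul (hτ t (hsub ht)).continuousAt))).continuousWithinAt
  obtain ⟨C₁, hC₁⟩ := isCompact_Icc.exists_bound_of_continuousOn hcα
  obtain ⟨C₂, hC₂⟩ := isCompact_Icc.exists_bound_of_continuousOn hcτ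
  have hC₁0 : 0 ≤ C₁ := le_trans (norm_nonneg _) (hC₁ x ⟨le_refl x, hxy⟩)
  have hC₂0 : 0 ≤ C₂ := le_trans (norm_nonneg _) (hC₂ x ⟨le_refl x, hxy⟩)
  refine ⟨1 + C₁ + C₂, fun t ht => ?_⟩
  set V := (c + a * τ t) * α t - η t with hV
  have hnF : ‖((τ t : ℝ), (V : ℝ))‖ = max ‖τ t‖ ‖V‖ := rfl
  have hτle : ‖τ t‖ ≤ ‖((τ t : ℝ), (V : ℝ))‖ := by rw [hnF]; exact le_max_left _ _
  have hVle : ‖V‖ ≤ ‖((τ t : ℝ), (V : ℝ))‖ := by rw [hnF]; exact le_max_right _ _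
  have hF0 : 0 ≤ ‖((τ t : ℝ), (V : ℝ))‖ := norm_nonneg _
  have h1 := hC₁ t ht
  have h2 := hC₂ t ht
  have hsecond : ‖a * V * α t + 2 * ((c + a * τ t) * τ t)‖
      ≤ C₁ * ‖V‖ + C₂ * ‖τ t‖ := by
    calc ‖a * V * α t + 2 * ((c + a * τ t) * τ t)‖
        ≤ ‖a * V * α t‖ + ‖2 * ((c + a * τ t) * τ t)‖ := norm_add_le _ _
      _ = ‖a * α t‖ * ‖V‖ + ‖2 * (c + a * τ t)‖ * ‖τ t‖ := by
          simp only [Real.norm_eq_abs, ← abs_mul]; ring_nf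
      _ ≤ C₁ * ‖V‖ + C₂ * ‖τ t‖ :=
          add_le_add (mul_le_mul_of_nonneg_right h1 (norm_nonneg _))
            (mul_le_mul_of_nonneg_right h2 (norm_nonneg _))
  have hnG : ‖((V : ℝ), (a * V * α t + 2 * ((c + a * τ t) * τ t) : ℝ))‖
      = max ‖V‖ ‖a * V * α t + 2 * ((c + a * τ t) * τ t)‖ := rfl
  rw [hnG]
  apply max_le
  · nlinarith
  · nlinarith [hsecond, mul_le_mul_of_nonneg_left hVle hC₁0,
      mul_le_mul_of_nonneg_left hτle hC₂0]

/-- Uniqueness: if `τ` and `τ'` both vanish at a point, `τ ≡ 0` on the interval. -/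
private lemma tau_trivial (ha : 0 < a)
    (hα : ∀ s ∈ Set.Ioo lo hi, HasDerivAt α (τ s) s)
    (hτ : ∀ s ∈ Set.Ioo lo hi, HasDerivAt τ ((c + a * τ s) * α s - η s) s)
    (hη : ∀ s ∈ Set.Ioo lo hi, HasDerivAt η (-((c + a * τ s) * τ s)) s)
    {z : ℝ} (hz : z ∈ Set.Ioo lo hi) (hτz : τ z = 0)
    (hVz : (c + a * τ z) * α z - η z = 0) :
    ∀ s ∈ Set.Ioo lo hi, τ s = 0 := by
  set F : ℝ → ℝ × ℝ := fun t => (τ t, (c + a * τ t) * α t - η t) with hF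
  set G : ℝ → ℝ × ℝ := fun t =>
    ((c + a * τ t) * α t - η t,
      a * ((c + a * τ t) * α t - η t) * α t + 2 * ((c + a * τ t) * τ t)) with hG
  have hFd : ∀ t ∈ Set.Ioo lo hi, HasDerivAt F (G t) t := fun t ht =>
    (hτ t ht).prodMk (hasDerivAt_V ha hα hτ hη ht)
  have hF0 : F z = 0 := by
    show (τ z, (c + a * τ z) * α z - η z) = 0
    rw [hVz, hτz]; rfl
  intro s hs
  rcases le_or_gt z s with hzs | hzs
  · have hsub : Set.Icc z s ⊆ Set.Ioo lo hi := fun t ht =>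
      ⟨lt_of_lt_of_le hz.1 ht.1, lt_of_le_of_lt ht.2 hs.2⟩
    obtain ⟨K, hK⟩ := coef_bound hα hτ hsub hzs
    have h : F s = 0 := by
      apply gron_zero_s9 hzs
        (fun t ht => ((hFd t (hsub ht)).continuousAt).continuousWithinAt)
        (fun t ht => (hFd t (hsub (Set.Ico_subset_Icc_self ht))).hasDerivWithinAt)
        ⟨K, fun t ht => hK t (Set.Ico_subset_Icc_self ht)⟩ hF0
    exact congrArg Prod.fst h
  · -- backward in time: reflect
    have hsub : Set.Icc s z ⊆ Set.Ioo lo hi := fun t ht =>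
      ⟨lt_of_lt_of_le hs.1 ht.1, lt_of_le_of_lt ht.2 hz.2⟩
    obtain ⟨K, hK⟩ := coef_bound hα hτ hsub hzs.le
    have hmap : ∀ t ∈ Set.Icc (-z) (-s), -t ∈ Set.Icc s z := fun t ht =>
      ⟨by linarith [ht.2], by linarith [ht.1]⟩
    have h : (fun t => F (-t)) (-s) = 0 := by
      apply gron_zero_s9 (y := -s) (by linarith)
        (fun t ht => ((hFd (-t) (hsub (hmap t ht))).continuousAt.comp
          (continuousAt_neg (x := t))).continuousWithinAt)
        (G := fun t => -G (-t))
      · intro t ht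
        have ht' : -t ∈ Set.Icc s z := hmap t (Set.Ico_subset_Icc_self ht)
        have hd := (hFd (-t) (hsub ht')).scomp t (hasDerivAt_neg t)
        simp only [neg_smul, one_smul] at hd
        exact hd.hasDerivWithinAt
      · refine ⟨K, fun t ht => ?_⟩
        have ht' : -t ∈ Set.Icc s z := hmap t (Set.Ico_subset_Icc_self ht)
        have := hK (-t) ht'
        simp only [norm_neg]; exact this
      · simpa using hF0
    simpa using congrArg Prod.fst h

/-- There cannot be three ordered zeros of `τ`. -/
private lemma no_three_zeros (ha : 0 < a) (hc : 0 ≤ c)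
    (hα : ∀ s ∈ Set.Ioo lo hi, HasDerivAt α (τ s) s)
    (hτ : ∀ s ∈ Set.Ioo lo hi, HasDerivAt τ ((c + a * τ s) * α s - η s) s)
    (hη : ∀ s ∈ Set.Ioo lo hi, HasDerivAt η (-((c + a * τ s) * τ s)) s)
    (hnt : ¬ ∃ b : ℝ, ∀ s ∈ Set.Ioo lo hi, τ s = b)
    {p q r : ℝ} (hp : p ∈ Set.Ioo lo hi) (hq : q ∈ Set.Ioo lo hi) (hr : r ∈ Set.Ioo lo hi)
    (hpq : p < q) (hqr : q < r) (hτp : τ p = 0) (hτq : τ q = 0) (hτr : τ r = 0) : False := by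
  rcases lt_trichotomy ((c + a * τ q) * α q - η q) 0 with hV | hV | hV
  · -- τ' (q) < 0 : τ > 0 just left of q, find last "zero" before q
    have hev := pos_left_of_deriv_neg (hτ q hq) hτq hV
    obtain ⟨l, hl, hsub2⟩ := mem_nhdsLT_iff_exists_Ioo_subset.1 hev
    have hlq : l < q := hl
    have hpl : p ≤ l := by
      by_contra hcon
      push_neg at hcon
      have : 0 < τ p := hsub2 ⟨hcon, hpq⟩
      rw [hτp] at this; exact lt_irrefl 0 this
    set c' := (l + q) / 2 with hc'
    have hlc' : l < c' := by simp only [hc']; linarith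
    have hc'q : c' < q := by simp only [hc']; linarith
    have hIccsub : Set.Icc p c' ⊆ Set.Ioo lo hi := fun t ht =>
      ⟨lt_of_lt_of_le hp.1 ht.1, lt_trans (lt_of_le_of_lt ht.2 hc'q) hq.2⟩
    have hcont : ContinuousOn τ (Set.Icc p c') := fun t ht =>
      ((hτ t (hIccsub ht)).continuousAt).continuousWithinAt
    set K := Set.Icc p c' ∩ τ ⁻¹' Set.Iic 0 with hK
    have hKc : IsClosed K := hcont.preimage_isClosed_of_isClosed isClosed_Icc isClosed_Iic
    have hKne : K.Nonempty := ⟨p, ⟨le_refl p, le_trans hpl hlc'.le⟩, le_of_eq hτp⟩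
    have hKbdd : BddAbove K := ⟨c', fun t ht => ht.1.2⟩
    set z := sSup K with hz
    have hzK : z ∈ K := hKc.csSup_mem hKne hKbdd
    have hzIoo : z ∈ Set.Ioo lo hi := hIccsub hzK.1
    have hzq : z < q := lt_of_le_of_lt hzK.1.2 hc'q
    have hpos : ∀ t ∈ Set.Ioo z q, 0 < τ t := by
      intro t ht
      rcases lt_or_ge c' t with htc | htc
      · exact hsub2 ⟨lt_trans hlc' htc, ht.2⟩
      · have htK : t ∉ K := fun htK => absurd (le_csSup hKbdd htK) (not_le.2 ht.1)
        have htIcc : t ∈ Set.Icc p c' := ⟨le_trans hzK.1.1 ht.1.le, htc⟩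
        by_contra hcon2
        exact htK ⟨htIcc, le_of_not_gt fun lp => hcon2 lp⟩
    exact no_pos_arch ha hc hα hτ hη hzIoo hq hzq hzK.2 (le_of_eq hτq) hpos
  · -- τ' (q) = 0 : τ ≡ 0, contradicting non-triviality
    exact hnt ⟨0, tau_trivial ha hα hτ hη hq hτq hV⟩
  · -- τ' (q) > 0 : τ > 0 after q, contradicting τ r = 0
    have := tau_pos_after ha hc hα hτ hη hq hτq hV hr hqr
    rw [hτr] at this; exact lt_irrefl 0 this

end main

/-- For `c ≥ 0`: if `τ(s₀) = 0` with `τ'(s₀) > 0` then `τ > 0` after `s₀`;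
consequently `τ` has at most two zeros. -/
theorem stmt_9 (lo hi a c : ℝ) (ha : 0 < a) (hc : 0 ≤ c) (α τ η : ℝ → ℝ)
    (hα : ∀ s ∈ Set.Ioo lo hi, HasDerivAt α (τ s) s)
    (hτ : ∀ s ∈ Set.Ioo lo hi, HasDerivAt τ ((c + a * τ s) * α s - η s) s)
    (hη : ∀ s ∈ Set.Ioo lo hi, HasDerivAt η (-((c + a * τ s) * τ s)) s)
    (hnt : ¬ ∃ b : ℝ, ∀ s ∈ Set.Ioo lo hi, τ s = b) :
    (∀ s₀ ∈ Set.Ioo lo hi, τ s₀ = 0 → 0 < (c + a * τ s₀) * α s₀ - η s₀ →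
      ∀ s ∈ Set.Ioo lo hi, s₀ < s → 0 < τ s) ∧
    (∀ s₁ ∈ Set.Ioo lo hi, ∀ s₂ ∈ Set.Ioo lo hi, ∀ s₃ ∈ Set.Ioo lo hi,
      τ s₁ = 0 → τ s₂ = 0 → τ s₃ = 0 → s₁ = s₂ ∨ s₁ = s₃ ∨ s₂ = s₃) := by
  constructor
  · intro s₀ hs₀ h0 h1 s hs hlt
    exact tau_pos_after ha hc hα hτ hη hs₀ h0 h1 hs hlt
  · intro s₁ h₁ s₂ h₂ s₃ h₃ z₁ z₂ z₃
    by_contra hcon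
    push_neg at hcon
    obtain ⟨h12, h13, h23⟩ := hcon
    have no3 : ∀ {p q r : ℝ}, p ∈ Set.Ioo lo hi → q ∈ Set.Ioo lo hi → r ∈ Set.Ioo lo hi →
        p < q → q < r → τ p = 0 → τ q = 0 → τ r = 0 → False :=
      fun hp hq hr hpq hqr zp zq zr => no_three_zeros ha hc hα hτ hη hnt hp hq hr hpq hqr zp zq zr
    rcases lt_trichotomy s₁ s₂ with o12 | oe | o21
    · rcases lt_trichotomy s₂ s₃ with o23 | oe | o32
      · exact no3 h₁ h₂ h₃ o12 o23 z₁ z₂ z₃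
      · exact h23 oe
      · rcases lt_trichotomy s₁ s₃ with o13 | oe | o31
        · exact no3 h₁ h₃ h₂ o13 o32 z₁ z₃ z₂
        · exact h13 oe
        · exact no3 h₃ h₁ h₂ o31 o12 z₃ z₁ z₂
    · exact h12 oe
    · rcases lt_trichotomy s₁ s₃ with o13 | oe | o31
      · exact no3 h₂ h₁ h₃ o21 o13 z₂ z₁ z₃
      · exact h13 oe
      · rcases lt_trichotomy s₂ s₃ with o23 | oe | o32
        · exact no3 h₂ h₃ h₁ o23 o31 z₂ z₃ z₁
        · exact h23 oe
        · exact no3 h₃ h₂ h₁ o32 o21 z₃ z₂ z₁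
end
end

section
/- For a > 0 and c < 0, the vector field Φ(α, τ, η) = (τ, (c + aτ)α - η, -(c + aτ)τ) restricted to the surface H = {2αη + τ² = -1, α < 0} has exactly one singular point p = (-1/√(-2c), 0, -c/√(-2c)), and the eigenvalues of the linearization dΦ_p restricted to the tangent plane T_pH are λ = (-a ± √(a² - 16c²)) / (2√(-2c)); these are real iff 4|c| ≤ a. -/
noncomputable section

/-- For `a > 0`, `c < 0`, the vector field `Φ(α,τ,η) = (τ, (c+aτ)α-η, -(c+aτ)τ)` on
`H = {2αη + τ² = -1, α < 0}` has the unique singular point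
`p = (-1/√(-2c), 0, -c/√(-2c))`; in the basis of the tangent plane
(`w = (w₁, w₂, -c w₁)`) the linearization acts as `(w₁,w₂) ↦ (w₂, 2c w₁ + a p₁ w₂)`,
whose eigenvalues are `λ = (-a ± √(a² - 16c²))/(2√(-2c))`; they are real iff `4|c| ≤ a`. -/
theorem stmt_10 (a c : ℝ) (ha : 0 < a) (hc : c < 0)
    (Φ : ℝ × ℝ × ℝ → ℝ × ℝ × ℝ)
    (hΦ : Φ = fun q => (q.2.1, (c + a * q.2.1) * q.1 - q.2.2, -((c + a * q.2.1) * q.2.1)))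
    (H : Set (ℝ × ℝ × ℝ))
    (hH : H = {q | 2 * q.1 * q.2.2 + q.2.1 ^ 2 = -1 ∧ q.1 < 0})
    (p : ℝ × ℝ × ℝ)
    (hp : p = (-1 / Real.sqrt (-2 * c), 0, -c / Real.sqrt (-2 * c))) :
    (∀ q ∈ H, Φ q = 0 ↔ q = p) ∧
    (∀ w₁ w₂ : ℝ, (fderiv ℝ Φ p) (w₁, w₂, -c * w₁)
        = (w₂, 2 * c * w₁ + a * p.1 * w₂, -c * w₂)) ∧
    (∀ lam : ℂ,
      (∃ w₁ w₂ : ℂ, (w₁, w₂) ≠ (0, 0) ∧ w₂ = lam * w₁ ∧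
          ((2 * c : ℝ) : ℂ) * w₁ + ((a * p.1 : ℝ) : ℂ) * w₂ = lam * w₂) ↔
        (lam = ((-a : ℂ) + ((a ^ 2 - 16 * c ^ 2 : ℝ) : ℂ) ^ ((1 : ℂ) / 2))
              / (2 * (Real.sqrt (-2 * c) : ℂ)) ∨
         lam = ((-a : ℂ) - ((a ^ 2 - 16 * c ^ 2 : ℝ) : ℂ) ^ ((1 : ℂ) / 2))
              / (2 * (Real.sqrt (-2 * c) : ℂ)))) ∧
    ((((a ^ 2 - 16 * c ^ 2 : ℝ) : ℂ) ^ ((1 : ℂ) / 2)).im = 0 ↔ 4 * |c| ≤ a) := by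
  refine ⟨?_, ?_, ?_⟩
  · -- unique singular point
    have h2c : (0:ℝ) < -2 * c := by linarith
    have hs : 0 < Real.sqrt (-2 * c) := Real.sqrt_pos.2 h2c
    have hs2 : Real.sqrt (-2 * c) ^ 2 = -2 * c := Real.sq_sqrt h2c.le
    subst hΦ hH hp
    rintro ⟨x, y, z⟩ ⟨hq1, hq2⟩
    simp only [Set.mem_setOf_eq] at hq1 hq2
    simp only [Prod.ext_iff, Prod.mk.injEq, Prod.fst_zero, Prod.snd_zero]
    constructor
    · rintro ⟨h1, h2, h3⟩
      subst h1
      have hz : z = c * x := by linarith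
      subst hz
      have hx2 : x ^ 2 * (-2 * c) = 1 := by nlinarith
      have hy2 : (1 / Real.sqrt (-2 * c)) ^ 2 * (-2 * c) = 1 := by
        rw [div_pow, one_pow, hs2]; field_simp; exact div_self (by linarith)
      have hx2' : x ^ 2 = (1 / Real.sqrt (-2 * c)) ^ 2 :=
        mul_right_cancel₀ (ne_of_gt h2c) (by rw [hx2, hy2])
      have hfac : (x + 1 / Real.sqrt (-2 * c)) * (x - 1 / Real.sqrt (-2 * c)) = 0 := by
        linear_combination hx2'
      have h1s : 0 < 1 / Real.sqrt (-2 * c) := by positivity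
      have hneg : (-1:ℝ) / Real.sqrt (-2 * c) = -(1 / Real.sqrt (-2 * c)) := by ring
      have hx : x = -1 / Real.sqrt (-2 * c) := by
        rcases mul_eq_zero.1 hfac with h | h
        · rw [hneg]; linarith
        · linarith
      subst hx
      refine ⟨rfl, rfl, by ring⟩
    · rintro ⟨h1, h2, h3⟩
      subst h1 h2 h3
      refine ⟨rfl, by ring, by ring⟩
  · -- linearization on the tangent plane
    have hτ : HasFDerivAt (fun q : ℝ × ℝ × ℝ => q.2.1)
        ((ContinuousLinearMap.fst ℝ ℝ ℝ).comp (ContinuousLinearMap.snd ℝ ℝ (ℝ × ℝ))) p :=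
      hasFDerivAt_fst.comp p hasFDerivAt_snd
    have hα : HasFDerivAt (fun q : ℝ × ℝ × ℝ => q.1) (ContinuousLinearMap.fst ℝ ℝ (ℝ × ℝ)) p :=
      hasFDerivAt_fst
    have hη : HasFDerivAt (fun q : ℝ × ℝ × ℝ => q.2.2)
        ((ContinuousLinearMap.snd ℝ ℝ ℝ).comp (ContinuousLinearMap.snd ℝ ℝ (ℝ × ℝ))) p :=
      hasFDerivAt_snd.comp p hasFDerivAt_snd
    have hF := (hτ.prodMk (((((hτ.const_mul a).const_add c).mul hα).sub hη).prodMk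
        ((((hτ.const_mul a).const_add c).mul hτ).neg)))
    rw [hΦ]
    rw [HasFDerivAt.fderiv (f := fun q : ℝ × ℝ × ℝ => (q.2.1, (c + a * q.2.1) * q.1 - q.2.2, -((c + a * q.2.1) * q.2.1))) hF]
    intro w₁ w₂
    subst hp
    simp [ContinuousLinearMap.prod_apply, ContinuousLinearMap.comp_apply,
      ContinuousLinearMap.smul_apply, ContinuousLinearMap.add_apply, ContinuousLinearMap.sub_apply,
      ContinuousLinearMap.neg_apply, Prod.ext_iff]
    ring
  · -- eigenvalues
    have h2c : (0:ℝ) < -2 * c := by linarith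
    have hs : 0 < Real.sqrt (-2 * c) := Real.sqrt_pos.2 h2c
    set s : ℝ := Real.sqrt (-2 * c) with hsdef
    have hsC : (s : ℂ) ≠ 0 := by exact_mod_cast hs.ne'
    have hs2 : (s : ℂ) ^ 2 = -2 * (c : ℂ) := by
      rw [← Complex.ofReal_pow, hsdef, Real.sq_sqrt h2c.le]; push_cast; ring
    set d : ℂ := ((a ^ 2 - 16 * c ^ 2 : ℝ) : ℂ) ^ ((1 : ℂ) / 2) with hddef
    have hd : d ^ 2 = (a:ℂ) ^ 2 - 16 * (c:ℂ) ^ 2 := by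
      have : d ^ 2 = ((a ^ 2 - 16 * c ^ 2 : ℝ) : ℂ) := by
        rw [hddef]
        by_cases hz : ((a ^ 2 - 16 * c ^ 2 : ℝ) : ℂ) = 0
        · rw [hz, Complex.zero_cpow (by norm_num)]; ring
        · rw [sq, ← Complex.cpow_add _ _ hz]; norm_num
      rw [this]; push_cast; ring
    have hP : ((a * p.1 : ℝ) : ℂ) = -(a : ℂ) / (s : ℂ) := by
      rw [hp]; push_cast; field_simp
    have key : ∀ l : ℂ, (l - ((-a : ℂ) + d) / (2 * (s:ℂ))) * (l - ((-a : ℂ) - d) / (2 * (s:ℂ)))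
        = l ^ 2 - (-(a:ℂ)/(s:ℂ)) * l - 2 * (c:ℂ) := by
      intro l
      field_simp
      linear_combination (-1:ℂ) * hd + (8*(c:ℂ)) * hs2
    have h2cast : ((2 * c : ℝ) : ℂ) = 2 * (c:ℂ) := by push_cast; ring
    constructor
    · intro lam
      constructor
      · rintro ⟨w₁, w₂, hne, hw2, heq⟩
        have hw1 : w₁ ≠ 0 := by
          rintro rfl
          simp at hw2
          exact hne (by simp [hw2])
        rw [hP, hw2, h2cast] at heq
        have h0 : (lam ^ 2 - (-(a:ℂ)/(s:ℂ)) * lam - 2 * (c:ℂ)) * w₁ = 0 := by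
          linear_combination -heq
        have hchar := (mul_eq_zero.1 h0).resolve_right hw1
        rw [← key] at hchar
        rcases mul_eq_zero.1 hchar with h | h
        · exact Or.inl (by linear_combination h)
        · exact Or.inr (by linear_combination h)
      · rintro (h | h) <;>
        · refine ⟨1, lam, by simp, (mul_one lam).symm, ?_⟩
          rw [hP, h2cast, h]
          linear_combination key (((-a : ℂ) + d) / (2 * (s:ℂ)))
    · constructor
      · intro him
        have hD : (0:ℝ) ≤ a ^ 2 - 16 * c ^ 2 := by
          have h' := congrArg Complex.re hd
          simp [pow_two, Complex.mul_re, him] at h'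
          nlinarith [sq_nonneg d.re, h']
        nlinarith [abs_nonneg c, sq_abs c]
      · intro hle
        have hD : (0:ℝ) ≤ a ^ 2 - 16 * c ^ 2 := by nlinarith [abs_nonneg c, sq_abs c]
        have : ((a ^ 2 - 16 * c ^ 2 : ℝ) : ℂ) ^ ((1 : ℂ) / 2)
            = (((a ^ 2 - 16 * c ^ 2 : ℝ) ^ ((1:ℝ)/2) : ℝ) : ℂ) := by
          rw [Complex.ofReal_cpow hD]
          norm_num
        rw [hddef, this, Complex.ofReal_im]
end
end

section
/- Let a > 0, c < 0 and let (α, τ, η) be a solution of α' = τ, τ' = (c + aτ)α - η, η' = -(c + aτ)τ with 2α(s)η(s) + τ(s)² = -1, α(s) < 0, η(s) > 0 for all s in its maximal interval. Then the function g = cα + η is positive and non-increasing, and for any s̄ in the domain one has the bounds 0 ≤ cα(s) ≤ g(s̄) and 0 ≤ η(s) ≤ g(s̄) for all s > s̄; in particular α, η, and τ are bounded on (s̄, ω₊). -/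
noncomputable section

/-- For `a > 0`, `c < 0` and a solution staying in `H` (`2αη + τ² = -1`, `α < 0`, `η > 0`),
the function `g = cα + η` is positive and non-increasing; for any `s̄` in the domain,
`0 ≤ cα(s) ≤ g(s̄)` and `0 ≤ η(s) ≤ g(s̄)` for `s > s̄`, and `α`, `τ`, `η` are bounded
on `(s̄, ω₊)`. -/
theorem stmt_13 (a c : ℝ) (ha : 0 < a) (hc : c < 0) (wlo whi : EReal) (α τ η : ℝ → ℝ)
    (hα : ∀ s : ℝ, wlo < (s : EReal) → (s : EReal) < whi → HasDerivAt α (τ s) s)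
    (hτ : ∀ s : ℝ, wlo < (s : EReal) → (s : EReal) < whi →
      HasDerivAt τ ((c + a * τ s) * α s - η s) s)
    (hη : ∀ s : ℝ, wlo < (s : EReal) → (s : EReal) < whi →
      HasDerivAt η (-((c + a * τ s) * τ s)) s)
    (hH : ∀ s : ℝ, wlo < (s : EReal) → (s : EReal) < whi →
      2 * α s * η s + (τ s) ^ 2 = -1 ∧ α s < 0 ∧ 0 < η s) :
    (∀ s : ℝ, wlo < (s : EReal) → (s : EReal) < whi → 0 < c * α s + η s) ∧
    (∀ s t : ℝ, wlo < (s : EReal) → (s : EReal) < whi → wlo < (t : EReal) → (t : EReal) < whi →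
      s ≤ t → c * α t + η t ≤ c * α s + η s) ∧
    (∀ sb : ℝ, wlo < (sb : EReal) → (sb : EReal) < whi →
      ∀ s : ℝ, (s : EReal) < whi → sb < s →
        0 ≤ c * α s ∧ c * α s ≤ c * α sb + η sb ∧ 0 ≤ η s ∧ η s ≤ c * α sb + η sb) ∧
    (∀ sb : ℝ, wlo < (sb : EReal) → (sb : EReal) < whi →
      ∃ M : ℝ, ∀ s : ℝ, (s : EReal) < whi → sb < s →
        |α s| ≤ M ∧ |τ s| ≤ M ∧ |η s| ≤ M) := by
  set g : ℝ → ℝ := fun s => c * α s + η s with hg_def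
  have hg : ∀ u : ℝ, wlo < (u : EReal) → (u : EReal) < whi →
      HasDerivAt g (-(a * τ u ^ 2)) u := by
    intro u h1 h2
    have h : HasDerivAt (fun y => c * α y + η y) (c * τ u + -((c + a * τ u) * τ u)) u :=
      ((hα u h1 h2).const_mul c).add (hη u h1 h2)
    convert h using 1
    ring
  have hpos : ∀ s : ℝ, wlo < (s : EReal) → (s : EReal) < whi → 0 < g s := by
    intro s h1 h2
    obtain ⟨_, hα0, hη0⟩ := hH s h1 h2
    have : 0 < c * α s := mul_pos_of_neg_of_neg hc hα0
    simp only [hg_def]; linarith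
  have hmono : ∀ s t : ℝ, wlo < (s : EReal) → (s : EReal) < whi →
      wlo < (t : EReal) → (t : EReal) < whi → s ≤ t → g t ≤ g s := by
    intro s t hs1 _ _ ht2 hst
    have hdom : ∀ u : ℝ, u ∈ Set.Icc s t → wlo < (u : EReal) ∧ (u : EReal) < whi := by
      intro u hu
      exact ⟨lt_of_lt_of_le hs1 (EReal.coe_le_coe_iff.2 hu.1),
        lt_of_le_of_lt (EReal.coe_le_coe_iff.2 hu.2) ht2⟩
    have hanti : AntitoneOn g (Set.Icc s t) := by
      apply antitoneOn_of_deriv_nonpos (convex_Icc s t)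
      · intro u hu
        exact ((hg u (hdom u hu).1 (hdom u hu).2).continuousAt).continuousWithinAt
      · intro u hu
        rw [interior_Icc] at hu
        exact ((hg u (hdom u ⟨hu.1.le, hu.2.le⟩).1
          (hdom u ⟨hu.1.le, hu.2.le⟩).2).differentiableAt).differentiableWithinAt
      · intro u hu
        rw [interior_Icc] at hu
        rw [(hg u (hdom u ⟨hu.1.le, hu.2.le⟩).1 (hdom u ⟨hu.1.le, hu.2.le⟩).2).deriv]
        nlinarith [sq_nonneg (τ u)]
    exact hanti ⟨le_refl s, hst⟩ ⟨hst, le_refl t⟩ hst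
  have hbnd : ∀ sb : ℝ, wlo < (sb : EReal) → (sb : EReal) < whi →
      ∀ s : ℝ, (s : EReal) < whi → sb < s →
        0 ≤ c * α s ∧ c * α s ≤ g sb ∧ 0 ≤ η s ∧ η s ≤ g sb := by
    intro sb hb1 hb2 s hs2 hss
    have hs1 : wlo < (s : EReal) := lt_trans hb1 (EReal.coe_lt_coe_iff.2 hss)
    obtain ⟨_, hα0, hη0⟩ := hH s hs1 hs2
    have hca : 0 < c * α s := mul_pos_of_neg_of_neg hc hα0
    have hgs : g s ≤ g sb := hmono sb s hb1 hb2 hs1 hs2 hss.le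
    simp only [hg_def] at hgs ⊢
    refine ⟨hca.le, by linarith, hη0.le, by linarith⟩
  refine ⟨hpos, hmono, hbnd, ?_⟩
  intro sb hb1 hb2
  obtain ⟨G, hG_def⟩ : ∃ G : ℝ, G = g sb := ⟨_, rfl⟩
  have hG0 : 0 < G := hG_def ▸ hpos sb hb1 hb2
  refine ⟨G / (-c) + G + Real.sqrt (2 * G ^ 2 / (-c)), ?_⟩
  intro s hs2 hss
  have hs1 : wlo < (s : EReal) := lt_trans hb1 (EReal.coe_lt_coe_iff.2 hss)
  obtain ⟨hH1, hα0, hη0⟩ := hH s hs1 hs2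
  obtain ⟨h1, h2, h3, h4⟩ := hbnd sb hb1 hb2 s hs2 hss
  rw [← hG_def] at h2 h4
  have hcpos : 0 < -c := by linarith
  have hαb : -α s ≤ G / (-c) := by
    rw [le_div_iff₀ hcpos]
    nlinarith
  have hsqnn : 0 ≤ Real.sqrt (2 * G ^ 2 / (-c)) := Real.sqrt_nonneg _
  have hGdiv : 0 ≤ G / (-c) := le_trans (neg_nonneg.2 hα0.le) hαb
  refine ⟨?_, ?_, ?_⟩
  · have : |α s| = -α s := abs_of_neg hα0
    rw [this]; linarith
  · have hτsq : τ s ^ 2 ≤ 2 * G ^ 2 / (-c) := by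
      have h5 : τ s ^ 2 = -1 - 2 * α s * η s := by linarith
      have h6 : (-α s) * η s ≤ (G / (-c)) * G :=
        mul_le_mul hαb h4 hη0.le hGdiv
      have : 2 * ((G / (-c)) * G) = 2 * G ^ 2 / (-c) := by ring
      nlinarith
    have := Real.abs_le_sqrt hτsq
    linarith
  · have : |η s| = η s := abs_of_pos hη0
    rw [this]; linarith
end
end

section
/- With X, T, Y, k a lightcone frame (T = X', T' = kX - Y, Y' = -kT, ⟨X,X⟩=⟨Y,Y⟩=0, ⟨T,T⟩=⟨X,Y⟩=1, ⟨X,T⟩=⟨T,Y⟩=0) and k(s) ≠ 0 for all s, the curve -Y has squared speed ⟨Y',Y'⟩ = k², so -Y is spacelike, and its arc-length curvature equals 1/k. Consequently X solves the self-similar CF equation c + ⟨T, v⟩ = k if and only if -Y solves the self-similar ICF equation c + ⟨T̃, ṽ⟩ = 1/k̃ for appropriate tangent T̃ and curvature k̃ of -Y. -/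
noncomputable section

/-- Minkowski inner product on ℝ³. -/
def mink (u v : ℝ × ℝ × ℝ) : ℝ := -(u.1 * v.1) + u.2.1 * v.2.1 + u.2.2 * v.2.2

lemma mink_smul_left (a : ℝ) (u v : ℝ × ℝ × ℝ) : mink (a • u) v = a * mink u v := by
  simp [mink, Prod.smul_def, smul_eq_mul]; ring

lemma mink_smul_right (a : ℝ) (u v : ℝ × ℝ × ℝ) : mink u (a • v) = a * mink u v := by
  simp [mink, Prod.smul_def, smul_eq_mul]; ring

lemma mink_add_left (u v w : ℝ × ℝ × ℝ) : mink (u + v) w = mink u w + mink v w := by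
  simp [mink]; ring

lemma mink_add_right (u v w : ℝ × ℝ × ℝ) : mink u (v + w) = mink u v + mink u w := by
  simp [mink]; ring

lemma mink_sub_left (u v w : ℝ × ℝ × ℝ) : mink (u - v) w = mink u w - mink v w := by
  simp [mink]; ring

lemma mink_sub_right (u v w : ℝ × ℝ × ℝ) : mink u (v - w) = mink u v - mink u w := by
  simp [mink]; ring

lemma mink_neg_right (u v : ℝ × ℝ × ℝ) : mink u (-v) = -mink u v := by
  simp [mink]; ring

lemma mink_comm (u v : ℝ × ℝ × ℝ) : mink u v = mink v u := by
  simp [mink]; ring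

lemma sign_const {lo hi : ℝ} {k : ℝ → ℝ}
    (hc : ContinuousOn k (Set.Ioo lo hi))
    (hnz : ∀ s ∈ Set.Ioo lo hi, k s ≠ 0)
    {a b : ℝ} (ha : a ∈ Set.Ioo lo hi) (hb : b ∈ Set.Ioo lo hi)
    (hka : k a < 0) : k b < 0 := by
  by_contra h
  push_neg at h
  have hkb : 0 < k b := lt_of_le_of_ne h (Ne.symm (hnz b hb))
  rcases le_total a b with hab | hab
  · have hsub : Set.Icc a b ⊆ Set.Ioo lo hi := Set.Icc_subset _ ha hb
    have := intermediate_value_Icc hab (hc.mono hsub)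
    have h0 : (0 : ℝ) ∈ Set.Icc (k a) (k b) := ⟨hka.le, hkb.le⟩
    obtain ⟨t, ht, ht0⟩ := this h0
    exact hnz t (hsub ht) ht0
  · have hsub : Set.Icc b a ⊆ Set.Ioo lo hi := Set.Icc_subset _ hb ha
    have := intermediate_value_Icc' hab (hc.mono hsub)
    have h0 : (0 : ℝ) ∈ Set.Icc (k a) (k b) := ⟨hka.le, hkb.le⟩
    obtain ⟨t, ht, ht0⟩ := this h0
    exact hnz t (hsub ht) ht0

/-- With a lightcone frame and `k ≠ 0`: the associated curve `-Y` has
`⟨(-Y)', (-Y)'⟩ = k² > 0` (spacelike), its curvature computed by the cone curvature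
formula equals `1/k`, and `X` is a self-similar CF solution (`∃ v, c + ⟨T,v⟩ = k`)
iff `-Y` is a self-similar ICF solution (`∃ ṽ, c + ⟨T̃,ṽ⟩ = 1/k̃` with `T̃` the unit
tangent of `-Y` and `k̃ = 1/k`). -/
theorem stmt_16 (lo hi c : ℝ) (X T Y : ℝ → ℝ × ℝ × ℝ) (k k' : ℝ → ℝ)
    (hX : ∀ s ∈ Set.Ioo lo hi, HasDerivAt X (T s) s)
    (hT : ∀ s ∈ Set.Ioo lo hi, HasDerivAt T (k s • X s - Y s) s)
    (hY : ∀ s ∈ Set.Ioo lo hi, HasDerivAt Y (-(k s) • T s) s)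
    (hk : ∀ s ∈ Set.Ioo lo hi, HasDerivAt k (k' s) s)
    (hXX : ∀ s ∈ Set.Ioo lo hi, mink (X s) (X s) = 0)
    (hYY : ∀ s ∈ Set.Ioo lo hi, mink (Y s) (Y s) = 0)
    (hTT : ∀ s ∈ Set.Ioo lo hi, mink (T s) (T s) = 1)
    (hXY : ∀ s ∈ Set.Ioo lo hi, mink (X s) (Y s) = 1)
    (hXT : ∀ s ∈ Set.Ioo lo hi, mink (X s) (T s) = 0)
    (hTY : ∀ s ∈ Set.Ioo lo hi, mink (T s) (Y s) = 0)
    (hknz : ∀ s ∈ Set.Ioo lo hi, k s ≠ 0) :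
    (∀ s ∈ Set.Ioo lo hi,
      mink ((k s) • T s) ((k s) • T s) = (k s) ^ 2 ∧ 0 < (k s) ^ 2) ∧
    (∀ s ∈ Set.Ioo lo hi,
      ((mink ((k s) • T s) (k' s • T s + k s • (k s • X s - Y s))) ^ 2
          - mink ((k s) • T s) ((k s) • T s)
            * mink (k' s • T s + k s • (k s • X s - Y s))
                (k' s • T s + k s • (k s • X s - Y s)))
        / (2 * (mink ((k s) • T s) ((k s) • T s)) ^ 3) = 1 / k s) ∧
    ((∃ v : ℝ × ℝ × ℝ, ∀ s ∈ Set.Ioo lo hi, c + mink (T s) v = k s) ↔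
      (∃ vt : ℝ × ℝ × ℝ, ∀ s ∈ Set.Ioo lo hi,
        c + mink ((|k s|)⁻¹ • ((k s) • T s)) vt = 1 / (k s)⁻¹)) := by
  have hTX : ∀ s ∈ Set.Ioo lo hi, mink (T s) (X s) = 0 := fun s hs =>
    (mink_comm _ _).trans (hXT s hs)
  refine ⟨?_, ?_, ?_⟩
  · intro s hs
    constructor
    · rw [mink_smul_left, mink_smul_right, hTT s hs]; ring
    · exact pow_pos (abs_pos.mpr (hknz s hs)) 2 |>.trans_eq (by rw [sq_abs]) |>.trans_le le_rfl
  · intro s hs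
    have hknz' := hknz s hs
    simp only [mink_add_left, mink_add_right, mink_sub_left, mink_sub_right,
      mink_smul_left, mink_smul_right, hTT s hs, hXX s hs, hYY s hs, hXY s hs,
      hXT s hs, hTY s hs, hTX s hs, mink_comm (Y s) (T s), mink_comm (Y s) (X s),
      mink_comm (X s) (T s)]
    field_simp
    ring
  · have hcont : ContinuousOn k (Set.Ioo lo hi) := fun s hs =>
      (hk s hs).continuousAt.continuousWithinAt
    rcases Set.eq_empty_or_nonempty (Set.Ioo lo hi) with hemp | ⟨s0, hs0⟩
    · constructor
      · intro _; exact ⟨0, fun s hs => absurd hs (by simp [hemp])⟩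
      · intro _; exact ⟨0, fun s hs => absurd hs (by simp [hemp])⟩
    · have key : ∀ s ∈ Set.Ioo lo hi, ∀ w : ℝ × ℝ × ℝ,
          mink ((|k s|)⁻¹ • ((k s) • T s)) w
            = (|k s|)⁻¹ * (k s * mink (T s) w) := by
        intro s hs w
        rw [mink_smul_left, mink_smul_left]
      rcases lt_or_gt_of_ne (hknz s0 hs0) with hneg | hpos
      · -- k negative everywhere
        have hall : ∀ s ∈ Set.Ioo lo hi, k s < 0 := fun s hs =>
          sign_const hcont hknz hs0 hs hneg
        constructor
        · rintro ⟨v, hv⟩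
          refine ⟨-v, fun s hs => ?_⟩
          have hk' := hall s hs
          rw [key s hs, mink_neg_right, abs_of_neg hk', one_div, inv_inv]
          have hm : (-k s)⁻¹ * (k s * -(mink (T s) v)) = mink (T s) v := by
            have h2 : k s ≠ 0 := by linarith
            field_simp
          rw [hm]; exact hv s hs
        · rintro ⟨vt, hvt⟩
          refine ⟨-vt, fun s hs => ?_⟩
          have hk' := hall s hs
          have h := hvt s hs
          rw [key s hs, abs_of_neg hk', one_div, inv_inv] at h
          have hne : -k s ≠ 0 := by linarith
          have hm : (-k s)⁻¹ * (k s * mink (T s) vt) = -(mink (T s) vt) := by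
            field_simp
            rw [mul_comm (k s) (mink (T s) vt), mul_div_cancel_right₀ _ (by linarith : k s ≠ 0)]
          rw [hm] at h
          rw [mink_neg_right]; exact h
      · have hall : ∀ s ∈ Set.Ioo lo hi, 0 < k s := by
          intro s hs
          by_contra h
          push_neg at h
          have : k s < 0 := lt_of_le_of_ne h (hknz s hs)
          exact absurd (sign_const hcont hknz hs hs0 this) (by linarith)
        constructor
        · rintro ⟨v, hv⟩
          refine ⟨v, fun s hs => ?_⟩
          have hk' := hall s hs
          rw [key s hs, abs_of_pos hk', one_div, inv_inv, inv_mul_cancel_left₀ hk'.ne']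
          exact hv s hs
        · rintro ⟨vt, hvt⟩
          refine ⟨vt, fun s hs => ?_⟩
          have hk' := hall s hs
          have h := hvt s hs
          rw [key s hs, abs_of_pos hk', one_div, inv_inv,
            inv_mul_cancel_left₀ hk'.ne'] at h
          exact h
end
end

section
/- Let a > 0, c = 0 and consider the ICF-soliton system α̃' = τ̃, τ̃' = α̃/(aτ̃) - η̃ rescaled: along such solutions η̃(s) = -s/a + η̃₀ (since η̃' = -1/a when c = 0 in the ICF system η̃' = -τ̃/(aτ̃)), and with the constraint 2rα̃ + τ̃² = 0 (r = η̃ > 0), the function τ̃ as a function of r satisfies the linear ODE τ̃'(r) - τ̃(r)/(2r) = ar, whose solution with τ̃(η̃₀) = τ̃₀ is τ̃(r) = (2a r²)/3 + √r · (3τ̃₀ - 2aη̃₀²)/(3√(η̃₀)). -/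
noncomputable section

open Set in
lemma const_of_deriv_zero' {lo hi : ℝ} (f : ℝ → ℝ)
    (hf : ∀ x ∈ Set.Ioo lo hi, HasDerivAt f 0 x) {s : ℝ}
    (h0 : (0:ℝ) ∈ Set.Ioo lo hi)
    (hs : s ∈ Set.Ioo lo hi) : f s = f 0 := by
  rcases lt_trichotomy s 0 with h | h | h
  · have hsub : Icc s 0 ⊆ Ioo lo hi := fun x hx =>
      ⟨lt_of_lt_of_le hs.1 hx.1, lt_of_le_of_lt hx.2 h0.2⟩
    have := constant_of_has_deriv_right_zero
      (f := f) (a := s) (b := 0)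
      (fun x hx => ((hf x (hsub hx)).continuousAt).continuousWithinAt)
      (fun x hx => (hf x (hsub ⟨hx.1, hx.2.le⟩)).hasDerivWithinAt)
      0 ⟨h.le, le_rfl⟩
    exact this.symm ▸ rfl
  · rw [h]
  · have hsub : Icc 0 s ⊆ Ioo lo hi := fun x hx =>
      ⟨lt_of_lt_of_le h0.1 hx.1, lt_of_le_of_lt hx.2 hs.2⟩
    exact constant_of_has_deriv_right_zero
      (fun x hx => ((hf x (hsub hx)).continuousAt).continuousWithinAt)
      (fun x hx => (hf x (hsub ⟨hx.1, hx.2.le⟩)).hasDerivWithinAt)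
      s ⟨h.le, le_rfl⟩

/-- ICF soliton system with `c = 0`:  `α̃' = τ̃`, `τ̃' = α̃/(aτ̃) - η̃`, `η̃' = -1/a`,
with constraint `2α̃η̃ + τ̃² = 0`, `η̃ > 0`.  Then `η̃(s) = -s/a + η̃(0)`;
as a function of `r = η̃`, `τ̃` satisfies `dτ̃/dr = τ̃/(2r) + ar`, and explicitly
`τ̃ = 2ar²/3 + √r (3τ̃₀ - 2aη̃₀²)/(3√η̃₀)`. -/
theorem stmt_17 (a lo hi : ℝ) (ha : 0 < a) (al ta et : ℝ → ℝ)
    (h0 : (0 : ℝ) ∈ Set.Ioo lo hi)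
    (hal : ∀ s ∈ Set.Ioo lo hi, HasDerivAt al (ta s) s)
    (hta : ∀ s ∈ Set.Ioo lo hi, HasDerivAt ta (al s / (a * ta s) - et s) s)
    (het : ∀ s ∈ Set.Ioo lo hi, HasDerivAt et (-(1 / a)) s)
    (htanz : ∀ s ∈ Set.Ioo lo hi, ta s ≠ 0)
    (hetpos : ∀ s ∈ Set.Ioo lo hi, 0 < et s)
    (hcon : ∀ s ∈ Set.Ioo lo hi, 2 * al s * et s + (ta s) ^ 2 = 0) :
    (∀ s ∈ Set.Ioo lo hi, et s = -s / a + et 0) ∧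
    (∀ s ∈ Set.Ioo lo hi,
      HasDerivAt (fun r : ℝ => ta (a * (et 0 - r)))
        (ta s / (2 * et s) + a * et s) (et s)) ∧
    (∀ s ∈ Set.Ioo lo hi,
      ta s = 2 * a * (et s) ^ 2 / 3
        + Real.sqrt (et s) * ((3 * ta 0 - 2 * a * (et 0) ^ 2) / (3 * Real.sqrt (et 0)))) := by
  have ha' : a ≠ 0 := ha.ne'
  -- Part 1
  have part1 : ∀ s ∈ Set.Ioo lo hi, et s = -s / a + et 0 := by
    intro s hs
    have hder : ∀ x ∈ Set.Ioo lo hi, HasDerivAt (fun s => et s + s / a) 0 x := by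
      intro x hx
      have : HasDerivAt (fun s : ℝ => et s + s / a) (-(1/a) + 1/a) x :=
        (het x hx).add ((hasDerivAt_id x).div_const a)
      simpa using this
    have h2 := const_of_deriv_zero' _ hder h0 hs
    simp only [zero_div, add_zero] at h2
    rw [neg_div]
    linarith [h2]
  -- Part 2
  have part2 : ∀ s ∈ Set.Ioo lo hi,
      HasDerivAt (fun r : ℝ => ta (a * (et 0 - r)))
        (ta s / (2 * et s) + a * et s) (et s) := by
    intro s hs
    have hpt : a * (et 0 - et s) = s := by
      rw [part1 s hs]; field_simp; ring
    have hinner : HasDerivAt (fun r : ℝ => a * (et 0 - r)) (-a) (et s) := by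
      have : HasDerivAt (fun r : ℝ => a * (et 0 - r)) (a * (0 - 1)) (et s) :=
        ((hasDerivAt_const (et s) (et 0)).sub (hasDerivAt_id (et s))).const_mul a
      simpa using this
    have houter : HasDerivAt ta (al s / (a * ta s) - et s) (a * (et 0 - et s)) := by
      rw [hpt]; exact hta s hs
    have hcomp := HasDerivAt.comp (et s) houter hinner
    have heq : (al s / (a * ta s) - et s) * (-a) = ta s / (2 * et s) + a * et s := by
      have hc := hcon s hs
      have htn := htanz s hs
      have hen := (hetpos s hs).ne'
      have hA : al s = -(ta s)^2 / (2 * et s) := by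
        field_simp
        linarith
      rw [hA]
      field_simp
      ring
    rw [heq] at hcomp
    exact hcomp
  refine ⟨part1, part2, ?_⟩
  -- Part 3
  set g : ℝ → ℝ := fun s => (ta s - 2 * a * (et s) ^ 2 / 3) / Real.sqrt (et s) with hg
  have hgder : ∀ x ∈ Set.Ioo lo hi, HasDerivAt g 0 x := by
    intro x hx
    have hu : 0 < et x := hetpos x hx
    have hsq : 0 < Real.sqrt (et x) := Real.sqrt_pos.mpr hu
    have htn := htanz x hx
    have hnum : HasDerivAt (fun s => ta s - 2 * a * (et s) ^ 2 / 3)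
        ((al x / (a * ta x) - et x) - 2 * a * (2 * et x ^ 1 * (-(1/a))) / 3) x :=
      (hta x hx).sub ((((het x hx).pow 2).const_mul (2*a)).div_const 3)
    have hden : HasDerivAt (fun s => Real.sqrt (et s))
        (1 / (2 * Real.sqrt (et x)) * (-(1/a))) x :=
      (Real.hasDerivAt_sqrt hu.ne').comp x (het x hx)
    have hdiv := hnum.div hden hsq.ne'
    have hc := hcon x hx
    have hA : al x = -(ta x)^2 / (2 * et x) := by
      field_simp; linarith
    have hzero : (((al x / (a * ta x) - et x) - 2 * a * (2 * et x ^ 1 * (-(1/a))) / 3)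
        * Real.sqrt (et x) - (ta x - 2 * a * (et x) ^ 2 / 3)
        * (1 / (2 * Real.sqrt (et x)) * (-(1/a)))) / Real.sqrt (et x) ^ 2 = 0 := by
      rw [div_eq_zero_iff]
      left
      set w := Real.sqrt (et x) with hwdef
      have hw : et x = w ^ 2 := (Real.sq_sqrt hu.le).symm
      rw [hA, hw]
      have hwne : w ≠ 0 := hsq.ne'
      field_simp
      ring
    rw [hzero] at hdiv
    exact hdiv
  intro s hs
  have hB := const_of_deriv_zero' g hgder h0 hs
  have hu : 0 < et s := hetpos s hs
  have hu0 : 0 < et 0 := hetpos 0 h0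
  have hsq : 0 < Real.sqrt (et s) := Real.sqrt_pos.mpr hu
  have hsq0 : 0 < Real.sqrt (et 0) := Real.sqrt_pos.mpr hu0
  simp only [hg] at hB
  have h1 : ta s - 2 * a * (et s) ^ 2 / 3
      = ((ta 0 - 2 * a * (et 0) ^ 2 / 3) / Real.sqrt (et 0)) * Real.sqrt (et s) :=
    (div_eq_iff hsq.ne').mp hB
  have h2 : (ta 0 - 2 * a * (et 0) ^ 2 / 3) / Real.sqrt (et 0)
      = (3 * ta 0 - 2 * a * (et 0) ^ 2) / (3 * Real.sqrt (et 0)) := by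
    rw [div_eq_div_iff hsq0.ne' (by positivity)]; ring
  linear_combination h1 + Real.sqrt (et s) * h2
end
end

section
/- Let (α, τ, η) solve α' = τ, τ' = (c + aτ)α - η, η' = -(c + aτ)τ with a > 0, c < 0, and initial condition in H = {2αη + τ² = -1, α < 0}, on its maximal interval (ω₋, ω₊). Then ω₊ = +∞, and lim_{s→+∞} τ(s) = 0, lim_{s→+∞} 2cα(s)² = -1, lim_{s→+∞} 2η(s)² = -c; i.e., the solution converges to the singular point p = (-1/√(-2c), 0, -c/√(-2c)). -/
open Set Filter Metric

noncomputable section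

lemma myfst {E F : Type*} [NormedAddCommGroup E] [NormedSpace ℝ E] [NormedAddCommGroup F]
    [NormedSpace ℝ F] {x : ℝ → E × F} {d : E × F} {s : ℝ} (h : HasDerivAt x d s) :
    HasDerivAt (fun u => (x u).1) d.1 s := (hasFDerivAt_fst (p := x s)).comp_hasDerivAt s h

lemma mysnd {E F : Type*} [NormedAddCommGroup E] [NormedSpace ℝ E] [NormedAddCommGroup F]
    [NormedSpace ℝ F] {x : ℝ → E × F} {d : E × F} {s : ℝ} (h : HasDerivAt x d s) :
    HasDerivAt (fun u => (x u).2) d.2 s := (hasFDerivAt_snd (p := x s)).comp_hasDerivAt s h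

lemma lips_of_contDiff {v : ℝ × ℝ × ℝ → ℝ × ℝ × ℝ} (hv : ContDiff ℝ 2 v) (x₀ : ℝ × ℝ × ℝ) (R : ℝ) :
    ∃ K : NNReal, LipschitzOnWith K v (Metric.closedBall x₀ R) := by
  have hc : ContinuousOn (fun x => ‖fderiv ℝ v x‖) (closedBall x₀ R) :=
    ((hv.continuous_fderiv (by norm_num)).norm).continuousOn
  obtain ⟨C, hC⟩ := (isCompact_closedBall x₀ R).exists_bound_of_continuousOn hc
  simp only [norm_norm] at hC
  refine ⟨(max C 0).toNNReal, ?_⟩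
  apply Convex.lipschitzOnWith_of_nnnorm_fderiv_le
    (fun x _ => (hv.differentiable (by norm_num)).differentiableAt)
    (fun x hx => ?_) (convex_closedBall x₀ R)
  rw [← norm_toNNReal]
  exact Real.toNNReal_mono ((hC x hx).trans (le_max_left _ _))

lemma lipsOn_of_deriv_bound {f f' : ℝ → ℝ} {D : ℝ} {s : Set ℝ} (hs : Convex ℝ s)
    (hd : ∀ u ∈ s, HasDerivAt f (f' u) u) (hb : ∀ u ∈ s, |f' u| ≤ D) :
    LipschitzOnWith D.toNNReal f s :=
  hs.lipschitzOnWith_of_nnnorm_hasDerivWithin_le (fun u hu => (hd u hu).hasDerivWithinAt)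
    (fun u hu => by
      rw [← norm_toNNReal]
      exact Real.toNNReal_mono (by rw [Real.norm_eq_abs]; exact hb u hu))

lemma abs_sub_le_of_deriv_bound {f f' : ℝ → ℝ} {D : ℝ} {s : Set ℝ} (hs : Convex ℝ s)
    (hd : ∀ u ∈ s, HasDerivAt f (f' u) u) (hb : ∀ u ∈ s, |f' u| ≤ D)
    {x y : ℝ} (hx : x ∈ s) (hy : y ∈ s) : |f x - f y| ≤ D * |x - y| := by
  have hD : 0 ≤ D := (abs_nonneg _).trans (hb x hx)
  have h := (lipsOn_of_deriv_bound hs hd hb).dist_le_mul x hx y hy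
  rwa [Real.dist_eq, Real.dist_eq, Real.coe_toNNReal _ hD] at h

lemma tendsto_of_lipsOn_Ico {f : ℝ → ℝ} {K : NNReal} {p q : ℝ} (hpq : p < q)
    (h : LipschitzOnWith K f (Ico p q)) : ∃ L, Tendsto f (nhdsWithin q (Iio q)) (nhds L) := by
  obtain ⟨g, hg, heq⟩ := h.extend_real
  refine ⟨g q, ?_⟩
  have hgt : Tendsto g (nhdsWithin q (Iio q)) (nhds (g q)) :=
    hg.continuous.continuousAt.continuousWithinAt
  apply hgt.congr'
  filter_upwards [inter_mem (mem_nhdsWithin_of_mem_nhds (isOpen_Ioi.mem_nhds hpq))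
    self_mem_nhdsWithin] with u hu
  exact (heq ⟨le_of_lt hu.1, hu.2⟩).symm

lemma tendsto_zero_of_abs_le_mul {f h : ℝ → ℝ} {C : ℝ}
    (hb : ∀ᶠ s in atTop, |f s| ≤ C * |h s|) (hh : Tendsto h atTop (nhds 0)) :
    Tendsto f atTop (nhds 0) := by
  rw [tendsto_zero_iff_abs_tendsto_zero]
  have hC : Tendsto (fun s => C * |h s|) atTop (nhds 0) := by
    have := ((tendsto_zero_iff_abs_tendsto_zero h).1 hh).const_mul C
    simpa using this
  exact squeeze_zero' (Eventually.of_forall fun s => abs_nonneg _) hb hC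

set_option maxHeartbeats 4000000 in
/-- For `a > 0`, `c < 0`, a solution in `H` on its maximal interval `(ω₋, ω₊)` satisfies
`ω₊ = +∞`, `τ → 0`, `2cα² → -1`, `2η² → -c` as `s → +∞`, i.e. it converges to the
singular point `p = (-1/√(-2c), 0, -c/√(-2c))`.  Maximality is encoded as: no solution
on a larger interval restricts to the given one. -/
theorem stmt_18 (a c : ℝ) (ha : 0 < a) (hc : c < 0) (wlo whi : EReal) (hlt : wlo < whi)
    (α τ η : ℝ → ℝ)
    (hα : ∀ s : ℝ, wlo < (s : EReal) → (s : EReal) < whi → HasDerivAt α (τ s) s)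
    (hτ : ∀ s : ℝ, wlo < (s : EReal) → (s : EReal) < whi →
      HasDerivAt τ ((c + a * τ s) * α s - η s) s)
    (hη : ∀ s : ℝ, wlo < (s : EReal) → (s : EReal) < whi →
      HasDerivAt η (-((c + a * τ s) * τ s)) s)
    (hH : ∀ s : ℝ, wlo < (s : EReal) → (s : EReal) < whi →
      2 * α s * η s + (τ s) ^ 2 = -1 ∧ α s < 0 ∧ 0 < η s)
    (hmax : ∀ (wlo' whi' : EReal) (α' τ' η' : ℝ → ℝ),
      wlo' ≤ wlo → whi ≤ whi' →
      (∀ s : ℝ, wlo' < (s : EReal) → (s : EReal) < whi' →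
        HasDerivAt α' (τ' s) s ∧
        HasDerivAt τ' ((c + a * τ' s) * α' s - η' s) s ∧
        HasDerivAt η' (-((c + a * τ' s) * τ' s)) s) →
      (∀ s : ℝ, wlo < (s : EReal) → (s : EReal) < whi →
        α' s = α s ∧ τ' s = τ s ∧ η' s = η s) →
      wlo' = wlo ∧ whi' = whi) :
    whi = ⊤ ∧
    Filter.Tendsto τ Filter.atTop (nhds 0) ∧
    Filter.Tendsto (fun s => 2 * c * (α s) ^ 2) Filter.atTop (nhds (-1)) ∧
    Filter.Tendsto (fun s => 2 * (η s) ^ 2) Filter.atTop (nhds (-c)) := by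
  have hc0 : c ≠ 0 := ne_of_lt hc
  obtain ⟨s₀, hs₀l, hs₀r⟩ := EReal.exists_between_coe_real hlt
  have hdom : ∀ {s : ℝ}, s₀ ≤ s → wlo < (s : EReal) := fun {s} h =>
    lt_of_lt_of_le hs₀l (EReal.coe_le_coe_iff.2 h)
  set g : ℝ → ℝ := fun s => c * α s + η s with hgdef
  have hg' : ∀ s : ℝ, wlo < (s : EReal) → (s : EReal) < whi →
      HasDerivAt g (-(a * τ s ^ 2)) s := by
    intro s h1 h2
    have h : HasDerivAt (fun y => c * α y + η y) (c * τ s + -((c + a * τ s) * τ s)) s :=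
      ((hα s h1 h2).const_mul c).add (hη s h1 h2)
    convert h using 1
    ring
  have hganti : ∀ t₁ t₂ : ℝ, s₀ ≤ t₁ → t₁ ≤ t₂ → (t₂ : EReal) < whi → g t₂ ≤ g t₁ := by
    intro t₁ t₂ h1 h12 h2
    have hsub : ∀ u ∈ Icc t₁ t₂, wlo < (u : EReal) ∧ (u : EReal) < whi := fun u hu =>
      ⟨hdom (h1.trans hu.1), lt_of_le_of_lt (EReal.coe_le_coe_iff.2 hu.2) h2⟩
    have anti := antitoneOn_of_deriv_nonpos (convex_Icc t₁ t₂)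
      (fun u hu => ((hg' u (hsub u hu).1 (hsub u hu).2).continuousAt).continuousWithinAt)
      (fun u hu => by
        have hu' := hsub u (interior_subset hu)
        exact ((hg' u hu'.1 hu'.2).differentiableAt).differentiableWithinAt)
      (fun u hu => by
        have hu' := hsub u (interior_subset hu)
        rw [(hg' u hu'.1 hu'.2).deriv]
        nlinarith [sq_nonneg (τ u)])
    exact anti ⟨le_rfl, h12⟩ ⟨h12, le_rfl⟩ h12
  set G := g s₀ with hGdef
  have hb : ∀ s : ℝ, s₀ ≤ s → (s : EReal) < whi →
      (0 < c * α s ∧ c * α s ≤ G) ∧ (0 < η s ∧ η s ≤ G) ∧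
      τ s ^ 2 ≤ G ^ 2 / (-2 * c) ∧ |α s| ≤ G / (-c) ∧ (0 < g s ∧ g s ≤ G) := by
    intro s h1 h2
    obtain ⟨hHs, hαs, hηs⟩ := hH s (hdom h1) h2
    have hgm : c * α s + η s ≤ G := hganti s₀ s le_rfl h1 h2
    have h3 : 0 < c * α s := mul_pos_of_neg_of_neg hc hαs
    have hgs : 0 < c * α s + η s := by linarith
    have hτsq : τ s ^ 2 ≤ G ^ 2 / (-2 * c) := by
      rw [le_div_iff₀ (by linarith : (0:ℝ) < -2 * c)]
      nlinarith [sq_nonneg (c * α s - η s), sq_nonneg (c * α s + η s), hHs]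
    have hαabs : |α s| ≤ G / (-c) := by
      rw [abs_of_neg hαs, le_div_iff₀ (by linarith : (0:ℝ) < -c)]
      nlinarith
    exact ⟨⟨h3, by linarith⟩, ⟨hηs, by linarith⟩, hτsq, hαabs, hgs, hgm⟩
  have hGpos : 0 < G := ((hb s₀ le_rfl hs₀r).2.2.2.2).1
  have hwhi : whi = ⊤ := by
    by_contra htop
    have hbot : whi ≠ ⊥ := fun h => not_lt_bot (h ▸ hs₀r)
    obtain ⟨b, rfl⟩ : ∃ b : ℝ, whi = (b : EReal) :=
      ⟨whi.toReal, (EReal.coe_toReal htop hbot).symm⟩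
    have hs₀b : s₀ < b := EReal.coe_lt_coe_iff.1 hs₀r
    have hIco : ∀ u ∈ Ico s₀ b, wlo < (u : EReal) ∧ (u : EReal) < ((b : ℝ) : EReal) :=
      fun u hu => ⟨hdom hu.1, EReal.coe_lt_coe_iff.2 hu.2⟩
    set KaB := G / (-c) with hKaBdef
    set KtB := Real.sqrt (G ^ 2 / (-2 * c)) with hKtBdef
    have hKtBnn : 0 ≤ KtB := Real.sqrt_nonneg _
    have hKaBpos : 0 < KaB := div_pos hGpos (by linarith)
    have hαb : ∀ u ∈ Ico s₀ b, |α u| ≤ KaB :=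
      fun u hu => (hb u hu.1 (hIco u hu).2).2.2.2.1
    have hτb : ∀ u ∈ Ico s₀ b, |τ u| ≤ KtB :=
      fun u hu => Real.abs_le_sqrt (hb u hu.1 (hIco u hu).2).2.2.1
    have hηb : ∀ u ∈ Ico s₀ b, |η u| ≤ G := by
      intro u hu
      rw [abs_of_pos (hb u hu.1 (hIco u hu).2).2.1.1]
      exact (hb u hu.1 (hIco u hu).2).2.1.2
    have habs2 : ∀ u ∈ Ico s₀ b, |c + a * τ u| ≤ |c| + a * KtB := by
      intro u hu
      refine (abs_add_le c (a * τ u)).trans ?_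
      rw [abs_mul, abs_of_pos ha]
      have := hτb u hu
      nlinarith
    have hcKtB : 0 ≤ |c| + a * KtB := by positivity
    have hτ'b : ∀ u ∈ Ico s₀ b, |(c + a * τ u) * α u - η u| ≤ (|c| + a * KtB) * KaB + G := by
      intro u hu
      have h1 : |(c + a * τ u) * α u - η u| ≤ |(c + a * τ u) * α u| + |η u| := abs_sub _ _
      rw [abs_mul] at h1
      have h2 : |c + a * τ u| * |α u| ≤ (|c| + a * KtB) * KaB :=
        mul_le_mul (habs2 u hu) (hαb u hu) (abs_nonneg _) hcKtB
      have h3 := hηb u hu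
      linarith
    have hη'b : ∀ u ∈ Ico s₀ b, |(-((c + a * τ u) * τ u))| ≤ (|c| + a * KtB) * KtB := by
      intro u hu
      rw [abs_neg, abs_mul]
      exact mul_le_mul (habs2 u hu) (hτb u hu) (abs_nonneg _) hcKtB
    obtain ⟨A, hA⟩ := tendsto_of_lipsOn_Ico hs₀b (lipsOn_of_deriv_bound (convex_Ico s₀ b)
      (fun u hu => hα u (hIco u hu).1 (hIco u hu).2) hτb)
    obtain ⟨T, hT⟩ := tendsto_of_lipsOn_Ico hs₀b (lipsOn_of_deriv_bound (convex_Ico s₀ b)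
      (fun u hu => hτ u (hIco u hu).1 (hIco u hu).2) hτ'b)
    obtain ⟨N, hN⟩ := tendsto_of_lipsOn_Ico hs₀b (lipsOn_of_deriv_bound (convex_Ico s₀ b)
      (fun u hu => hη u (hIco u hu).1 (hIco u hu).2) hη'b)
    set x : ℝ → ℝ × ℝ × ℝ := fun s => (α s, τ s, η s) with hxdef
    set v : (ℝ × ℝ × ℝ) → (ℝ × ℝ × ℝ) :=
      fun p => (p.2.1, (c + a * p.2.1) * p.1 - p.2.2, -((c + a * p.2.1) * p.2.1)) with hvdef
    have hv2 : ContDiff ℝ 2 v := by rw [hvdef]; fun_prop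
    have hx' : ∀ u : ℝ, wlo < (u : EReal) → (u : EReal) < ((b : ℝ) : EReal) →
        HasDerivAt x (v (x u)) u := by
      intro u h1 h2
      exact (hα u h1 h2).prodMk ((hτ u h1 h2).prodMk (hη u h1 h2))
    have hxlim : Tendsto x (nhdsWithin b (Iio b)) (nhds (A, T, N)) :=
      hA.prodMk_nhds (hT.prodMk_nhds hN)
    obtain ⟨f, hfb, ε, hε, hf⟩ :=
      ContDiffAt.exists_forall_mem_closedBall_exists_eq_forall_mem_Ioo_hasDerivAt₀
        (x₀ := ((A, T, N) : ℝ × ℝ × ℝ)) (hv2.of_le one_le_two).contDiffAt b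
    have hxnorm : ∀ u ∈ Ico s₀ b, ‖x u‖ ≤ max KaB (max KtB G) := by
      intro u hu
      have hx1 : ‖x u‖ = max |α u| (max |τ u| |η u|) := by
        rw [hxdef]
        simp [Prod.norm_def, Real.norm_eq_abs]
      rw [hx1]
      exact max_le_max (hαb u hu) (max_le_max (hτb u hu) (hηb u hu))
    have hfcont : ContinuousOn f (Icc (b - ε/2) (b + ε/2)) := by
      intro u hu
      exact ((hf u ⟨by linarith [hu.1], by linarith [hu.2]⟩).continuousAt).continuousWithinAt
    obtain ⟨Q₁, hQ₁⟩ := isCompact_Icc.exists_bound_of_continuousOn hfcont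
    set Q := max (max KaB (max KtB G)) Q₁ with hQdef
    obtain ⟨K, hK⟩ := lips_of_contDiff hv2 0 Q
    set SB := closedBall (0 : ℝ × ℝ × ℝ) Q with hSBdef
    have hxSB : ∀ u ∈ Ico s₀ b, x u ∈ SB :=
      fun u hu => mem_closedBall_zero_iff.2 ((hxnorm u hu).trans (le_max_left _ _))
    have hfSB : ∀ u ∈ Icc (b - ε/2) (b + ε/2), f u ∈ SB :=
      fun u hu => mem_closedBall_zero_iff.2 ((hQ₁ u hu).trans (le_max_right _ _))
    set s₁ := max s₀ (b - ε/2) with hs₁def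
    have hs₁b : s₁ < b := max_lt hs₀b (by linarith)
    have hs₀s₁ : s₀ ≤ s₁ := le_max_left _ _
    have hbε : b - ε/2 ≤ s₁ := le_max_right _ _
    have key : ∀ u ∈ Ioo s₁ b, x u = f u := by
      intro p hp
      have hstep : ∀ t ∈ Ioo p b,
          dist (x p) (f p) ≤ dist (x t) (f t) * Real.exp ((K : ℝ) * (t - p)) := by
        intro t ht
        have hmem : ∀ r, p ≤ r → r ≤ t → (s₀ ≤ r ∧ r < b) ∧ (b - ε/2 ≤ r ∧ r ≤ b + ε/2) := by
          intro r hr1 hr2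
          refine ⟨⟨?_, ?_⟩, ?_, ?_⟩
          · linarith [hp.1]
          · linarith [ht.2]
          · linarith [hp.1]
          · linarith [ht.2, hε]
        have hwd : ∀ r, p ≤ r → r ≤ t → wlo < (r : EReal) ∧ (r : EReal) < ((b : ℝ) : EReal) :=
          fun r h1 h2 => ⟨hdom (hmem r h1 h2).1.1, EReal.coe_lt_coe_iff.2 (hmem r h1 h2).1.2⟩
        have hvlip : ∀ _r : ℝ, LipschitzOnWith K (fun q => -(v q)) SB := fun _ => by
          rw [← one_mul K]
          exact LipschitzWith.id.neg.comp_lipschitzOnWith hK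
        have hxc : ContinuousOn (fun r => x (-r)) (Icc (-t) (-p)) := by
          intro r hr
          have h1 := hwd (-r) (by linarith [hr.2]) (by linarith [hr.1])
          exact ((hx' (-r) h1.1 h1.2).continuousAt.comp
            (continuous_neg.continuousAt)).continuousWithinAt
        have hxd : ∀ r ∈ Ico (-t) (-p),
            HasDerivWithinAt (fun r => x (-r)) (-(v (x (-r)))) (Ici r) r := by
          intro r hr
          have h1 := hwd (-r) (by linarith [hr.2]) (by linarith [hr.1])
          have hD := (hx' (-r) h1.1 h1.2).scomp r (hasDerivAt_neg r)
          rw [neg_one_smul] at hD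
          exact hD.hasDerivWithinAt
        have hxs : ∀ r ∈ Ico (-t) (-p), x (-r) ∈ SB := by
          intro r hr
          have h1 := hmem (-r) (by linarith [hr.2]) (by linarith [hr.1])
          exact hxSB (-r) ⟨h1.1.1, h1.1.2⟩
        have hfc2 : ContinuousOn (fun r => f (-r)) (Icc (-t) (-p)) := by
          intro r hr
          have h1 := hmem (-r) (by linarith [hr.2]) (by linarith [hr.1])
          exact ((hfcont.continuousAt (Icc_mem_nhds (by linarith [hr.2, hp.1, hbε])
            (by linarith [h1.1.2, hε]))).comp (continuous_neg.continuousAt)).continuousWithinAt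
        have hfd : ∀ r ∈ Ico (-t) (-p),
            HasDerivWithinAt (fun r => f (-r)) (-(v (f (-r)))) (Ici r) r := by
          intro r hr
          have h1 := hmem (-r) (by linarith [hr.2]) (by linarith [hr.1])
          have hio : -r ∈ Ioo (b - ε) (b + ε) := ⟨by linarith [h1.2.1], by linarith [h1.2.2]⟩
          have hD := (hf (-r) hio).scomp r (hasDerivAt_neg r)
          rw [neg_one_smul] at hD
          exact hD.hasDerivWithinAt
        have hfs2 : ∀ r ∈ Ico (-t) (-p), f (-r) ∈ SB := by
          intro r hr
          have h1 := hmem (-r) (by linarith [hr.2]) (by linarith [hr.1])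
          exact hfSB (-r) h1.2
        have hinit : dist ((fun r => x (-r)) (-t)) ((fun r => f (-r)) (-t)) ≤ dist (x t) (f t) := by
          simp only [neg_neg]
          exact le_rfl
        have hres := dist_le_of_trajectories_ODE_of_mem (fun t _ => hvlip t) hxc hxd hxs hfc2 hfd hfs2 hinit
          (-p) ⟨by linarith [ht.1], le_rfl⟩
        simp only [neg_neg] at hres
        calc dist (x p) (f p) ≤ dist (x t) (f t) * Real.exp ((K : ℝ) * (-p - -t)) := hres
        _ = dist (x t) (f t) * Real.exp ((K : ℝ) * (t - p)) := by ring_nf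
      have hflim : Tendsto f (nhdsWithin b (Iio b)) (nhds (A, T, N)) := by
        rw [← hfb]
        exact ((hf b ⟨by linarith, by linarith⟩).continuousAt).continuousWithinAt
      have hexp : Tendsto (fun t => Real.exp ((K : ℝ) * (t - p))) (nhdsWithin b (Iio b))
          (nhds (Real.exp ((K : ℝ) * (b - p)))) := by
        apply Continuous.continuousWithinAt
        fun_prop
      have hdistlim : Tendsto (fun t => dist (x t) (f t) * Real.exp ((K : ℝ) * (t - p)))
          (nhdsWithin b (Iio b))
          (nhds (dist ((A, T, N) : ℝ × ℝ × ℝ) ((A, T, N) : ℝ × ℝ × ℝ) *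
            Real.exp ((K : ℝ) * (b - p)))) := (hxlim.dist hflim).mul hexp
      rw [dist_self, zero_mul] at hdistlim
      have h0 : dist (x p) (f p) ≤ 0 := by
        apply ge_of_tendsto hdistlim
        filter_upwards [inter_mem (mem_nhdsWithin_of_mem_nhds (isOpen_Ioi.mem_nhds hp.2))
          self_mem_nhdsWithin] with t ht2
        exact hstep t ⟨ht2.1, ht2.2⟩
      exact dist_le_zero.1 h0
    set xe : ℝ → ℝ × ℝ × ℝ := fun u => if u < b then x u else f u with hxedef
    clear_value xe
    have hxex : ∀ u : ℝ, u < b → xe u = x u := by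
      intro u h
      rw [hxedef]
      simp only [if_pos h]
    have hxef : ∀ u : ℝ, s₁ < u → u < b + ε → xe u = f u := by
      intro u h1 h2
      by_cases h : u < b
      · rw [hxex u h]
        exact key u ⟨h1, h⟩
      · rw [hxedef]
        simp only [if_neg h]
    have hxederiv : ∀ u : ℝ, wlo < (u : EReal) → (u : EReal) < ((b + ε : ℝ) : EReal) →
        HasDerivAt xe (v (xe u)) u := by
      intro u h1 h2
      by_cases hcase : u < b
      · have hev : xe =ᶠ[nhds u] x := by
          filter_upwards [isOpen_Iio.mem_nhds hcase] with r hr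
          exact hxex r hr
        rw [hxex u hcase, hev.hasDerivAt_iff]
        exact hx' u h1 (EReal.coe_lt_coe_iff.2 hcase)
      · push_neg at hcase
        have hu1 : s₁ < u := lt_of_lt_of_le hs₁b hcase
        have hu2 : u < b + ε := EReal.coe_lt_coe_iff.1 h2
        have hev : xe =ᶠ[nhds u] f := by
          filter_upwards [isOpen_Ioo.mem_nhds (show u ∈ Ioo s₁ (b + ε) from ⟨hu1, hu2⟩)] with r hr
          exact hxef r hr.1 hr.2
        rw [hxef u hu1 hu2, hev.hasDerivAt_iff]
        exact hf u ⟨by linarith, hu2⟩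
    have hfin := hmax wlo ((b + ε : ℝ) : EReal) (fun u => (xe u).1) (fun u => (xe u).2.1)
      (fun u => (xe u).2.2) le_rfl (EReal.coe_le_coe_iff.2 (by linarith)) ?_ ?_
    · have h9 := hfin.2
      rw [EReal.coe_eq_coe_iff] at h9
      linarith
    · intro u h1 h2
      have hD := hxederiv u h1 h2
      exact ⟨myfst hD, myfst (mysnd hD), mysnd (mysnd hD)⟩
    · intro u h1 h2
      have hub : u < b := EReal.coe_lt_coe_iff.1 h2
      simp [hxex u hub, hxdef]
  subst hwhi
  have hαi : ∀ s : ℝ, s₀ ≤ s → HasDerivAt α (τ s) s :=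
    fun s hs => hα s (hdom hs) (EReal.coe_lt_top s)
  have hτi : ∀ s : ℝ, s₀ ≤ s → HasDerivAt τ ((c + a * τ s) * α s - η s) s :=
    fun s hs => hτ s (hdom hs) (EReal.coe_lt_top s)
  have hηi : ∀ s : ℝ, s₀ ≤ s → HasDerivAt η (-((c + a * τ s) * τ s)) s :=
    fun s hs => hη s (hdom hs) (EReal.coe_lt_top s)
  have hHi : ∀ s : ℝ, s₀ ≤ s → 2 * α s * η s + (τ s) ^ 2 = -1 ∧ α s < 0 ∧ 0 < η s :=
    fun s hs => hH s (hdom hs) (EReal.coe_lt_top s)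
  have hgi : ∀ s : ℝ, s₀ ≤ s → HasDerivAt g (-(a * τ s ^ 2)) s :=
    fun s hs => hg' s (hdom hs) (EReal.coe_lt_top s)
  have hbi := fun (s : ℝ) (hs : s₀ ≤ s) => hb s hs (EReal.coe_lt_top s)
  clear hb hα hτ hη hH hmax hg'
  set Ka := G / (-c) with hKadef
  set Kt := Real.sqrt (G ^ 2 / (-2 * c)) with hKtdef
  set K2 := (|c| + a * Kt) * Ka + G with hK2def
  have hKapos : 0 < Ka := div_pos hGpos (by linarith)
  have hKtnn : 0 ≤ Kt := Real.sqrt_nonneg _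
  have hKt : ∀ s : ℝ, s₀ ≤ s → |τ s| ≤ Kt := fun s hs =>
    Real.abs_le_sqrt (hbi s hs).2.2.1
  set w : ℝ → ℝ := fun s => (c + a * τ s) * α s - η s with hwdef
  clear_value w
  have hwτ : ∀ s : ℝ, w s = (c + a * τ s) * α s - η s := fun s => by rw [hwdef]
  have habs : ∀ s : ℝ, s₀ ≤ s → |c + a * τ s| ≤ |c| + a * Kt := by
    intro s hs
    refine (abs_add_le c (a * τ s)).trans ?_
    rw [abs_mul, abs_of_pos ha]
    have := hKt s hs
    nlinarith
  have hK2b : ∀ s : ℝ, s₀ ≤ s → |w s| ≤ K2 := by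
    intro s hs
    have h1 : |w s| ≤ |(c + a * τ s) * α s| + |η s| := by
      rw [hwτ s]; exact abs_sub _ _
    rw [abs_mul] at h1
    have h2 : |c + a * τ s| * |α s| ≤ (|c| + a * Kt) * Ka := by
      apply mul_le_mul (habs s hs) (hbi s hs).2.2.2.1 (abs_nonneg _)
      positivity
    have h3 : |η s| ≤ G := by
      rw [abs_of_pos (hbi s hs).2.1.1]; exact (hbi s hs).2.1.2
    calc |w s| ≤ (|c| + a * Kt) * Ka + G := by linarith
    _ = K2 := rfl
  have hK2nn : 0 ≤ K2 := (abs_nonneg _).trans (hK2b s₀ le_rfl)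
  obtain ⟨L, hgL⟩ : ∃ L, Tendsto g atTop (nhds L) := by
    have hmono : Antitone (fun s => g (max s s₀)) := fun u v huv =>
      hganti (max u s₀) (max v s₀) (le_max_right _ _) (max_le_max huv le_rfl)
        (EReal.coe_lt_top _)
    have hbdd : BddBelow (range fun s => g (max s s₀)) := by
      refine ⟨0, ?_⟩
      rintro y ⟨s, rfl⟩
      exact ((hbi _ (le_max_right s s₀)).2.2.2.2.1).le
    refine ⟨⨅ s, g (max s s₀), ?_⟩
    apply (tendsto_atTop_ciInf hmono hbdd).congr'
    filter_upwards [eventually_ge_atTop s₀] with s hs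
    rw [max_eq_left hs]
  have hτ2 : Tendsto (fun s => τ s ^ 2) atTop (nhds 0) := by
    set D := 2 * Kt * K2 + 1 with hDdef
    clear_value D
    have hDpos : 0 < D := by nlinarith [mul_nonneg hKtnn hK2nn]
    have hτ2lip : ∀ u v : ℝ, s₀ ≤ u → s₀ ≤ v → |τ u ^ 2 - τ v ^ 2| ≤ D * |u - v| := by
      intro u v hu hv
      apply abs_sub_le_of_deriv_bound (convex_Ici s₀)
        (f' := fun s => 2 * τ s * ((c + a * τ s) * α s - η s)) ?_ ?_ hu hv
      · intro r hr
        have h := (hτi r hr).pow 2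
        norm_num at h
        exact h
      · intro r hr
        rw [abs_mul, abs_mul, abs_two]
        have h1 := hKt r hr
        have h2 := hK2b r hr
        have h3 : |τ r| * |(c + a * τ r) * α r - η r| ≤ Kt * K2 := by
          rw [← hwτ r]
          apply mul_le_mul h1 h2 (abs_nonneg _) hKtnn
        nlinarith [abs_nonneg (τ r)]
    by_contra hcon
    rw [Metric.tendsto_atTop] at hcon
    push_neg at hcon
    obtain ⟨ε, hε, hfreq⟩ := hcon
    set ℓ := ε / (2 * D) with hldef
    have hlpos : 0 < ℓ := by rw [hldef]; positivity
    clear_value ℓ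
    obtain ⟨N₀, hN₀⟩ := Metric.tendsto_atTop.1 hgL (a * ℓ * ε / 4) (by positivity)
    obtain ⟨n, hn, hεn⟩ := hfreq (max N₀ s₀)
    have hns : s₀ ≤ n := le_trans (le_max_right _ _) hn
    have hnN : N₀ ≤ n := le_trans (le_max_left _ _) hn
    have hτn : ε ≤ τ n ^ 2 := by
      rw [Real.dist_eq, sub_zero, abs_of_nonneg (sq_nonneg _)] at hεn
      exact hεn
    have hDl : D * ℓ = ε / 2 := by
      rw [hldef]; field_simp
    have hlow : ∀ u ∈ Icc n (n + ℓ), ε / 2 ≤ τ u ^ 2 := by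
      intro u hu
      have h5 := hτ2lip u n (hns.trans hu.1) hns
      have h6 : |u - n| ≤ ℓ := by
        rw [abs_of_nonneg (by linarith [hu.1])]; linarith [hu.2]
      have h7 : D * |u - n| ≤ D * ℓ := mul_le_mul_of_nonneg_left h6 hDpos.le
      have h8 : τ n ^ 2 - τ u ^ 2 ≤ |τ u ^ 2 - τ n ^ 2| := by
        rw [abs_sub_comm]; exact le_abs_self _
      linarith
    have hτcont : ContinuousOn τ (uIcc n (n + ℓ)) := by
      intro u hu
      rw [uIcc_of_le (by linarith)] at hu
      exact ((hτi u (hns.trans hu.1)).continuousAt).continuousWithinAt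
    have hcτ2 : ContinuousOn (fun u => a * τ u ^ 2) (uIcc n (n + ℓ)) :=
      continuousOn_const.mul (hτcont.pow 2)
    have hcτ : ContinuousOn (fun u => -(a * τ u ^ 2)) (uIcc n (n + ℓ)) := hcτ2.neg
    have hFTC : ∫ u in n..(n + ℓ), -(a * τ u ^ 2) = g (n + ℓ) - g n := by
      apply intervalIntegral.integral_eq_sub_of_hasDerivAt
      · intro u hu
        rw [uIcc_of_le (by linarith)] at hu
        exact hgi u (hns.trans hu.1)
      · exact hcτ.intervalIntegrable
    have hmon : ∫ u in n..(n + ℓ), a * (ε / 2) ≤ ∫ u in n..(n + ℓ), a * τ u ^ 2 := by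
      apply intervalIntegral.integral_mono_on (by linarith) intervalIntegrable_const
        hcτ2.intervalIntegrable
      intro u hu
      exact mul_le_mul_of_nonneg_left (hlow u hu) ha.le
    have hconst : ∫ u in n..(n + ℓ), a * (ε / 2) = ℓ * (a * (ε / 2)) := by
      rw [intervalIntegral.integral_const, smul_eq_mul, add_sub_cancel_left]
    have hneg : ∫ u in n..(n + ℓ), a * τ u ^ 2 = g n - g (n + ℓ) := by
      have h9 : ∫ u in n..(n + ℓ), -(a * τ u ^ 2) = -∫ u in n..(n + ℓ), a * τ u ^ 2 :=
        intervalIntegral.integral_neg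
      rw [h9] at hFTC
      linarith
    rw [hconst, hneg] at hmon
    have hub1 := hN₀ n hnN
    have hub2 := hN₀ (n + ℓ) (by linarith)
    rw [Real.dist_eq] at hub1 hub2
    have hub1' := abs_lt.1 hub1
    have hub2' := abs_lt.1 hub2
    linarith [hub1'.1, hub1'.2, hub2'.1, hub2'.2, hmon]
  have hτ0 : Tendsto τ atTop (nhds 0) := by
    rw [tendsto_zero_iff_abs_tendsto_zero]
    have h1 : Tendsto (fun s => Real.sqrt (τ s ^ 2)) atTop (nhds (Real.sqrt 0)) :=
      (Real.continuous_sqrt.tendsto 0).comp hτ2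
    simpa [Real.sqrt_sq_eq_abs, Function.comp_def] using h1
  have hw0 : Tendsto w atTop (nhds 0) := by
    have hwderiv : ∀ s : ℝ, s₀ ≤ s →
        HasDerivAt w (a * w s * α s + 2 * ((c + a * τ s) * τ s)) s := by
      intro s hs
      have h1 : HasDerivAt (fun r => c + a * τ r) (a * ((c + a * τ s) * α s - η s)) s :=
        (((hτi s hs).const_mul a)).const_add c
      have h2 := (h1.mul (hαi s hs)).sub (hηi s hs)
      have h2' : HasDerivAt w (a * ((c + a * τ s) * α s - η s) * α s +
          (c + a * τ s) * τ s - -((c + a * τ s) * τ s)) s := by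
        rw [hwdef]; exact h2
      convert h2' using 1
      rw [hwτ s]; ring
    set D2 := a * K2 * Ka + 2 * (|c| + a * Kt) * Kt + 1 with hD2def
    clear_value D2
    have hcKt : 0 ≤ |c| + a * Kt := by positivity
    have hD2pos : 0 < D2 := by
      nlinarith [mul_nonneg (mul_nonneg ha.le hK2nn) hKapos.le, mul_nonneg hcKt hKtnn]
    have hwlip : ∀ u v : ℝ, s₀ ≤ u → s₀ ≤ v → |w u - w v| ≤ D2 * |u - v| := by
      intro u v hu hv
      apply abs_sub_le_of_deriv_bound (convex_Ici s₀)
        (f' := fun s => a * w s * α s + 2 * ((c + a * τ s) * τ s)) ?_ ?_ hu hv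
      · intro r hr
        exact hwderiv r hr
      · intro r hr
        have h1 : |a * w r * α r| ≤ a * K2 * Ka := by
          rw [abs_mul, abs_mul, abs_of_pos ha]
          have := hK2b r hr
          have := (hbi r hr).2.2.2.1
          have h2 : a * |w r| ≤ a * K2 := mul_le_mul_of_nonneg_left (hK2b r hr) ha.le
          have h3 : a * |w r| * |α r| ≤ a * K2 * Ka := by
            apply mul_le_mul h2 (hbi r hr).2.2.2.1 (abs_nonneg _)
            nlinarith [abs_nonneg (w r)]
          exact h3
        have h4 : |2 * ((c + a * τ r) * τ r)| ≤ 2 * ((|c| + a * Kt) * Kt) := by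
          rw [abs_mul, abs_two, abs_mul]
          have h5 : |c + a * τ r| * |τ r| ≤ (|c| + a * Kt) * Kt :=
            mul_le_mul (habs r hr) (hKt r hr) (abs_nonneg _) hcKt
          linarith
        calc |a * w r * α r + 2 * ((c + a * τ r) * τ r)|
            ≤ |a * w r * α r| + |2 * ((c + a * τ r) * τ r)| := abs_add_le _ _
          _ ≤ D2 := by rw [hD2def]; linarith
    by_contra hcon
    rw [Metric.tendsto_atTop] at hcon
    push_neg at hcon
    obtain ⟨ε, hε, hfreq⟩ := hcon
    set ℓ := ε / (2 * D2) with hldef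
    have hlpos : 0 < ℓ := by rw [hldef]; positivity
    clear_value ℓ
    have hDl : D2 * ℓ = ε / 2 := by
      rw [hldef]; field_simp
    obtain ⟨N₀, hN₀⟩ := Metric.tendsto_atTop.1 hτ0 (ℓ * ε / 8) (by positivity)
    obtain ⟨n, hn, hεn⟩ := hfreq (max N₀ s₀)
    have hns : s₀ ≤ n := le_trans (le_max_right _ _) hn
    have hnN : N₀ ≤ n := le_trans (le_max_left _ _) hn
    rw [Real.dist_eq, sub_zero] at hεn
    have hτ1 := hN₀ n hnN
    have hτ2' := hN₀ (n + ℓ) (by linarith)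
    rw [Real.dist_eq, sub_zero] at hτ1 hτ2'
    have hτ1' := abs_lt.1 hτ1
    have hτ2'' := abs_lt.1 hτ2'
    have hwcont : ContinuousOn w (uIcc n (n + ℓ)) := by
      intro u hu
      rw [uIcc_of_le (by linarith)] at hu
      exact ((hwderiv u (hns.trans hu.1)).continuousAt).continuousWithinAt
    have hFTC : ∫ u in n..(n + ℓ), w u = τ (n + ℓ) - τ n := by
      apply intervalIntegral.integral_eq_sub_of_hasDerivAt
      · intro u hu
        rw [uIcc_of_le (by linarith)] at hu
        rw [hwτ u]
        exact hτi u (hns.trans hu.1)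
      · exact hwcont.intervalIntegrable
    rcases le_abs.1 hεn with hpos | hneg
    · have hlow : ∀ u ∈ Icc n (n + ℓ), ε / 2 ≤ w u := by
        intro u hu
        have h5 := hwlip u n (hns.trans hu.1) hns
        have h6 : |u - n| ≤ ℓ := by
          rw [abs_of_nonneg (by linarith [hu.1])]; linarith [hu.2]
        have h7 : D2 * |u - n| ≤ D2 * ℓ := mul_le_mul_of_nonneg_left h6 hD2pos.le
        have h8 : w n - w u ≤ |w u - w n| := by
          rw [abs_sub_comm]; exact le_abs_self _
        linarith
      have hmon : ∫ u in n..(n + ℓ), (ε / 2) ≤ ∫ u in n..(n + ℓ), w u := by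
        apply intervalIntegral.integral_mono_on (by linarith) intervalIntegrable_const
          hwcont.intervalIntegrable
        intro u hu
        exact hlow u hu
      rw [hFTC, intervalIntegral.integral_const, smul_eq_mul, add_sub_cancel_left] at hmon
      nlinarith [hτ1'.1, hτ1'.2, hτ2''.1, hτ2''.2]
    · have hup : ∀ u ∈ Icc n (n + ℓ), w u ≤ -(ε / 2) := by
        intro u hu
        have h5 := hwlip u n (hns.trans hu.1) hns
        have h6 : |u - n| ≤ ℓ := by
          rw [abs_of_nonneg (by linarith [hu.1])]; linarith [hu.2]
        have h7 : D2 * |u - n| ≤ D2 * ℓ := mul_le_mul_of_nonneg_left h6 hD2pos.le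
        have h8 : w u - w n ≤ |w u - w n| := le_abs_self _
        linarith
      have hmon : ∫ u in n..(n + ℓ), w u ≤ ∫ u in n..(n + ℓ), (-(ε / 2)) := by
        apply intervalIntegral.integral_mono_on (by linarith) hwcont.intervalIntegrable
          intervalIntegrable_const
        intro u hu
        exact hup u hu
      rw [hFTC, intervalIntegral.integral_const, smul_eq_mul, add_sub_cancel_left] at hmon
      nlinarith [hτ1'.1, hτ1'.2, hτ2''.1, hτ2''.2]
  have hτα : Tendsto (fun s => τ s * α s) atTop (nhds 0) := by
    apply tendsto_zero_of_abs_le_mul (C := Ka) _ hτ0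
    filter_upwards [eventually_ge_atTop s₀] with s hs
    rw [abs_mul, mul_comm]
    exact mul_le_mul_of_nonneg_right (hbi s hs).2.2.2.1 (abs_nonneg _)
  have hcα : Tendsto (fun s => c * α s) atTop (nhds (L / 2)) := by
    have h1 : Tendsto (fun s => (g s + w s - a * (τ s * α s)) / 2) atTop
        (nhds ((L + 0 - a * 0) / 2)) := ((hgL.add hw0).sub (hτα.const_mul a)).div_const 2
    have h2 : ∀ s, (g s + w s - a * (τ s * α s)) / 2 = c * α s := fun s => by
      simp only [hgdef]; rw [hwτ s]; ring
    have h3 := h1.congr h2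
    norm_num at h3
    exact h3
  have hηL : Tendsto η atTop (nhds (L / 2)) := by
    have h1 : Tendsto (fun s => (g s - w s + a * (τ s * α s)) / 2) atTop
        (nhds ((L - 0 + a * 0) / 2)) := ((hgL.sub hw0).add (hτα.const_mul a)).div_const 2
    have h2 : ∀ s, (g s - w s + a * (τ s * α s)) / 2 = η s := fun s => by
      simp only [hgdef]; rw [hwτ s]; ring
    have h3 := h1.congr h2
    norm_num at h3
    exact h3
  have hL2 : L ^ 2 = -2 * c := by
    have h1 : Tendsto (fun s => 2 * (c * α s) * η s) atTop
        (nhds (2 * (L / 2) * (L / 2))) := (hcα.const_mul 2).mul hηL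
    have h3 : Tendsto (fun s => 2 * α s * η s) atTop (nhds (-1)) := by
      have h4 : Tendsto (fun s => -1 - τ s ^ 2) atTop (nhds (-1 - 0)) :=
        tendsto_const_nhds.sub hτ2
      norm_num at h4
      apply h4.congr'
      filter_upwards [eventually_ge_atTop s₀] with s hs
      have := (hHi s hs).1
      linarith
    have h3' : Tendsto (fun s => 2 * (c * α s) * η s) atTop (nhds (c * -1)) := by
      have h5 := h3.const_mul c
      apply h5.congr
      intro s; ring
    have h5 := tendsto_nhds_unique h1 h3'
    nlinarith [h5]
  refine ⟨rfl, hτ0, ?_, ?_⟩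
  · have hA : Tendsto (fun s => (1/c) * (2 * (c * α s) ^ 2)) atTop
        (nhds ((1/c) * (2 * (L / 2) ^ 2))) := ((hcα.pow 2).const_mul 2).const_mul (1/c)
    have heq : ∀ s, (1/c) * (2 * (c * α s) ^ 2) = 2 * c * α s ^ 2 := fun s => by
      field_simp
    have hval : (1/c) * (2 * (L / 2) ^ 2) = -1 := by
      have h6 : 2 * (L/2) ^ 2 = -c := by linear_combination hL2 / 2
      rw [h6]
      field_simp
    rw [← hval]
    exact hA.congr heq
  · have hA : Tendsto (fun s => 2 * η s ^ 2) atTop (nhds (2 * (L / 2) ^ 2)) :=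
      (hηL.pow 2).const_mul 2
    have hval : 2 * (L / 2) ^ 2 = -c := by linear_combination hL2 / 2
    rw [← hval]
    exact hA
end
end

section
/- Let (α, τ, η) be a non-trivial solution of α' = τ, τ' = aτα - η, η' = -aτ² (i.e., c = 0) with a > 0 and 2αη + τ² = γ for γ ∈ {-1, 0}, α ≤ 0, η ≥ 0, defined on maximal interval (ω₋, ω₊). Then ω₊ = +∞ and lim_{s→+∞} τ(s) = 0. -/
noncomputable section

open Set Filter

lemma rate_le {f g : ℝ → ℝ} {k x y : ℝ} (hxy : x ≤ y)
    (hd : ∀ s ∈ Set.Icc x y, HasDerivAt f (g s) s)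
    (hk : ∀ s ∈ Set.Icc x y, g s ≤ k) : f y ≤ f x + k * (y - x) := by
  have hd' : ∀ s ∈ Set.Icc x y, HasDerivAt (fun t => f t - k * t) (g s - k) s := by
    intro s hs
    have := (hd s hs).sub ((hasDerivAt_id s).const_mul k)
    simp only [mul_one] at this
    exact this
  have hanti : AntitoneOn (fun t => f t - k * t) (Set.Icc x y) := by
    apply antitoneOn_of_deriv_nonpos (convex_Icc x y)
    · exact fun s hs => (hd' s hs).continuousAt.continuousWithinAt
    · intro s hs
      rw [interior_Icc] at hs
      exact (hd' s (Ioo_subset_Icc_self hs)).differentiableAt.differentiableWithinAt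
    · intro s hs
      rw [interior_Icc] at hs
      rw [(hd' s (Ioo_subset_Icc_self hs)).deriv]
      have := hk s (Ioo_subset_Icc_self hs)
      linarith
  have := hanti (left_mem_Icc.2 hxy) (right_mem_Icc.2 hxy) hxy
  simp only [] at this
  linarith

lemma cross_le {f g : ℝ → ℝ} {x y v : ℝ} (hxy : x ≤ y)
    (hd : ∀ s ∈ Set.Icc x y, HasDerivAt f (g s) s)
    (hg : ∀ s ∈ Set.Icc x y, v ≤ f s → g s ≤ 0)
    (hx : f x ≤ v) : f y ≤ v := by
  by_contra hcon
  push_neg at hcon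
  set S := Set.Icc x y ∩ f ⁻¹' (Set.Iic v) with hS
  have hfc : ContinuousOn f (Set.Icc x y) :=
    fun s hs => (hd s hs).continuousAt.continuousWithinAt
  have hScl : IsClosed S := hfc.preimage_isClosed_of_isClosed isClosed_Icc isClosed_Iic
  have hSne : S.Nonempty := ⟨x, left_mem_Icc.2 hxy, hx⟩
  have hSbdd : BddAbove S := ⟨y, fun s hs => hs.1.2⟩
  set u := sSup S with hu
  have huS : u ∈ S := hScl.csSup_mem hSne hSbdd
  have hufv : f u ≤ v := huS.2
  have hux : x ≤ u := huS.1.1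
  have huy : u ≤ y := huS.1.2
  have hgt : ∀ s, u < s → s ≤ y → v < f s := by
    intro s hus hsy
    by_contra h
    push_neg at h
    have : s ∈ S := ⟨⟨hux.trans hus.le, hsy⟩, h⟩
    exact absurd (le_csSup hSbdd this) (not_le.2 hus)
  have hanti : AntitoneOn f (Set.Icc u y) := by
    apply antitoneOn_of_deriv_nonpos (convex_Icc u y)
    · exact hfc.mono (Set.Icc_subset_Icc hux le_rfl)
    · intro s hs
      rw [interior_Icc] at hs
      exact (hd s ⟨hux.trans hs.1.le, hs.2.le⟩).differentiableAt.differentiableWithinAt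
    · intro s hs
      rw [interior_Icc] at hs
      have hs' : s ∈ Set.Icc x y := ⟨hux.trans hs.1.le, hs.2.le⟩
      rw [(hd s hs').deriv]
      exact hg s hs' (hgt s hs.1 hs.2.le).le
  have := hanti (left_mem_Icc.2 huy) (right_mem_Icc.2 huy) huy
  linarith

set_option maxHeartbeats 1600000 in
lemma part2 (a γ : ℝ) (ha : 0 < a) (hγ : γ = -1 ∨ γ = 0) (s0 : ℝ) (α τ η : ℝ → ℝ)
    (hτ : ∀ s, s0 ≤ s → HasDerivAt τ (a * τ s * α s - η s) s)
    (hη : ∀ s, s0 ≤ s → HasDerivAt η (-(a * (τ s) ^ 2)) s)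
    (hHC : ∀ s, s0 ≤ s → 2 * α s * η s + (τ s) ^ 2 = γ ∧ α s ≤ 0 ∧ 0 ≤ η s) :
    Tendsto τ atTop (nhds 0) := by
  have hγle : γ ≤ 0 := by rcases hγ with h | h <;> simp [h]
  have hγge : -1 ≤ γ := by rcases hγ with h | h <;> simp [h]
  set H := η s0 with hHdef
  clear_value H
  have hH0 : 0 ≤ H := by rw [hHdef]; exact (hHC s0 le_rfl).2.2
  have hηmono : ∀ x y, s0 ≤ x → x ≤ y → η y ≤ η x := by
    intro x y hx hxy
    have := rate_le (k := 0) hxy (fun s hs => hη s (hx.trans hs.1))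
      (fun s hs => by nlinarith [sq_nonneg (τ s)])
    linarith
  have hηH : ∀ s, s0 ≤ s → η s ≤ H := by
    intro s hs; rw [hHdef]; exact hηmono s0 s le_rfl hs
  -- Claim 1 : eventual upper bound for τ
  have claim1 : ∀ ε : ℝ, 0 < ε → ∃ S, s0 ≤ S ∧ ∀ s, S ≤ s → τ s < ε := by
    intro ε hε
    have hs1 : ∃ s1, s0 ≤ s1 ∧ τ s1 < ε / 2 := by
      by_contra h
      push_neg at h
      have hypos : (0:ℝ) < a * (ε/2)^2 := by positivity
      set y := s0 + (H + 1) / (a * (ε/2)^2) with hy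
      clear_value y
      have hys : s0 ≤ y := by
        have : 0 ≤ (H + 1) / (a * (ε/2)^2) := by positivity
        linarith
      have hrate := rate_le (k := -(a * (ε/2)^2)) hys (fun s hs => hη s hs.1)
        (fun s hs => by
          have h1 := h s hs.1
          nlinarith [mul_le_mul_of_nonneg_left (show (ε/2)^2 ≤ τ s^2 by nlinarith) ha.le])
      have hcanc : a * (ε/2)^2 * ((H + 1) / (a * (ε/2)^2)) = H + 1 :=
        mul_div_cancel₀ _ (ne_of_gt hypos)
      have h0y := (hHC y hys).2.2
      have hd : y - s0 = (H + 1) / (a * (ε/2)^2) := by rw [hy]; ring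
      rw [hd] at hrate
      nlinarith [hrate, hcanc]
    obtain ⟨s1, hs1s0, hs1⟩ := hs1
    refine ⟨s1, hs1s0, fun s hs => ?_⟩
    have := cross_le (f := τ) (g := fun t => a * τ t * α t - η t) (v := ε/2) hs
      (fun s' hs' => hτ s' (hs1s0.trans hs'.1))
      (fun s' hs' hv => by
        obtain ⟨hc, hα', hη'⟩ := hHC s' (hs1s0.trans hs'.1)
        have hτpos : 0 ≤ τ s' := by linarith
        nlinarith [mul_nonneg (mul_nonneg ha.le hτpos) (neg_nonneg.2 hα')])
      hs1.le
    linarith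
  by_cases h0 : ∃ t, s0 ≤ t ∧ η t = 0
  · -- η hits 0 : τ vanishes forever after
    obtain ⟨t0, ht0, hηt0⟩ := h0
    have hτ0 : ∀ s, t0 < s → τ s = 0 := by
      intro s hs
      have hzero : ∀ u, t0 < u → η u = 0 := by
        intro u hu
        have h1 : η u ≤ η t0 := hηmono t0 u ht0 hu.le
        have h2 := (hHC u (ht0.trans hu.le)).2.2
        linarith
      have hconst : HasDerivAt η 0 s := by
        have hev : η =ᶠ[nhds s] (fun _ => (0:ℝ)) := by
          filter_upwards [Ioi_mem_nhds hs] with t ht using hzero t ht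
        exact (hasDerivAt_const s 0).congr_of_eventuallyEq hev
      have huniq := (hη s (ht0.trans hs.le)).unique hconst
      have hsq : (τ s)^2 = 0 := by nlinarith [huniq]
      exact pow_eq_zero_iff (n := 2) (by norm_num) |>.1 hsq
    refine Filter.Tendsto.congr' ?_ (tendsto_const_nhds : Filter.Tendsto (fun _ : ℝ => (0:ℝ)) atTop (nhds 0))
    filter_upwards [eventually_ge_atTop (t0 + 1)] with s hs
    exact (hτ0 s (by linarith)).symm
  · push_neg at h0
    have hηpos : ∀ s, s0 ≤ s → 0 < η s :=
      fun s hs => lt_of_le_of_ne (hHC s hs).2.2 (Ne.symm (h0 s hs))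
    by_cases hδ : ∃ δ, 0 < δ ∧ ∀ s, s0 ≤ s → δ ≤ η s
    · -- Case B : η bounded below by δ > 0 ; derive a contradiction
      exfalso
      obtain ⟨δ, hδ0, hδle⟩ := hδ
      set M := |τ s0| + 2 * H^2 / a + 1 with hM
      clear_value M
      have habs0 : 0 ≤ |τ s0| := abs_nonneg _
      have hq0 : 0 ≤ 2 * H^2 / a := by positivity
      have hM1 : 1 ≤ M := by rw [hM]; linarith
      have hMa : 2 * H^2 ≤ a * M := by
        have h1 : a * (2 * H^2 / a) = 2 * H^2 := by field_simp
        have h2 : a * (2*H^2/a) ≤ a * M :=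
          mul_le_mul_of_nonneg_left (show 2*H^2/a ≤ M by rw [hM]; linarith) ha.le
        linarith
      have hMc : 2 * H^2 ≤ a * M^3 := by
        have h2 : M ≤ M^3 := by
          nlinarith [mul_nonneg (mul_nonneg (show (0:ℝ) ≤ M by linarith)
            (show (0:ℝ) ≤ M - 1 by linarith)) (show (0:ℝ) ≤ M + 1 by linarith)]
        nlinarith [mul_le_mul_of_nonneg_left h2 ha.le]
      have hbar : ∀ s', s0 ≤ s' → M ≤ -τ s' → η s' ≤ a * τ s' * α s' := by
        intro s' hs' hMτ
        obtain ⟨hc, hα', hη'⟩ := hHC s' hs'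
        have hηp := hηpos s' hs'
        have hηH' := hηH s' hs'
        have hτneg : τ s' ≤ -M := by linarith
        have hγτ : 0 ≤ τ s' * γ := by
          nlinarith [mul_nonneg (neg_nonneg.2 (show τ s' ≤ 0 by linarith)) (neg_nonneg.2 hγle)]
        have hcube : M^3 ≤ -(τ s')^3 := by
          have := pow_le_pow_left₀ (by linarith : (0:ℝ) ≤ M) (by linarith : M ≤ -τ s') 3
          nlinarith [this]
        have hkey : 2 * η s' * η s' ≤ 2 * η s' * (a * τ s' * α s') := by
          have h2 : 2 * η s' * (a * τ s' * α s') = a * (τ s' * γ - τ s'^3) := by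
            linear_combination (a * τ s') * hc
          rw [h2]
          nlinarith [mul_le_mul_of_nonneg_left
            (show M^3 ≤ τ s' * γ - τ s'^3 by nlinarith [hγτ, hcube]) ha.le]
        exact le_of_mul_le_mul_left hkey (by linarith)
      have hlow : ∀ s, s0 ≤ s → -M ≤ τ s := by
        intro s hs
        have := cross_le (f := fun t => -τ t) (g := fun t => -(a * τ t * α t - η t)) (v := M) hs
          (fun s' hs' => (hτ s' hs'.1).neg)
          (fun s' hs' hv => by have := hbar s' hs'.1 (by linarith); linarith)
          (by have := neg_le_abs (τ s0); rw [hM]; linarith)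
        linarith
      have hup : ∀ s, s0 ≤ s → τ s ≤ |τ s0| := by
        intro s hs
        exact cross_le (f := τ) (g := fun t => a * τ t * α t - η t) (v := |τ s0|) hs
          (fun s' hs' => hτ s' hs'.1)
          (fun s' hs' hv => by
            obtain ⟨hc, hα', hη'⟩ := hHC s' hs'.1
            have hτpos : 0 ≤ τ s' := le_trans habs0 hv
            nlinarith [mul_nonneg (mul_nonneg ha.le hτpos) (neg_nonneg.2 hα')])
          (le_abs_self _)
      have hτB : ∀ s, s0 ≤ s → |τ s| ≤ M := by
        intro s hs
        refine abs_le.2 ⟨hlow s hs, ?_⟩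
        have := hup s hs
        rw [hM]; linarith
      set A := (M^2 + 1) / (2 * δ) with hA
      clear_value A
      have hA0 : 0 < A := by rw [hA]; exact div_pos (by nlinarith [sq_nonneg M]) (by linarith)
      have hαA : ∀ s, s0 ≤ s → -A ≤ α s := by
        intro s hs
        obtain ⟨hc, hα', hη'⟩ := hHC s hs
        have hδ' := hδle s hs
        obtain ⟨hl, hr⟩ := abs_le.1 (hτB s hs)
        have hsq : (τ s)^2 ≤ M^2 := by nlinarith
        have h1 : -(M^2 + 1) ≤ 2 * α s * η s := by nlinarith
        have h2 : 2 * α s * η s ≤ 2 * α s * δ := by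
          nlinarith [mul_nonneg (neg_nonneg.2 hα') (show (0:ℝ) ≤ η s - δ by linarith)]
        have h3 : -(M^2 + 1) ≤ α s * (2 * δ) := by linarith
        calc -A = -(M^2 + 1) / (2 * δ) := by rw [hA]; ring
        _ ≤ α s := by rw [div_le_iff₀ (by positivity : (0:ℝ) < 2 * δ)]; linarith
      set c0 := δ / (2 * a * A + 2) with hc0
      clear_value c0
      have hden : (0:ℝ) < 2 * a * A + 2 := by nlinarith [mul_pos ha hA0]
      have hc0pos : 0 < c0 := by rw [hc0]; exact div_pos hδ0 hden
      have hdec : ∀ s, s0 ≤ s → |τ s| ≤ c0 → a * τ s * α s - η s ≤ -(δ/2) := by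
        intro s hs habs
        obtain ⟨hc, hα', hη'⟩ := hHC s hs
        have hδ' := hδle s hs
        have hαA' := hαA s hs
        obtain ⟨hl, hr⟩ := abs_le.1 habs
        have h1 : τ s * α s ≤ c0 * A := by
          nlinarith [mul_nonneg (show (0:ℝ) ≤ τ s + c0 by linarith) (show (0:ℝ) ≤ -α s by linarith),
            mul_le_mul_of_nonneg_left (show -α s ≤ A by linarith) hc0pos.le]
        have h2 : a * (c0 * A) ≤ δ / 2 := by
          have he : a * (c0 * A) = (a * A * δ) / (2 * a * A + 2) := by rw [hc0]; ring
          rw [he, div_le_iff₀ hden]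
          nlinarith [mul_nonneg (mul_nonneg ha.le hA0.le) hδ0.le]
        have h3 : a * (τ s * α s) ≤ δ / 2 :=
          le_trans (mul_le_mul_of_nonneg_left h1 ha.le) h2
        nlinarith [h3]
      obtain ⟨S, hSs0, hS⟩ := claim1 c0 hc0pos
      have hs1 : ∃ s1, S ≤ s1 ∧ τ s1 ≤ -c0 := by
        by_contra h
        push_neg at h
        set y := S + 2 * (M + c0 + 1) / δ with hy
        clear_value y
        have hyS : S ≤ y := by
          have : 0 ≤ 2 * (M + c0 + 1) / δ := by positivity
          linarith
        have hrate := rate_le (k := -(δ/2)) hyS (fun s hs => hτ s (hSs0.trans hs.1))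
          (fun s hs => hdec s (hSs0.trans hs.1) (abs_le.2 ⟨by linarith [h s hs.1], (hS s hs.1).le⟩))
        have hcanc : (δ/2) * (2 * (M + c0 + 1) / δ) = M + c0 + 1 := by
          field_simp
        have hτS := hS S le_rfl
        have hlowy := hlow y (hSs0.trans hyS)
        have hd : y - S = 2 * (M + c0 + 1) / δ := by rw [hy]; ring
        rw [hd] at hrate
        nlinarith [hrate, hcanc]
      obtain ⟨s1, hs1S, hτs1⟩ := hs1
      have htrap : ∀ s, s1 ≤ s → τ s ≤ -c0 := by
        intro s hs
        exact cross_le (f := τ) (g := fun t => a * τ t * α t - η t) hs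
          (fun s' hs' => hτ s' (hSs0.trans (hs1S.trans hs'.1)))
          (fun s' hs' hv => by
            have h1 := hS s' (hs1S.trans hs'.1)
            have := hdec s' (hSs0.trans (hs1S.trans hs'.1)) (abs_le.2 ⟨by linarith, h1.le⟩)
            linarith)
          hτs1
      set y2 := s1 + (H + 1) / (a * c0^2) with hy2
      clear_value y2
      have hy2s : s1 ≤ y2 := by
        have : 0 ≤ (H + 1) / (a * c0^2) := by positivity
        linarith
      have hrate2 := rate_le (k := -(a * c0^2)) hy2s
        (fun s hs => hη s (hSs0.trans (hs1S.trans hs.1)))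
        (fun s hs => by
          have h1 := htrap s hs.1
          nlinarith [mul_le_mul_of_nonneg_left (show c0^2 ≤ τ s^2 by nlinarith [hc0pos]) ha.le])
      have hcanc2 : a * c0^2 * ((H + 1) / (a * c0^2)) = H + 1 :=
        mul_div_cancel₀ _ (by positivity)
      have h0y2 := (hHC y2 (hSs0.trans (hs1S.trans hy2s))).2.2
      have hηs1 := hηH s1 (hSs0.trans hs1S)
      have hd2 : y2 - s1 = (H + 1) / (a * c0^2) := by rw [hy2]; ring
      rw [hd2] at hrate2
      nlinarith [hrate2, hcanc2]
    · -- Case A : inf η = 0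
      push_neg at hδ
      rw [Metric.tendsto_atTop]
      intro ε hε
      obtain ⟨S1, hS1s0, hS1⟩ := claim1 (ε/2) (by positivity)
      set δ0 := Real.sqrt (a * (ε/2)^3 / 2) with hδ0def
      have hδ0pos : 0 < δ0 := Real.sqrt_pos.2 (by positivity)
      have hδ0sq : δ0^2 = a * (ε/2)^3 / 2 := Real.sq_sqrt (by positivity)
      obtain ⟨s2, hs2s0, hs2⟩ := hδ δ0 hδ0pos
      obtain ⟨S2, hs2S2, hS1S2⟩ : ∃ S2, s2 ≤ S2 ∧ S1 ≤ S2 :=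
        ⟨max s2 S1, le_max_left _ _, le_max_right _ _⟩
      have hS2s0 : s0 ≤ S2 := le_trans hS1s0 hS1S2
      have hηS2 : ∀ s, S2 ≤ s → η s < δ0 := by
        intro s hs
        have : η s ≤ η s2 := hηmono s2 s hs2s0 (le_trans hs2S2 hs)
        linarith
      have hτS2 : ∀ s, S2 ≤ s → τ s < ε/2 := fun s hs => hS1 s (le_trans hS1S2 hs)
      have hbar2 : ∀ s', S2 ≤ s' → ε/2 ≤ -τ s' → η s' ≤ a * τ s' * α s' := by
        intro s' hs' hv
        have hs'0 : s0 ≤ s' := hS2s0.trans hs'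
        obtain ⟨hc, hα', hη'⟩ := hHC s' hs'0
        have hηp := hηpos s' hs'0
        have hηs := hηS2 s' hs'
        have hτneg : τ s' ≤ -(ε/2) := by linarith
        have hγτ : 0 ≤ τ s' * γ := by
          nlinarith [mul_nonneg (neg_nonneg.2 (show τ s' ≤ 0 by linarith))
            (neg_nonneg.2 hγle)]
        have hcube : (ε/2)^3 ≤ -(τ s')^3 := by
          have := pow_le_pow_left₀ (by positivity : (0:ℝ) ≤ ε/2) (by linarith : ε/2 ≤ -τ s') 3
          nlinarith [this]
        have hkey : 2 * η s' * η s' ≤ 2 * η s' * (a * τ s' * α s') := by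
          have h2 : 2 * η s' * (a * τ s' * α s') = a * (τ s' * γ - τ s'^3) := by
            linear_combination (a * τ s') * hc
          rw [h2]
          nlinarith [mul_le_mul_of_nonneg_left
            (show (ε/2)^3 ≤ τ s' * γ - τ s'^3 by nlinarith [hγτ, hcube]) ha.le, hδ0sq, hηs, hη']
        exact le_of_mul_le_mul_left hkey (by linarith)
      have hs3 : ∃ s3, S2 ≤ s3 ∧ -(ε/2) ≤ τ s3 := by
        by_contra h
        push_neg at h
        set y := S2 + (H + 1) / (a * (ε/2)^2) with hy
        clear_value y
        have hyS : S2 ≤ y := by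
          have : 0 ≤ (H + 1) / (a * (ε/2)^2) := by positivity
          linarith
        have hrate := rate_le (k := -(a * (ε/2)^2)) hyS (fun s hs => hη s (hS2s0.trans hs.1))
          (fun s hs => by
            have h1 := h s hs.1
            nlinarith [mul_le_mul_of_nonneg_left (show (ε/2)^2 ≤ τ s^2 by nlinarith) ha.le])
        have hcanc : a * (ε/2)^2 * ((H + 1) / (a * (ε/2)^2)) = H + 1 :=
          mul_div_cancel₀ _ (by positivity)
        have h0y := (hHC y (hS2s0.trans hyS)).2.2
        have hηS2' := hηH S2 hS2s0
        have hd : y - S2 = (H + 1) / (a * (ε/2)^2) := by rw [hy]; ring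
        rw [hd] at hrate
        nlinarith [hrate, hcanc]
      obtain ⟨s3, hs3S2, hτs3⟩ := hs3
      refine ⟨s3, fun s hs => ?_⟩
      have hup' : τ s < ε/2 := hτS2 s (hs3S2.trans hs)
      have hlow' : -τ s ≤ ε/2 := by
        have := cross_le (f := fun t => -τ t) (g := fun t => -(a * τ t * α t - η t))
          (v := ε/2) hs
          (fun s' hs' => (hτ s' (hS2s0.trans (hs3S2.trans hs'.1))).neg)
          (fun s' hs' hv => by
            have := hbar2 s' (hs3S2.trans hs'.1) (by linarith); linarith)
          (by linarith)
        linarith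
      rw [Real.dist_eq, sub_zero]
      exact abs_lt.2 ⟨by linarith, by linarith⟩

set_option maxHeartbeats 2000000 in
lemma part1 (a γ : ℝ) (ha : 0 < a)
    (wlo whi : EReal) (hlt : wlo < whi) (α τ η : ℝ → ℝ)
    (hα : ∀ s : ℝ, wlo < (s : EReal) → (s : EReal) < whi → HasDerivAt α (τ s) s)
    (hτ : ∀ s : ℝ, wlo < (s : EReal) → (s : EReal) < whi →
      HasDerivAt τ (a * τ s * α s - η s) s)
    (hη : ∀ s : ℝ, wlo < (s : EReal) → (s : EReal) < whi →
      HasDerivAt η (-(a * (τ s) ^ 2)) s)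
    (hHC : ∀ s : ℝ, wlo < (s : EReal) → (s : EReal) < whi →
      2 * α s * η s + (τ s) ^ 2 = γ ∧ α s ≤ 0 ∧ 0 ≤ η s)
    (hmax : ∀ (wlo' whi' : EReal) (α' τ' η' : ℝ → ℝ),
      wlo' ≤ wlo → whi ≤ whi' →
      (∀ s : ℝ, wlo' < (s : EReal) → (s : EReal) < whi' →
        HasDerivAt α' (τ' s) s ∧
        HasDerivAt τ' (a * τ' s * α' s - η' s) s ∧
        HasDerivAt η' (-(a * (τ' s) ^ 2)) s) →
      (∀ s : ℝ, wlo < (s : EReal) → (s : EReal) < whi →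
        α' s = α s ∧ τ' s = τ s ∧ η' s = η s) →
      wlo' = wlo ∧ whi' = whi) :
    whi = ⊤ := by
  by_contra hne
  have hbot : whi ≠ ⊥ := by
    intro h
    rw [h] at hlt
    exact absurd hlt (by simp)
  obtain ⟨w, hwq⟩ : ∃ w : ℝ, whi = (w : EReal) := by
    lift whi to ℝ using ⟨hne, hbot⟩ with w
    exact ⟨w, rfl⟩
  obtain ⟨s0, hs0a, hs0b⟩ := EReal.lt_iff_exists_real_btwn.1 (hwq ▸ hlt)
  have hs0w : s0 < w := by exact_mod_cast hs0b
  have hdom : ∀ s : ℝ, s0 ≤ s → s < w → wlo < (s : EReal) ∧ (s : EReal) < whi := by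
    intro s h1 h2
    exact ⟨lt_of_lt_of_le hs0a (EReal.coe_le_coe_iff.2 h1),
      by rw [hwq]; exact_mod_cast h2⟩
  -- abbreviations for derivatives on [s0, w)
  have hαd : ∀ s ∈ Ico s0 w, HasDerivAt α (τ s) s :=
    fun s hs => hα s (hdom s hs.1 hs.2).1 (hdom s hs.1 hs.2).2
  have hτd : ∀ s ∈ Ico s0 w, HasDerivAt τ (a * τ s * α s - η s) s :=
    fun s hs => hτ s (hdom s hs.1 hs.2).1 (hdom s hs.1 hs.2).2
  have hηd : ∀ s ∈ Ico s0 w, HasDerivAt η (-(a * (τ s) ^ 2)) s :=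
    fun s hs => hη s (hdom s hs.1 hs.2).1 (hdom s hs.1 hs.2).2
  have hHC' : ∀ s ∈ Ico s0 w, 2 * α s * η s + (τ s) ^ 2 = γ ∧ α s ≤ 0 ∧ 0 ≤ η s :=
    fun s hs => hHC s (hdom s hs.1 hs.2).1 (hdom s hs.1 hs.2).2
  have hs0mem : s0 ∈ Ico s0 w := ⟨le_rfl, hs0w⟩
  -- η is bounded
  have hηanti : AntitoneOn η (Ico s0 w) := by
    apply antitoneOn_of_deriv_nonpos (convex_Ico s0 w)
    · exact fun s hs => (hηd s hs).continuousAt.continuousWithinAt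
    · intro s hs
      rw [interior_Ico] at hs
      exact (hηd s (Ioo_subset_Ico_self hs)).differentiableAt.differentiableWithinAt
    · intro s hs
      rw [interior_Ico] at hs
      rw [(hηd s (Ioo_subset_Ico_self hs)).deriv]
      nlinarith [sq_nonneg (τ s)]
  set H := η s0 with hHdef
  have hH0 : 0 ≤ H := (hHC' s0 hs0mem).2.2
  have hηH : ∀ s ∈ Ico s0 w, η s ≤ H := fun s hs => hηanti hs0mem hs hs.1
  -- τ is bounded via a Gronwall-type barrier
  have hΦanti : AntitoneOn (fun s => (1 + τ s ^ 2) * Real.exp (-(H * s))) (Ico s0 w) := by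
    have hΦd : ∀ s ∈ Ico s0 w, HasDerivAt (fun s => (1 + τ s ^ 2) * Real.exp (-(H * s)))
        ((2 * τ s * (a * τ s * α s - η s)) * Real.exp (-(H * s)) +
          (1 + τ s ^ 2) * (Real.exp (-(H * s)) * (-H))) s := by
      intro s hs
      have h1 : HasDerivAt (fun t => 1 + τ t ^ 2) (2 * τ s * (a * τ s * α s - η s)) s := by
        have := ((hτd s hs).pow 2).const_add 1
        refine this.congr_deriv ?_
        push_cast
        ring
      have h2 : HasDerivAt (fun t => Real.exp (-(H * t))) (Real.exp (-(H * s)) * (-H)) s := by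
        have h3 : HasDerivAt (fun t : ℝ => -(H * t)) (-H) s := by
          have := ((hasDerivAt_id s).const_mul H).neg
          simp only [mul_one] at this
          exact this
        simpa using h3.exp
      exact h1.mul h2
    apply antitoneOn_of_deriv_nonpos (convex_Ico s0 w)
    · exact fun s hs => (hΦd s hs).continuousAt.continuousWithinAt
    · intro s hs
      rw [interior_Ico] at hs
      exact (hΦd s (Ioo_subset_Ico_self hs)).differentiableAt.differentiableWithinAt
    · intro s hs
      rw [interior_Ico] at hs
      have hs' := Ioo_subset_Ico_self hs
      rw [(hΦd s hs').deriv]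
      obtain ⟨hc, hαs, hηs⟩ := hHC' s hs'
      have hηHs := hηH s hs'
      have hbr : 2 * τ s * (a * τ s * α s - η s) - H * (1 + τ s ^ 2) ≤ 0 := by
        nlinarith [mul_nonneg (mul_nonneg ha.le (sq_nonneg (τ s))) (neg_nonneg.2 hαs),
          mul_nonneg hηs (sq_nonneg (1 + τ s)),
          mul_le_mul_of_nonneg_left hηHs (by positivity : (0:ℝ) ≤ 1 + τ s ^ 2)]
      nlinarith [mul_nonneg (Real.exp_pos (-(H * s))).le (neg_nonneg.2 hbr)]
  set C := (1 + τ s0 ^ 2) * Real.exp (H * (w - s0)) with hCdef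
  have hCpos : 0 < C := by positivity
  have hτsq : ∀ s ∈ Ico s0 w, τ s ^ 2 ≤ C := by
    intro s hs
    have h := hΦanti hs0mem hs hs.1
    have h2 := mul_le_mul_of_nonneg_right h (Real.exp_pos (H * s)).le
    rw [mul_assoc, mul_assoc, ← Real.exp_add, ← Real.exp_add,
      show -(H * s) + H * s = 0 by ring, Real.exp_zero, mul_one,
      show -(H * s0) + H * s = H * (s - s0) by ring] at h2
    have e2 : Real.exp (H * (s - s0)) ≤ Real.exp (H * (w - s0)) :=
      Real.exp_le_exp.2 (mul_le_mul_of_nonneg_left (by linarith [hs.2]) hH0)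
    have e3 : (1 + τ s0 ^ 2) * Real.exp (H * (s - s0)) ≤ C := by
      rw [hCdef]
      exact mul_le_mul_of_nonneg_left e2 (by positivity)
    nlinarith [h2, e3]
  set T := Real.sqrt C with hTdef
  have hT0 : 0 ≤ T := Real.sqrt_nonneg _
  have hτT : ∀ s ∈ Ico s0 w, |τ s| ≤ T := by
    intro s hs
    rw [hTdef, ← Real.sqrt_sq_eq_abs]
    exact Real.sqrt_le_sqrt (hτsq s hs)
  -- α is bounded
  set A := |α s0| + T * (w - s0) with hAdef
  have hA0 : 0 ≤ A := by
    have := abs_nonneg (α s0)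
    have : 0 ≤ T * (w - s0) := mul_nonneg hT0 (by linarith)
    rw [hAdef]
    positivity
  have hαA : ∀ s ∈ Ico s0 w, |α s| ≤ A := by
    intro s hs
    have hsub : Icc s0 s ⊆ Ico s0 w := fun t ht => ⟨ht.1, lt_of_le_of_lt ht.2 hs.2⟩
    have hup := rate_le (k := T) hs.1 (fun t ht => hαd t (hsub ht))
      (fun t ht => le_trans (le_abs_self _) (hτT t (hsub ht)))
    have hlo := rate_le (f := fun t => -α t) (g := fun t => -τ t) (k := T) hs.1
      (fun t ht => (hαd t (hsub ht)).neg)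
      (fun t ht => le_trans (neg_le_abs _) (hτT t (hsub ht)))
    have hTs : T * (s - s0) ≤ T * (w - s0) :=
      mul_le_mul_of_nonneg_left (by linarith [hs.2]) hT0
    rw [hAdef]
    have h1 := le_abs_self (α s0)
    have h2 := neg_le_abs (α s0)
    refine abs_le.2 ⟨by linarith, by linarith⟩
  -- Lipschitz bound
  set K := T + (a * T * A + H) + a * T ^ 2 with hKdef
  have hnn : ∀ r b : ℝ, |r| ≤ b → ‖r‖₊ ≤ Real.toNNReal b := by
    intro r b h
    rw [← Real.nnnorm_abs, ← Real.toNNReal_eq_nnnorm_of_nonneg (abs_nonneg r)]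
    exact Real.toNNReal_mono h
  have hbα : ∀ s ∈ Ico s0 w, |τ s| ≤ K := by
    intro s hs
    have := hτT s hs
    have h1 : 0 ≤ a * T * A := by positivity
    have h2 : 0 ≤ a * T ^ 2 := by positivity
    rw [hKdef]; linarith
  have hbτ : ∀ s ∈ Ico s0 w, |a * τ s * α s - η s| ≤ K := by
    intro s hs
    have h1 := hτT s hs
    have h2 := hαA s hs
    have h3 := hηH s hs
    have h4 := (hHC' s hs).2.2
    have h5 : |a * τ s * α s| ≤ a * T * A := by
      rw [abs_mul, abs_mul, abs_of_pos ha]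
      have h := mul_le_mul h1 h2 (abs_nonneg (α s)) hT0
      nlinarith [mul_le_mul_of_nonneg_left h ha.le]
    have h6 := abs_le.1 h5
    rw [hKdef]
    have h7 : 0 ≤ a * T ^ 2 := by positivity
    refine abs_le.2 ⟨by linarith, by linarith⟩
  have hbη : ∀ s ∈ Ico s0 w, |(-(a * (τ s) ^ 2))| ≤ K := by
    intro s hs
    have h1 := hτsq s hs
    have h2 : τ s ^ 2 ≤ T ^ 2 := by
      have := hτT s hs
      nlinarith [abs_nonneg (τ s), sq_abs (τ s)]
    have h3 : 0 ≤ a * T * A := by positivity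
    rw [abs_neg, abs_of_nonneg (by positivity), hKdef]
    nlinarith [hH0, hT0]
  have hlipα : LipschitzOnWith (Real.toNNReal K) α (Ico s0 w) :=
    Convex.lipschitzOnWith_of_nnnorm_hasDerivWithin_le (convex_Ico s0 w)
      (fun s hs => (hαd s hs).hasDerivWithinAt)
      (fun s hs => hnn _ _ (hbα s hs))
  have hlipτ : LipschitzOnWith (Real.toNNReal K) τ (Ico s0 w) :=
    Convex.lipschitzOnWith_of_nnnorm_hasDerivWithin_le (convex_Ico s0 w)
      (fun s hs => (hτd s hs).hasDerivWithinAt)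
      (fun s hs => hnn _ _ (hbτ s hs))
  have hlipη : LipschitzOnWith (Real.toNNReal K) η (Ico s0 w) :=
    Convex.lipschitzOnWith_of_nnnorm_hasDerivWithin_le (convex_Ico s0 w)
      (fun s hs => (hηd s hs).hasDerivWithinAt)
      (fun s hs => hnn _ _ (hbη s hs))
  obtain ⟨gα, hgαl, hgαe⟩ := hlipα.extend_real
  obtain ⟨gτ, hgτl, hgτe⟩ := hlipτ.extend_real
  obtain ⟨gη, hgηl, hgηe⟩ := hlipη.extend_real
  have hmemIoo : Ioo s0 w ∈ nhdsWithin w (Iio w) := Ioo_mem_nhdsLT hs0w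
  have hlim : ∀ (f g : ℝ → ℝ), LipschitzWith (Real.toNNReal K) g → EqOn f g (Ico s0 w) →
      Tendsto f (nhdsWithin w (Iio w)) (nhds (g w)) := by
    intro f g hgl hfe
    have h1 : Tendsto g (nhdsWithin w (Iio w)) (nhds (g w)) :=
      (hgl.continuous.tendsto w).mono_left nhdsWithin_le_nhds
    refine h1.congr' ?_
    filter_upwards [hmemIoo] with t ht using (hfe ⟨ht.1.le, ht.2⟩).symm
  have hαlim : Tendsto α (nhdsWithin w (Iio w)) (nhds (gα w)) := hlim α gα hgαl hgαe
  have hτlim : Tendsto τ (nhdsWithin w (Iio w)) (nhds (gτ w)) := hlim τ gτ hgτl hgτe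
  have hηlim : Tendsto η (nhdsWithin w (Iio w)) (nhds (gη w)) := hlim η gη hgηl hgηe
  -- local solution through the limit point
  set v : ℝ × ℝ × ℝ → ℝ × ℝ × ℝ :=
    fun p => (p.2.1, a * p.2.1 * p.1 - p.2.2, -(a * p.2.1 ^ 2)) with hvdef
  have hv : ContDiff ℝ 1 v := by
    have h21 : ContDiff ℝ 1 (fun p : ℝ × ℝ × ℝ => p.2.1) := contDiff_fst.comp contDiff_snd
    have h22 : ContDiff ℝ 1 (fun p : ℝ × ℝ × ℝ => p.2.2) := contDiff_snd.comp contDiff_snd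
    exact h21.prodMk (((((contDiff_const.mul h21).mul contDiff_fst)).sub h22).prodMk
      (((contDiff_const.mul (h21.pow 2))).neg))
  obtain ⟨F, hF0, ε, hε, hFd⟩ :=
    ContDiffAt.exists_forall_mem_closedBall_exists_eq_forall_mem_Ioo_hasDerivAt₀ (E := ℝ × ℝ × ℝ)
      (x₀ := ((gα w, gτ w, gη w) : ℝ × ℝ × ℝ)) hv.contDiffAt w
  have hF1 : ∀ t ∈ Ioo (w - ε) (w + ε), HasDerivAt (fun s => (F s).1) ((F t).2.1) t := by
    intro t ht
    have h := (ContinuousLinearMap.fst ℝ ℝ (ℝ × ℝ)).hasFDerivAt.comp_hasDerivAt t (hFd t ht)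
    simp [hvdef] at h
    exact h
  have hF2 : ∀ t ∈ Ioo (w - ε) (w + ε),
      HasDerivAt (fun s => (F s).2.1) (a * (F t).2.1 * (F t).1 - (F t).2.2) t := by
    intro t ht
    have h := ((ContinuousLinearMap.fst ℝ ℝ ℝ).comp
      (ContinuousLinearMap.snd ℝ ℝ (ℝ × ℝ))).hasFDerivAt.comp_hasDerivAt t (hFd t ht)
    simp [hvdef] at h
    exact h
  have hF3 : ∀ t ∈ Ioo (w - ε) (w + ε),
      HasDerivAt (fun s => (F s).2.2) (-(a * ((F t).2.1) ^ 2)) t := by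
    intro t ht
    have h := ((ContinuousLinearMap.snd ℝ ℝ ℝ).comp
      (ContinuousLinearMap.snd ℝ ℝ (ℝ × ℝ))).hasFDerivAt.comp_hasDerivAt t (hFd t ht)
    simp [hvdef] at h
    exact h
  obtain ⟨Ag, hAgdef⟩ : ∃ g : ℝ → ℝ, g = fun s => if s < w then α s else (F s).1 := ⟨_, rfl⟩
  obtain ⟨Tg, hTgdef⟩ : ∃ g : ℝ → ℝ, g = fun s => if s < w then τ s else (F s).2.1 := ⟨_, rfl⟩
  obtain ⟨Eg, hEgdef⟩ : ∃ g : ℝ → ℝ, g = fun s => if s < w then η s else (F s).2.2 := ⟨_, rfl⟩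
  have hAlt : ∀ s, s < w → Ag s = α s := by intro s hs; rw [hAgdef]; simp [hs]
  have hAge : ∀ s, w ≤ s → Ag s = (F s).1 := by intro s hs; rw [hAgdef]; simp [not_lt.2 hs]
  have hTlt : ∀ s, s < w → Tg s = τ s := by intro s hs; rw [hTgdef]; simp [hs]
  have hTge : ∀ s, w ≤ s → Tg s = (F s).2.1 := by intro s hs; rw [hTgdef]; simp [not_lt.2 hs]
  have hElt : ∀ s, s < w → Eg s = η s := by intro s hs; rw [hEgdef]; simp [hs]
  have hEge : ∀ s, w ≤ s → Eg s = (F s).2.2 := by intro s hs; rw [hEgdef]; simp [not_lt.2 hs]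
  have hAgw : Ag w = gα w := by rw [hAge w le_rfl, hF0]
  have hTgw : Tg w = gτ w := by rw [hTge w le_rfl, hF0]
  have hEgw : Eg w = gη w := by rw [hEge w le_rfl, hF0]
  have hwIoo : w ∈ Ioo (w - ε) (w + ε) := ⟨by linarith, by linarith⟩
  -- derivatives of the glued functions on (s0, w)
  have hαd' : ∀ t ∈ Ioo s0 w, HasDerivAt Ag (τ t) t := by
    intro t ht
    have hev : Ag =ᶠ[nhds t] α := by
      filter_upwards [Iio_mem_nhds ht.2] with u hu using hAlt u hu
    exact (hαd t ⟨ht.1.le, ht.2⟩).congr_of_eventuallyEq hev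
  have hτd' : ∀ t ∈ Ioo s0 w, HasDerivAt Tg (a * τ t * α t - η t) t := by
    intro t ht
    have hev : Tg =ᶠ[nhds t] τ := by
      filter_upwards [Iio_mem_nhds ht.2] with u hu using hTlt u hu
    exact (hτd t ⟨ht.1.le, ht.2⟩).congr_of_eventuallyEq hev
  have hηd' : ∀ t ∈ Ioo s0 w, HasDerivAt Eg (-(a * (τ t) ^ 2)) t := by
    intro t ht
    have hev : Eg =ᶠ[nhds t] η := by
      filter_upwards [Iio_mem_nhds ht.2] with u hu using hElt u hu
    exact (hηd t ⟨ht.1.le, ht.2⟩).congr_of_eventuallyEq hev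
  -- one-sided derivatives at w (from the left)
  have hlimwithin : ∀ (G f : ℝ → ℝ) (l : ℝ), (∀ s, s < w → G s = f s) →
      Tendsto f (nhdsWithin w (Iio w)) (nhds l) →
      Tendsto G (nhdsWithin w (Ioo s0 w)) (nhds l) := by
    intro G f l hGf hf
    refine Tendsto.congr' ?_ (hf.mono_left (nhdsWithin_mono w Ioo_subset_Iio_self))
    filter_upwards [self_mem_nhdsWithin] with t ht using (hGf t ht.2).symm
  have hlA : HasDerivWithinAt Ag (gτ w) (Iic w) w := by
    apply hasDerivWithinAt_Iic_of_tendsto_deriv (s := Ioo s0 w)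
    · exact fun t ht => (hαd' t ht).differentiableAt.differentiableWithinAt
    · have ht := hlimwithin Ag α (gα w) hAlt hαlim
      rw [← hAgw] at ht
      exact ht
    · exact hmemIoo
    · refine Tendsto.congr' ?_ hτlim
      filter_upwards [hmemIoo] with t ht using ((hαd' t ht).deriv).symm
  have hlT : HasDerivWithinAt Tg (a * gτ w * gα w - gη w) (Iic w) w := by
    apply hasDerivWithinAt_Iic_of_tendsto_deriv (s := Ioo s0 w)
    · exact fun t ht => (hτd' t ht).differentiableAt.differentiableWithinAt
    · have ht := hlimwithin Tg τ (gτ w) hTlt hτlim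
      rw [← hTgw] at ht
      exact ht
    · exact hmemIoo
    · refine Tendsto.congr' ?_ (((tendsto_const_nhds.mul hτlim).mul hαlim).sub hηlim)
      filter_upwards [hmemIoo] with t ht using ((hτd' t ht).deriv).symm
  have hlE : HasDerivWithinAt Eg (-(a * (gτ w) ^ 2)) (Iic w) w := by
    apply hasDerivWithinAt_Iic_of_tendsto_deriv (s := Ioo s0 w)
    · exact fun t ht => (hηd' t ht).differentiableAt.differentiableWithinAt
    · have ht := hlimwithin Eg η (gη w) hElt hηlim
      rw [← hEgw] at ht
      exact ht
    · exact hmemIoo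
    · refine Tendsto.congr' ?_ ((tendsto_const_nhds.mul (hτlim.pow 2)).neg)
      filter_upwards [hmemIoo] with t ht using ((hηd' t ht).deriv).symm
  -- one-sided derivatives at w (from the right)
  have hrA : HasDerivWithinAt Ag (gτ w) (Ici w) w := by
    have h := ((hF1 w hwIoo).hasDerivWithinAt (s := Ici w)).congr
      (fun t ht => hAge t ht) (hAge w le_rfl)
    simpa [hF0] using h
  have hrT : HasDerivWithinAt Tg (a * gτ w * gα w - gη w) (Ici w) w := by
    have h := ((hF2 w hwIoo).hasDerivWithinAt (s := Ici w)).congr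
      (fun t ht => hTge t ht) (hTge w le_rfl)
    simpa [hF0] using h
  have hrE : HasDerivWithinAt Eg (-(a * (gτ w) ^ 2)) (Ici w) w := by
    have h := ((hF3 w hwIoo).hasDerivWithinAt (s := Ici w)).congr
      (fun t ht => hEge t ht) (hEge w le_rfl)
    simpa [hF0] using h
  have hAw : HasDerivAt Ag (gτ w) w := by
    have h := hlA.union hrA
    rw [Iic_union_Ici] at h
    exact hasDerivWithinAt_univ.1 h
  have hTw : HasDerivAt Tg (a * gτ w * gα w - gη w) w := by
    have h := hlT.union hrT
    rw [Iic_union_Ici] at h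
    exact hasDerivWithinAt_univ.1 h
  have hEw : HasDerivAt Eg (-(a * (gτ w) ^ 2)) w := by
    have h := hlE.union hrE
    rw [Iic_union_Ici] at h
    exact hasDerivWithinAt_univ.1 h
  -- the glued triple solves the system on (wlo, w + ε)
  have hder : ∀ s : ℝ, wlo < (s : EReal) → (s : EReal) < ((w + ε : ℝ) : EReal) →
      HasDerivAt Ag (Tg s) s ∧ HasDerivAt Tg (a * Tg s * Ag s - Eg s) s ∧
        HasDerivAt Eg (-(a * (Tg s) ^ 2)) s := by
    intro s hs1 hs2
    have hswε : s < w + ε := by exact_mod_cast hs2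
    rcases lt_trichotomy s w with hsw | hsw | hsw
    · have hevA : Ag =ᶠ[nhds s] α := by
        filter_upwards [Iio_mem_nhds hsw] with u hu using hAlt u hu
      have hevT : Tg =ᶠ[nhds s] τ := by
        filter_upwards [Iio_mem_nhds hsw] with u hu using hTlt u hu
      have hevE : Eg =ᶠ[nhds s] η := by
        filter_upwards [Iio_mem_nhds hsw] with u hu using hElt u hu
      have hsE : (s : EReal) < whi := by rw [hwq]; exact_mod_cast hsw
      refine ⟨?_, ?_, ?_⟩
      · rw [hTlt s hsw]
        exact (hα s hs1 hsE).congr_of_eventuallyEq hevA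
      · rw [hTlt s hsw, hAlt s hsw, hElt s hsw]
        exact (hτ s hs1 hsE).congr_of_eventuallyEq hevT
      · rw [hTlt s hsw]
        exact (hη s hs1 hsE).congr_of_eventuallyEq hevE
    · subst hsw
      refine ⟨?_, ?_, ?_⟩
      · rw [hTgw]; exact hAw
      · rw [hTgw, hAgw, hEgw]; exact hTw
      · rw [hTgw]; exact hEw
    · have hsIoo : s ∈ Ioo (w - ε) (w + ε) := ⟨by linarith, hswε⟩
      have hevA : Ag =ᶠ[nhds s] (fun t => (F t).1) := by
        filter_upwards [Ioi_mem_nhds hsw] with u hu using hAge u hu.le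
      have hevT : Tg =ᶠ[nhds s] (fun t => (F t).2.1) := by
        filter_upwards [Ioi_mem_nhds hsw] with u hu using hTge u hu.le
      have hevE : Eg =ᶠ[nhds s] (fun t => (F t).2.2) := by
        filter_upwards [Ioi_mem_nhds hsw] with u hu using hEge u hu.le
      refine ⟨?_, ?_, ?_⟩
      · rw [hTge s hsw.le]
        exact (hF1 s hsIoo).congr_of_eventuallyEq hevA
      · rw [hTge s hsw.le, hAge s hsw.le, hEge s hsw.le]
        exact (hF2 s hsIoo).congr_of_eventuallyEq hevT
      · rw [hTge s hsw.le]
        exact (hF3 s hsIoo).congr_of_eventuallyEq hevE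
  have hagree : ∀ s : ℝ, wlo < (s : EReal) → (s : EReal) < whi →
      Ag s = α s ∧ Tg s = τ s ∧ Eg s = η s := by
    intro s hs1 hs2
    have hsw : s < w := by rw [hwq] at hs2; exact_mod_cast hs2
    exact ⟨hAlt s hsw, hTlt s hsw, hElt s hsw⟩
  have hres := hmax wlo ((w + ε : ℝ) : EReal) Ag Tg Eg le_rfl
    (by rw [hwq]; exact EReal.coe_le_coe_iff.2 (by linarith)) hder hagree
  have h2 := hres.2
  rw [hwq] at h2
  have h3 := EReal.coe_eq_coe_iff.1 h2
  linarith

/-- For `c = 0`, `a > 0`, a non-trivial solution of `α' = τ`, `τ' = aτα - η`, `η' = -aτ²`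
lying in `H ∪ C` (so `2αη + τ² = γ ∈ {-1,0}`, `α ≤ 0`, `η ≥ 0`) on its maximal interval
`(ω₋, ω₊)` satisfies `ω₊ = +∞` and `τ(s) → 0` as `s → +∞`. -/
theorem stmt_19 (a γ : ℝ) (ha : 0 < a) (hγ : γ = -1 ∨ γ = 0)
    (wlo whi : EReal) (hlt : wlo < whi) (α τ η : ℝ → ℝ)
    (hα : ∀ s : ℝ, wlo < (s : EReal) → (s : EReal) < whi → HasDerivAt α (τ s) s)
    (hτ : ∀ s : ℝ, wlo < (s : EReal) → (s : EReal) < whi →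
      HasDerivAt τ (a * τ s * α s - η s) s)
    (hη : ∀ s : ℝ, wlo < (s : EReal) → (s : EReal) < whi →
      HasDerivAt η (-(a * (τ s) ^ 2)) s)
    (hHC : ∀ s : ℝ, wlo < (s : EReal) → (s : EReal) < whi →
      2 * α s * η s + (τ s) ^ 2 = γ ∧ α s ≤ 0 ∧ 0 ≤ η s)
    (hnt : ¬ ∃ b : ℝ, ∀ s : ℝ, wlo < (s : EReal) → (s : EReal) < whi → τ s = b)
    (hmax : ∀ (wlo' whi' : EReal) (α' τ' η' : ℝ → ℝ),
      wlo' ≤ wlo → whi ≤ whi' →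
      (∀ s : ℝ, wlo' < (s : EReal) → (s : EReal) < whi' →
        HasDerivAt α' (τ' s) s ∧
        HasDerivAt τ' (a * τ' s * α' s - η' s) s ∧
        HasDerivAt η' (-(a * (τ' s) ^ 2)) s) →
      (∀ s : ℝ, wlo < (s : EReal) → (s : EReal) < whi →
        α' s = α s ∧ τ' s = τ s ∧ η' s = η s) →
      wlo' = wlo ∧ whi' = whi) :
    whi = ⊤ ∧ Filter.Tendsto τ Filter.atTop (nhds 0) := by
  have hwhi : whi = ⊤ := part1 a γ ha wlo whi hlt α τ η hα hτ hη hHC hmax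
  refine ⟨hwhi, ?_⟩
  have hlt' : wlo < (⊤ : EReal) := hwhi ▸ hlt
  obtain ⟨s0, hs0a, -⟩ := EReal.lt_iff_exists_real_btwn.1 hlt'
  have hdom : ∀ s : ℝ, s0 ≤ s → wlo < (s : EReal) ∧ (s : EReal) < whi := fun s hs =>
    ⟨lt_of_lt_of_le hs0a (EReal.coe_le_coe_iff.2 hs), by rw [hwhi]; exact EReal.coe_lt_top s⟩
  exact part2 a γ ha hγ s0 α τ η
    (fun s hs => hτ s (hdom s hs).1 (hdom s hs).2)
    (fun s hs => hη s (hdom s hs).1 (hdom s hs).2)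
    (fun s hs => hHC s (hdom s hs).1 (hdom s hs).2)
end
end
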